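/- arXiv:math/0101055 — 7 statements merged into one kernel-verified Lean document; each statement's English description precedes it below -/
import Mathlib

section
/- Let b ≥ 2 be an integer and θ ∈ [0,1). Then θ is normal to base b if and only if its remainder sequence {x_n = fract(b^n θ) : n ≥ 1} is uniformly distributed mod 1. -/
open scoped Classical

open Finset Filter

set_option maxHeartbeats 1000000

namespace Stmt1Aux

/-- value of digit string `e` (first `m` digits) in base `b` -/
def Kc (b : ℕ) (e : ℕ → ℕ) (m : ℕ) : ℕ := ∑ j ∈ Finset.range m, e j * b ^ (m - 1 - j)

lemma Kc_succ (b : ℕ) (e : ℕ → ℕ) (m : ℕ) :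
    Kc b e (m + 1) = b * Kc b e m + e m := by
  unfold Kc
  rw [Finset.sum_range_succ, Finset.mul_sum]
  have h1 : e m * b ^ (m + 1 - 1 - m) = e m := by simp
  have h2 : ∀ j ∈ Finset.range m, e j * b ^ (m + 1 - 1 - j) = b * (e j * b ^ (m - 1 - j)) := by
    intro j hj
    simp only [Finset.mem_range] at hj
    have : m + 1 - 1 - j = (m - 1 - j) + 1 := by omega
    rw [this, pow_succ]
    ring
  rw [Finset.sum_congr rfl h2, h1]

lemma Kc_lt (b : ℕ) (e : ℕ → ℕ) (hb : 1 ≤ b) (he : ∀ j, e j < b) :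
    ∀ m, Kc b e m < b ^ m := by
  intro m
  induction m with
  | zero => simp [Kc]
  | succ m ih =>
    rw [Kc_succ, pow_succ]
    calc b * Kc b e m + e m < b * Kc b e m + b := by have := he m; omega
      _ = b * (Kc b e m + 1) := by ring
      _ ≤ b * b ^ m := by
          exact Nat.mul_le_mul_left b (by omega)
      _ = b ^ m * b := by ring

lemma Kc_growth (b : ℕ) (e : ℕ → ℕ) (hb : 1 ≤ b) (he : ∀ j, e j < b) (i : ℕ) :
    ∀ t, b ^ t * Kc b e i ≤ Kc b e (i + t) ∧ Kc b e (i + t) + 1 ≤ b ^ t * (Kc b e i + 1) := by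
  intro t
  induction t with
  | zero => simp
  | succ t ih =>
    obtain ⟨h1, h2⟩ := ih
    have hrec : Kc b e (i + (t + 1)) = b * Kc b e (i + t) + e (i + t) := by
      rw [show i + (t + 1) = (i + t) + 1 by omega, Kc_succ]
    constructor
    · rw [hrec, pow_succ]
      calc b ^ t * b * Kc b e i = b * (b ^ t * Kc b e i) := by ring
        _ ≤ b * Kc b e (i + t) := Nat.mul_le_mul_left b h1
        _ ≤ b * Kc b e (i + t) + e (i + t) := Nat.le_add_right _ _
    · rw [hrec, pow_succ]
      calc b * Kc b e (i + t) + e (i + t) + 1 ≤ b * Kc b e (i + t) + b := by have := he (i + t); omega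
        _ = b * (Kc b e (i + t) + 1) := by ring
        _ ≤ b * (b ^ t * (Kc b e i + 1)) := Nat.mul_le_mul_left b h2
        _ = b ^ t * b * (Kc b e i + 1) := by ring

lemma floor_digit (b : ℕ) (y : ℝ) :
    ⌊(b : ℝ) * Int.fract y⌋ = ⌊(b : ℝ) * y⌋ - b * ⌊y⌋ := by
  have h : (b : ℝ) * Int.fract y = (b : ℝ) * y - ((b * ⌊y⌋ : ℤ) : ℝ) := by
    rw [Int.fract]; push_cast; ring
  rw [h, Int.floor_sub_intCast]

lemma floor_pow_eq (b : ℕ) (hb : 2 ≤ b) (m : ℕ) (e : ℕ → ℕ) (he : ∀ j, e j < b)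
    (x : ℝ) (hx0 : 0 ≤ x) (hx1 : x < 1)
    (h : ∀ i < m, ⌊(b : ℝ) * Int.fract ((b : ℝ) ^ i * x)⌋ = (e i : ℤ)) :
    ⌊(b : ℝ) ^ m * x⌋ = (Kc b e m : ℤ) := by
  induction m with
  | zero =>
    simp only [pow_zero, one_mul, Kc]
    simp only [Finset.range_zero, Finset.sum_empty, Nat.cast_zero]
    exact Int.floor_eq_zero_iff.mpr ⟨hx0, hx1⟩
  | succ m ih =>
    have ihm := ih (fun i hi => h i (by omega))
    have hdig := h m (by omega)
    have hfd := floor_digit b ((b : ℝ) ^ m * x)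
    rw [hdig, ihm] at hfd
    have hpow : (b : ℝ) * ((b : ℝ) ^ m * x) = (b : ℝ) ^ (m + 1) * x := by
      rw [pow_succ]; ring
    rw [hpow] at hfd
    rw [Kc_succ]
    push_cast
    omega

lemma digit_iff (b : ℕ) (hb : 2 ≤ b) (m : ℕ) (e : ℕ → ℕ) (he : ∀ j, e j < b)
    (x : ℝ) (hx0 : 0 ≤ x) (hx1 : x < 1) :
    (∀ i < m, ⌊(b : ℝ) * Int.fract ((b : ℝ) ^ i * x)⌋ = (e i : ℤ)) ↔
      ((Kc b e m : ℝ) / (b : ℝ) ^ m ≤ x ∧ x < ((Kc b e m : ℝ) + 1) / (b : ℝ) ^ m) := by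
  have hb0 : (0 : ℝ) < (b : ℝ) := by positivity
  have hBm : ∀ j : ℕ, (0 : ℝ) < (b : ℝ) ^ j := fun j => pow_pos hb0 j
  have key : (⌊(b : ℝ) ^ m * x⌋ = (Kc b e m : ℤ)) ↔
      ((Kc b e m : ℝ) / (b : ℝ) ^ m ≤ x ∧ x < ((Kc b e m : ℝ) + 1) / (b : ℝ) ^ m) := by
    rw [Int.floor_eq_iff]
    constructor
    · rintro ⟨h1, h2⟩
      constructor
      · rw [div_le_iff₀ (hBm m)]
        push_cast at h1 ⊢; nlinarith
      · rw [lt_div_iff₀ (hBm m)]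
        push_cast at h2 ⊢; nlinarith
    · rintro ⟨h1, h2⟩
      rw [div_le_iff₀ (hBm m)] at h1
      rw [lt_div_iff₀ (hBm m)] at h2
      constructor
      · push_cast at h1 ⊢; nlinarith
      · push_cast at h2 ⊢; nlinarith
  constructor
  · intro h
    exact key.mp (floor_pow_eq b hb m e he x hx0 hx1 h)
  · intro h
    have hf : ⌊(b : ℝ) ^ m * x⌋ = (Kc b e m : ℤ) := key.mpr h
    -- floors at all levels
    have flo : ∀ i, i ≤ m → ⌊(b : ℝ) ^ i * x⌋ = (Kc b e i : ℤ) := by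
      intro i hi
      have hg := Kc_growth b e (by omega) he i (m - i)
      rw [show i + (m - i) = m by omega] at hg
      obtain ⟨hg1, hg2⟩ := hg
      have hmx1 : ((Kc b e m : ℝ)) ≤ (b : ℝ) ^ m * x := by
        rw [div_le_iff₀ (hBm m)] at h; linarith [h.1]
      have hmx2 : (b : ℝ) ^ m * x < (Kc b e m : ℝ) + 1 := by
        rw [lt_div_iff₀ (hBm m)] at h; linarith [h.2]
      have hsplit : (b : ℝ) ^ m = (b : ℝ) ^ i * (b : ℝ) ^ (m - i) := by
        rw [← pow_add]; congr 1; omega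
      rw [Int.floor_eq_iff]
      have hg1' : ((b : ℝ) ^ (m - i)) * (Kc b e i : ℝ) ≤ (Kc b e m : ℝ) := by
        exact_mod_cast Nat.cast_le.mpr hg1
      have hg2' : (Kc b e m : ℝ) + 1 ≤ ((b : ℝ) ^ (m - i)) * ((Kc b e i : ℝ) + 1) := by
        exact_mod_cast Nat.cast_le.mpr hg2
      constructor
      · push_cast
        nlinarith [hBm (m - i), hBm i]
      · push_cast
        nlinarith [hBm (m - i), hBm i]
    intro i hi
    have h1 := flo i (by omega)
    have h2 := flo (i + 1) (by omega)
    have hfd := floor_digit b ((b : ℝ) ^ i * x)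
    have hpow : (b : ℝ) * ((b : ℝ) ^ i * x) = (b : ℝ) ^ (i + 1) * x := by
      rw [pow_succ]; ring
    rw [hpow, h1, h2] at hfd
    rw [hfd, Kc_succ]
    push_cast
    ring





lemma card_filter_real (P : ℕ → Prop) (s : Finset ℕ) :
    ((s.filter P).card : ℝ) = ∑ n ∈ s, (if P n then (1 : ℝ) else 0) := by
  rw [Finset.card_filter]
  push_cast
  rfl

lemma shift_diff (P : ℕ → Prop) :
    Filter.Tendsto (fun N : ℕ =>
      ((((Finset.Icc 1 N).filter P).card : ℝ) - (((Finset.range N).filter P).card : ℝ)) / N)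
      Filter.atTop (nhds 0) := by
  set f : ℕ → ℝ := fun n => if P n then (1 : ℝ) else 0 with hf
  have hA : ∀ N : ℕ, (((Finset.range N).filter P).card : ℝ) = ∑ n ∈ Finset.range N, f n :=
    fun N => card_filter_real P _
  have hB : ∀ N : ℕ, (((Finset.Icc 1 N).filter P).card : ℝ) = ∑ n ∈ Finset.range N, f (n + 1) := by
    intro N
    rw [card_filter_real, show Finset.Icc 1 N = Finset.Ico 1 (N + 1) from (Finset.Ico_add_one_right_eq_Icc 1 N).symm,
      Finset.sum_Ico_eq_sum_range]
    simp [add_comm, hf]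
  have hdiff : ∀ N : ℕ, (((Finset.Icc 1 N).filter P).card : ℝ) - (((Finset.range N).filter P).card : ℝ)
      = f N - f 0 := by
    intro N
    rw [hA, hB, ← Finset.sum_sub_distrib, Finset.sum_range_sub f]
  have hbound : ∀ N : ℕ, ‖(f N - f 0) / (N : ℝ)‖ ≤ 2 / N := by
    intro N
    rw [norm_div, Real.norm_natCast]
    rcases Nat.eq_zero_or_pos N with h | h
    · simp [h]
    · apply div_le_div_of_nonneg_right ?_ (by positivity)
      have h1 : |f N| ≤ 1 := by simp only [hf]; split <;> simp
      have h2 : |f 0| ≤ 1 := by simp only [hf]; split <;> simp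
      calc ‖f N - f 0‖ ≤ |f N| + |f 0| := abs_sub _ _
        _ ≤ 2 := by linarith
  have h2 : Filter.Tendsto (fun N : ℕ => (2 : ℝ) / N) Filter.atTop (nhds 0) :=
    tendsto_const_div_atTop_nhds_zero_nat 2
  have hs := squeeze_zero_norm hbound h2
  have : (fun N : ℕ => ((((Finset.Icc 1 N).filter P).card : ℝ) - (((Finset.range N).filter P).card : ℝ)) / N)
      = fun N : ℕ => (f N - f 0) / N := by
    funext N; rw [hdiff N]
  rw [this]
  exact hs

lemma range_to_Icc (P : ℕ → Prop) (L : ℝ)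
    (h : Filter.Tendsto (fun N : ℕ => (((Finset.range N).filter P).card : ℝ) / N)
      Filter.atTop (nhds L)) :
    Filter.Tendsto (fun N : ℕ => (((Finset.Icc 1 N).filter P).card : ℝ) / N)
      Filter.atTop (nhds L) := by
  have := h.add (shift_diff P)
  rw [add_zero] at this
  convert this using 2 with N
  ring

lemma Icc_to_range (P : ℕ → Prop) (L : ℝ)
    (h : Filter.Tendsto (fun N : ℕ => (((Finset.Icc 1 N).filter P).card : ℝ) / N)
      Filter.atTop (nhds L)) :
    Filter.Tendsto (fun N : ℕ => (((Finset.range N).filter P).card : ℝ) / N)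
      Filter.atTop (nhds L) := by
  have := h.sub (shift_diff P)
  rw [sub_zero] at this
  convert this using 2 with N
  ring

lemma card_split (u v w : ℝ) (huv : u ≤ v) (hvw : v ≤ w) (s : Finset ℕ) (g : ℕ → ℝ) :
    (s.filter (fun n => g n ∈ Set.Ico u w)).card
      = (s.filter (fun n => g n ∈ Set.Ico u v)).card
        + (s.filter (fun n => g n ∈ Set.Ico v w)).card := by
  rw [← Finset.card_union_of_disjoint, ← Finset.filter_or]
  · apply Finset.card_bij (fun a _ => a) ?_ ?_ ?_
    · intro a ha
      simp only [Finset.mem_filter, Set.mem_Ico] at ha ⊢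
      refine ⟨ha.1, ?_⟩
      obtain ⟨h1, h2⟩ := ha.2
      rcases lt_or_ge (g a) v with h | h
      · exact Or.inl ⟨h1, h⟩
      · exact Or.inr ⟨h, h2⟩
    · intro a b _ _ h; exact h
    · intro a ha
      refine ⟨a, ?_, rfl⟩
      simp only [Finset.mem_filter, Set.mem_Ico] at ha ⊢
      refine ⟨ha.1, ?_⟩
      rcases ha.2 with ⟨h1, h2⟩ | ⟨h1, h2⟩
      · exact ⟨h1, h2.trans_le hvw⟩
      · exact ⟨huv.trans h1, h2⟩
  · rw [Finset.disjoint_left]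
    intro a ha hb
    simp only [Finset.mem_filter, Set.mem_Ico] at ha hb
    linarith [ha.2.2, hb.2.1]



lemma filter_inst {α : Type*} (p : α → Prop) (h1 h2 : DecidablePred p) (s : Finset α) :
    @Finset.filter α p h1 s = @Finset.filter α p h2 s := by
  ext a
  rw [@Finset.mem_filter _ _ h1, @Finset.mem_filter _ _ h2]

section Main

variable (b : ℕ) (θ : ℝ)

/-- bridging: digits of the tail are digits of the fractional remainder -/
lemma point_iff (hb : 2 ≤ b) (m : ℕ) (e : ℕ → ℕ) (he : ∀ j, e j < b) (n : ℕ) :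
    (∀ j < m, ⌊(b : ℝ) * Int.fract ((b : ℝ) ^ (n + j) * θ)⌋ = (e j : ℤ)) ↔
      Int.fract ((b : ℝ) ^ n * θ) ∈
        Set.Ico ((Kc b e m : ℝ) / (b : ℝ) ^ m) (((Kc b e m : ℝ) + 1) / (b : ℝ) ^ m) := by
  set x : ℝ := Int.fract ((b : ℝ) ^ n * θ) with hx
  have hx0 : 0 ≤ x := Int.fract_nonneg _
  have hx1 : x < 1 := Int.fract_lt_one _
  have hfr : ∀ j : ℕ, Int.fract ((b : ℝ) ^ (n + j) * θ) = Int.fract ((b : ℝ) ^ j * x) := by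
    intro j
    have : (b : ℝ) ^ (n + j) * θ = (b : ℝ) ^ j * x + (((b : ℕ) ^ j * ⌊(b : ℝ) ^ n * θ⌋ : ℤ) : ℝ) := by
      rw [hx, Int.fract]
      push_cast
      rw [pow_add]
      ring
    rw [this, Int.fract_add_intCast]
  constructor
  · intro h
    have := (digit_iff b hb m e he x hx0 hx1).mp (fun i hi => by rw [← hfr i]; exact h i hi)
    exact ⟨this.1, this.2⟩
  · intro h
    intro j hj
    rw [hfr j]
    exact (digit_iff b hb m e he x hx0 hx1).mpr ⟨h.1, h.2⟩ j hj

/-- predicate whose frequency we count -/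
lemma base_case (hb : 2 ≤ b)
    (hyp : ∀ m : ℕ, 1 ≤ m → ∀ e : Fin m → ℕ, (∀ i, e i < b) →
      Filter.Tendsto (fun N : ℕ =>
        (((Finset.range N).filter (fun n => ∀ i : Fin m,
          ⌊(b : ℝ) * Int.fract ((b : ℝ) ^ (n + (i : ℕ)) * θ)⌋ = (e i : ℤ))).card : ℝ) / N)
        Filter.atTop (nhds (((b : ℝ) ^ m)⁻¹)))
    (m : ℕ) (hm : 1 ≤ m) (k : ℕ) (hk : k < b ^ m) :
    Filter.Tendsto (fun N : ℕ =>
      (((Finset.Icc 1 N).filter (fun n =>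
        Int.fract ((b : ℝ) ^ n * θ) ∈ Set.Ico ((k : ℝ) / (b : ℝ) ^ m) (((k : ℝ) + 1) / (b : ℝ) ^ m))).card : ℝ) / N)
      Filter.atTop (nhds (1 / (b : ℝ) ^ m)) := by
  -- digits of k
  set ee : ℕ → ℕ := fun j => k / b ^ (m - 1 - j) % b with hee
  have hb0 : 0 < b := by omega
  have heelt : ∀ j, ee j < b := fun j => Nat.mod_lt _ hb0
  have hKi : ∀ i, i ≤ m → Kc b ee i = k / b ^ (m - i) := by
    intro i hi
    induction i with
    | zero =>
      simp [Kc, Nat.div_eq_of_lt hk]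
    | succ i ih =>
      have hi' : i ≤ m := by omega
      rw [Kc_succ, ih hi']
      have h1 : m - i = (m - (i + 1)) + 1 := by omega
      have h2 : b ^ (m - i) = b ^ (m - (i + 1)) * b := by rw [h1, pow_succ]
      rw [h2, ← Nat.div_div_eq_div_mul]
      have hexp : m - 1 - i = m - (i + 1) := by omega
      have h3 : ee i = k / b ^ (m - (i + 1)) % b := by
        rw [hee]
        simp only [hexp]
      rw [h3]
      exact Nat.div_add_mod _ b
  have hK : Kc b ee m = k := by
    have := hKi m le_rfl
    simpa using this
  have h0 := hyp m hm (fun i => ee i) (fun i => heelt i)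
  have hcong : ∀ N : ℕ, ((Finset.range N).filter (fun n => ∀ i : Fin m,
        ⌊(b : ℝ) * Int.fract ((b : ℝ) ^ (n + (i : ℕ)) * θ)⌋ = ((ee i : ℕ) : ℤ)))
      = (Finset.range N).filter (fun n =>
        Int.fract ((b : ℝ) ^ n * θ) ∈ Set.Ico ((k : ℝ) / (b : ℝ) ^ m) (((k : ℝ) + 1) / (b : ℝ) ^ m)) := by
    intro N
    apply Finset.filter_congr
    intro n _
    have hfin : (∀ i : Fin m, ⌊(b : ℝ) * Int.fract ((b : ℝ) ^ (n + (i : ℕ)) * θ)⌋ = ((ee i : ℕ) : ℤ))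
        ↔ (∀ j < m, ⌊(b : ℝ) * Int.fract ((b : ℝ) ^ (n + j) * θ)⌋ = (ee j : ℤ)) := by
      constructor
      · intro h j hj; exact h ⟨j, hj⟩
      · intro h i; exact h i i.2
    rw [hfin, point_iff b θ hb m ee heelt n, hK]
  have h1 : Filter.Tendsto (fun N : ℕ =>
      (((Finset.range N).filter (fun n =>
        Int.fract ((b : ℝ) ^ n * θ) ∈ Set.Ico ((k : ℝ) / (b : ℝ) ^ m) (((k : ℝ) + 1) / (b : ℝ) ^ m))).card : ℝ) / N)
      Filter.atTop (nhds (((b : ℝ) ^ m)⁻¹)) := by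
    refine h0.congr fun N => ?_
    rw [hcong N]
  have h2 := range_to_Icc (fun n => Int.fract ((b : ℝ) ^ n * θ) ∈ Set.Ico ((k : ℝ) / (b : ℝ) ^ m) (((k : ℝ) + 1) / (b : ℝ) ^ m)) (((b : ℝ) ^ m)⁻¹) (by convert h1 using 4 with N; exact congrArg Finset.card (filter_inst _ _ _ _))
  rw [← one_div] at h2
  convert h2 using 4 with N
  exact congrArg Finset.card (filter_inst _ _ _ _)
lemma sum_case (hb : 2 ≤ b)
    (hyp : ∀ m : ℕ, 1 ≤ m → ∀ e : Fin m → ℕ, (∀ i, e i < b) →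
      Filter.Tendsto (fun N : ℕ =>
        (((Finset.range N).filter (fun n => ∀ i : Fin m,
          ⌊(b : ℝ) * Int.fract ((b : ℝ) ^ (n + (i : ℕ)) * θ)⌋ = (e i : ℤ))).card : ℝ) / N)
        Filter.atTop (nhds (((b : ℝ) ^ m)⁻¹)))
    (m : ℕ) (hm : 1 ≤ m) (p : ℕ) :
    ∀ q : ℕ, p ≤ q → q ≤ b ^ m →
    Filter.Tendsto (fun N : ℕ =>
      (((Finset.Icc 1 N).filter (fun n =>
        Int.fract ((b : ℝ) ^ n * θ) ∈ Set.Ico ((p : ℝ) / (b : ℝ) ^ m) ((q : ℝ) / (b : ℝ) ^ m))).card : ℝ) / N)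
      Filter.atTop (nhds (((q : ℝ) - (p : ℝ)) / (b : ℝ) ^ m)) := by
  have hb0 : (0 : ℝ) < (b : ℝ) ^ m := by positivity
  intro q hq
  induction q, hq using Nat.le_induction with
  | base =>
    intro _
    have hemp : ∀ N : ℕ, (Finset.Icc 1 N).filter (fun n =>
        Int.fract ((b : ℝ) ^ n * θ) ∈ Set.Ico ((p : ℝ) / (b : ℝ) ^ m) ((p : ℝ) / (b : ℝ) ^ m)) = ∅ := by
      intro N
      apply Finset.filter_false_of_mem
      intro n _
      simp [Set.Ico_self]
    have : (fun N : ℕ => (((Finset.Icc 1 N).filter (fun n =>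
        Int.fract ((b : ℝ) ^ n * θ) ∈ Set.Ico ((p : ℝ) / (b : ℝ) ^ m) ((p : ℝ) / (b : ℝ) ^ m))).card : ℝ) / N)
        = fun _ : ℕ => (0 : ℝ) := by
      funext N
      rw [hemp N]
      simp
    rw [this, sub_self, zero_div]
    exact tendsto_const_nhds
  | succ q hpq ih =>
    intro hq1
    have hqb : q ≤ b ^ m := by omega
    have hqlt : q < b ^ m := by omega
    have ihh := ih hqb
    have hbase := base_case b θ hb hyp m hm q hqlt
    have hsum := ihh.add hbase
    have hsplit : ∀ N : ℕ, (((Finset.Icc 1 N).filter (fun n =>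
        Int.fract ((b : ℝ) ^ n * θ) ∈ Set.Ico ((p : ℝ) / (b : ℝ) ^ m) (((q : ℕ) + 1 : ℕ) / (b : ℝ) ^ m))).card : ℝ)
        = (((Finset.Icc 1 N).filter (fun n =>
            Int.fract ((b : ℝ) ^ n * θ) ∈ Set.Ico ((p : ℝ) / (b : ℝ) ^ m) ((q : ℝ) / (b : ℝ) ^ m))).card : ℝ)
          + (((Finset.Icc 1 N).filter (fun n =>
            Int.fract ((b : ℝ) ^ n * θ) ∈ Set.Ico ((q : ℝ) / (b : ℝ) ^ m) (((q : ℝ) + 1) / (b : ℝ) ^ m))).card : ℝ) := by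
      intro N
      have hc := card_split ((p : ℝ) / (b : ℝ) ^ m) ((q : ℝ) / (b : ℝ) ^ m) (((q : ℝ) + 1) / (b : ℝ) ^ m)
        (by apply div_le_div_of_nonneg_right ?_ hb0.le; exact_mod_cast hpq)
        (by apply div_le_div_of_nonneg_right ?_ hb0.le; linarith)
        (Finset.Icc 1 N) (fun n => Int.fract ((b : ℝ) ^ n * θ))
      have hcast : (((q : ℕ) + 1 : ℕ) : ℝ) = (q : ℝ) + 1 := by push_cast; ring
      rw [show (((q : ℕ) + 1 : ℕ) : ℝ) / (b : ℝ) ^ m = ((q : ℝ) + 1) / (b : ℝ) ^ m by rw [hcast]]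
      exact_mod_cast hc
    have heq : (fun N : ℕ => (((Finset.Icc 1 N).filter (fun n =>
        Int.fract ((b : ℝ) ^ n * θ) ∈ Set.Ico ((p : ℝ) / (b : ℝ) ^ m) (((q + 1 : ℕ) : ℝ) / (b : ℝ) ^ m))).card : ℝ) / N)
        = fun N : ℕ => ((((Finset.Icc 1 N).filter (fun n =>
            Int.fract ((b : ℝ) ^ n * θ) ∈ Set.Ico ((p : ℝ) / (b : ℝ) ^ m) ((q : ℝ) / (b : ℝ) ^ m))).card : ℝ) / N)
          + ((((Finset.Icc 1 N).filter (fun n =>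
            Int.fract ((b : ℝ) ^ n * θ) ∈ Set.Ico ((q : ℝ) / (b : ℝ) ^ m) (((q : ℝ) + 1) / (b : ℝ) ^ m))).card : ℝ) / N) := by
      funext N
      rw [← add_div, ← hsplit N]
    rw [heq]
    have hlim : (((q + 1 : ℕ) : ℝ) - (p : ℝ)) / (b : ℝ) ^ m
        = ((q : ℝ) - (p : ℝ)) / (b : ℝ) ^ m + 1 / (b : ℝ) ^ m := by
      push_cast
      ring
    rw [hlim]
    exact hsum


lemma forward (hb : 2 ≤ b)
    (hyp : ∀ m : ℕ, 1 ≤ m → ∀ e : Fin m → ℕ, (∀ i, e i < b) →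
      Filter.Tendsto (fun N : ℕ =>
        (((Finset.range N).filter (fun n => ∀ i : Fin m,
          ⌊(b : ℝ) * Int.fract ((b : ℝ) ^ (n + (i : ℕ)) * θ)⌋ = (e i : ℤ))).card : ℝ) / N)
        Filter.atTop (nhds (((b : ℝ) ^ m)⁻¹)))
    (a c : ℝ) (ha : 0 ≤ a) (hac : a < c) (hc : c ≤ 1) :
    Filter.Tendsto (fun N : ℕ => (((Finset.Icc 1 N).filter (fun n =>
      Int.fract ((b : ℝ) ^ n * θ) ∈ Set.Ico a c)).card : ℝ) / N) Filter.atTop (nhds (c - a)) := by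
  rw [Metric.tendsto_atTop]
  intro ε hε
  have hb1 : (1 : ℝ) < (b : ℝ) := by exact_mod_cast (by omega : 1 < b)
  obtain ⟨m₀, hm₀⟩ := pow_unbounded_of_one_lt (R := ℝ) (4 / ε) hb1
  set m : ℕ := m₀ + 1 with hmdef
  have hm : 1 ≤ m := by omega
  set B : ℝ := (b : ℝ) ^ m with hBdef
  have hB : 0 < B := by positivity
  have hbm : 4 / ε < B := by
    refine lt_of_lt_of_le hm₀ ?_
    exact pow_le_pow_right₀ hb1.le (by omega)
  have h2B : 2 / B < ε / 2 := by
    rw [div_lt_div_iff₀ hB (by norm_num : (0:ℝ) < 2)]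
    have h4 : 4 < ε * B := by
      rw [div_lt_iff₀ hε] at hbm
      linarith
    nlinarith
  have hc0 : 0 ≤ c := le_of_lt (lt_of_le_of_lt ha hac)
  set p' : ℕ := ⌊a * B⌋₊ with hp'def
  set q' : ℕ := ⌈c * B⌉₊ with hq'def
  set p : ℕ := ⌈a * B⌉₊ with hpdef
  set q : ℕ := ⌊c * B⌋₊ with hqdef
  set qq : ℕ := max p q with hqqdef
  have haB : 0 ≤ a * B := mul_nonneg ha hB.le
  have hcB : 0 ≤ c * B := mul_nonneg hc0 hB.le
  have hple : (p : ℝ) < a * B + 1 := Nat.ceil_lt_add_one haB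
  have hqgt : c * B < (q : ℝ) + 1 := Nat.lt_floor_add_one _
  have hp'gt : a * B - 1 < (p' : ℝ) := Nat.sub_one_lt_floor _
  have hq'lt : (q' : ℝ) < c * B + 1 := Nat.ceil_lt_add_one hcB
  have hple2 : a ≤ (p : ℝ) / B := by
    rw [le_div_iff₀ hB]
    exact Nat.le_ceil _
  have hqle2 : (q : ℝ) / B ≤ c := by
    rw [div_le_iff₀ hB]
    exact Nat.floor_le hcB
  have hp'le2 : (p' : ℝ) / B ≤ a := by
    rw [div_le_iff₀ hB]
    exact Nat.floor_le haB
  have hq'ge2 : c ≤ (q' : ℝ) / B := by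
    rw [le_div_iff₀ hB]
    exact Nat.le_ceil _
  have hBcast : B = ((b ^ m : ℕ) : ℝ) := by push_cast; rfl
  have hpbm : p ≤ b ^ m := by
    rw [hpdef, Nat.ceil_le, ← hBcast]
    nlinarith
  have hqbm : q ≤ b ^ m := by
    have h1 : c * B ≤ ((b ^ m : ℕ) : ℝ) := by rw [← hBcast]; nlinarith
    calc q = ⌊c * B⌋₊ := rfl
      _ ≤ ⌊((b ^ m : ℕ) : ℝ)⌋₊ := Nat.floor_le_floor h1
      _ = b ^ m := Nat.floor_natCast _
  have hq'bm : q' ≤ b ^ m := by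
    rw [hq'def, Nat.ceil_le, ← hBcast]
    nlinarith
  have hqqbm : qq ≤ b ^ m := max_le hpbm hqbm
  have hp'q' : p' ≤ q' := by
    have h1 : (p' : ℝ) ≤ c * B := le_trans (Nat.floor_le haB) (by nlinarith)
    have h2 : c * B ≤ (q' : ℝ) := Nat.le_ceil _
    exact_mod_cast le_trans h1 h2
  have Tin := sum_case b θ hb hyp m hm p qq (le_max_left _ _) hqqbm
  have Tout := sum_case b θ hb hyp m hm p' q' hp'q' hq'bm
  have hLin : c - a - 2 / B ≤ ((qq : ℝ) - (p : ℝ)) / B := by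
    rcases le_or_gt p q with h | h
    · have hqqq : qq = q := max_eq_right h
      rw [hqqq, le_div_iff₀ hB, sub_mul, sub_mul, div_mul_cancel₀ _ hB.ne']
      linarith
    · have hqqq : qq = p := max_eq_left h.le
      rw [hqqq, sub_self, zero_div]
      have h1 : (q : ℝ) + 1 ≤ (p : ℝ) := by exact_mod_cast h
      have h2 : (c - a) * B < 2 := by nlinarith
      have h3 : c - a ≤ 2 / B := by
        rw [le_div_iff₀ hB]; nlinarith
      linarith
  have hLout : ((q' : ℝ) - (p' : ℝ)) / B ≤ c - a + 2 / B := by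
    rw [div_le_iff₀ hB]
    have hexp : (c - a + 2 / B) * B = (c - a) * B + 2 := by
      field_simp
    rw [hexp]
    nlinarith
  -- count comparisons
  have hcntlow : ∀ N : ℕ, (((Finset.Icc 1 N).filter (fun n =>
      Int.fract ((b : ℝ) ^ n * θ) ∈ Set.Ico ((p : ℝ) / B) ((qq : ℝ) / B))).card : ℝ)
      ≤ (((Finset.Icc 1 N).filter (fun n =>
      Int.fract ((b : ℝ) ^ n * θ) ∈ Set.Ico a c)).card : ℝ) := by
    intro N
    have hsub : ((Finset.Icc 1 N).filter (fun n =>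
        Int.fract ((b : ℝ) ^ n * θ) ∈ Set.Ico ((p : ℝ) / B) ((qq : ℝ) / B)))
        ⊆ ((Finset.Icc 1 N).filter (fun n =>
        Int.fract ((b : ℝ) ^ n * θ) ∈ Set.Ico a c)) := by
      intro n hn
      simp only [Finset.mem_filter, Set.mem_Ico] at hn ⊢
      obtain ⟨hmem, h1, h2⟩ := hn
      rcases le_or_gt p q with h | h
      · have hqqq : qq = q := max_eq_right h
        rw [hqqq] at h2
        exact ⟨hmem, le_trans hple2 h1, lt_of_lt_of_le h2 hqle2⟩
      · have hqqq : qq = p := max_eq_left h.le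
        rw [hqqq] at h2
        exact absurd (lt_of_le_of_lt h1 h2) (lt_irrefl _)
    exact_mod_cast Finset.card_le_card hsub
  have hcnthigh : ∀ N : ℕ, (((Finset.Icc 1 N).filter (fun n =>
      Int.fract ((b : ℝ) ^ n * θ) ∈ Set.Ico a c)).card : ℝ)
      ≤ (((Finset.Icc 1 N).filter (fun n =>
      Int.fract ((b : ℝ) ^ n * θ) ∈ Set.Ico ((p' : ℝ) / B) ((q' : ℝ) / B))).card : ℝ) := by
    intro N
    have hsub : ((Finset.Icc 1 N).filter (fun n =>
        Int.fract ((b : ℝ) ^ n * θ) ∈ Set.Ico a c))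
        ⊆ ((Finset.Icc 1 N).filter (fun n =>
        Int.fract ((b : ℝ) ^ n * θ) ∈ Set.Ico ((p' : ℝ) / B) ((q' : ℝ) / B))) := by
      intro n hn
      simp only [Finset.mem_filter, Set.mem_Ico] at hn ⊢
      obtain ⟨hmem, h1, h2⟩ := hn
      exact ⟨hmem, le_trans hp'le2 h1, lt_of_lt_of_le h2 hq'ge2⟩
    exact_mod_cast Finset.card_le_card hsub
  have hev1 : ∀ᶠ N : ℕ in Filter.atTop, ((qq : ℝ) - (p : ℝ)) / B - ε / 2
      < (((Finset.Icc 1 N).filter (fun n =>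
      Int.fract ((b : ℝ) ^ n * θ) ∈ Set.Ico ((p : ℝ) / B) ((qq : ℝ) / B))).card : ℝ) / N :=
    Tin.eventually (eventually_gt_nhds (by linarith))
  have hev2 : ∀ᶠ N : ℕ in Filter.atTop, (((Finset.Icc 1 N).filter (fun n =>
      Int.fract ((b : ℝ) ^ n * θ) ∈ Set.Ico ((p' : ℝ) / B) ((q' : ℝ) / B))).card : ℝ) / N
      < ((q' : ℝ) - (p' : ℝ)) / B + ε / 2 :=
    Tout.eventually (eventually_lt_nhds (by linarith))
  obtain ⟨N₀, hN₀⟩ := Filter.eventually_atTop.mp ((hev1.and hev2).and (Filter.eventually_ge_atTop 1))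
  refine ⟨N₀, fun N hN => ?_⟩
  obtain ⟨⟨e1, e2⟩, hN1⟩ := hN₀ N hN
  have hNpos : (0 : ℝ) < (N : ℝ) := by exact_mod_cast hN1
  rw [Real.dist_eq, abs_lt]
  have hm1 : (((Finset.Icc 1 N).filter (fun n =>
      Int.fract ((b : ℝ) ^ n * θ) ∈ Set.Ico ((p : ℝ) / B) ((qq : ℝ) / B))).card : ℝ) / N
      ≤ (((Finset.Icc 1 N).filter (fun n =>
      Int.fract ((b : ℝ) ^ n * θ) ∈ Set.Ico a c)).card : ℝ) / N :=
    div_le_div_of_nonneg_right (hcntlow N) hNpos.le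
  have hm2 : (((Finset.Icc 1 N).filter (fun n =>
      Int.fract ((b : ℝ) ^ n * θ) ∈ Set.Ico a c)).card : ℝ) / N
      ≤ (((Finset.Icc 1 N).filter (fun n =>
      Int.fract ((b : ℝ) ^ n * θ) ∈ Set.Ico ((p' : ℝ) / B) ((q' : ℝ) / B))).card : ℝ) / N :=
    div_le_div_of_nonneg_right (hcnthigh N) hNpos.le
  constructor
  · linarith
  · linarith


lemma backward (hb : 2 ≤ b)
    (hud : ∀ a c : ℝ, 0 ≤ a → a < c → c ≤ 1 →
      Filter.Tendsto (fun N : ℕ =>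
        (((Finset.Icc 1 N).filter (fun n =>
          Int.fract ((b : ℝ) ^ n * θ) ∈ Set.Ico a c)).card : ℝ) / N)
        Filter.atTop (nhds (c - a)))
    (m : ℕ) (hm : 1 ≤ m) (e : Fin m → ℕ) (he : ∀ i, e i < b) :
    Filter.Tendsto (fun N : ℕ =>
      (((Finset.range N).filter (fun n => ∀ i : Fin m,
        ⌊(b : ℝ) * Int.fract ((b : ℝ) ^ (n + (i : ℕ)) * θ)⌋ = (e i : ℤ))).card : ℝ) / N)
      Filter.atTop (nhds (((b : ℝ) ^ m)⁻¹)) := by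
  have hB : (0 : ℝ) < (b : ℝ) ^ m := by positivity
  set ee : ℕ → ℕ := fun j => if h : j < m then e ⟨j, h⟩ else 0 with heedef
  have heelt : ∀ j, ee j < b := by
    intro j
    rw [heedef]
    dsimp only
    split
    · exact he _
    · omega
  set k : ℕ := Kc b ee m with hkdef
  have hk : k < b ^ m := Kc_lt b ee (by omega) heelt m
  have ha : (0 : ℝ) ≤ (k : ℝ) / (b : ℝ) ^ m := by positivity
  have hac : (k : ℝ) / (b : ℝ) ^ m < ((k : ℝ) + 1) / (b : ℝ) ^ m := by
    rw [div_lt_div_iff₀ hB hB]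
    nlinarith
  have hc : ((k : ℝ) + 1) / (b : ℝ) ^ m ≤ 1 := by
    rw [div_le_one hB]
    have : (k : ℝ) + 1 ≤ ((b ^ m : ℕ) : ℝ) := by exact_mod_cast hk
    calc (k : ℝ) + 1 ≤ ((b ^ m : ℕ) : ℝ) := this
      _ = (b : ℝ) ^ m := by push_cast; ring
  have h0 := hud ((k : ℝ) / (b : ℝ) ^ m) (((k : ℝ) + 1) / (b : ℝ) ^ m) ha hac hc
  have hca : ((k : ℝ) + 1) / (b : ℝ) ^ m - (k : ℝ) / (b : ℝ) ^ m = ((b : ℝ) ^ m)⁻¹ := by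
    rw [div_sub_div_same]
    rw [show (k : ℝ) + 1 - (k : ℝ) = 1 by ring]
    exact one_div _
  rw [hca] at h0
  have h1 := Icc_to_range (fun n => Int.fract ((b : ℝ) ^ n * θ)
      ∈ Set.Ico ((k : ℝ) / (b : ℝ) ^ m) (((k : ℝ) + 1) / (b : ℝ) ^ m)) (((b : ℝ) ^ m)⁻¹)
    (by convert h0 using 4 with N; exact congrArg Finset.card (filter_inst _ _ _ _))
  have hcong : ∀ N : ℕ, ((Finset.range N).filter (fun n =>
      Int.fract ((b : ℝ) ^ n * θ) ∈ Set.Ico ((k : ℝ) / (b : ℝ) ^ m) (((k : ℝ) + 1) / (b : ℝ) ^ m)))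
      = ((Finset.range N).filter (fun n => ∀ i : Fin m,
        ⌊(b : ℝ) * Int.fract ((b : ℝ) ^ (n + (i : ℕ)) * θ)⌋ = (e i : ℤ))) := by
    intro N
    apply Finset.filter_congr
    intro n _
    rw [← point_iff b θ hb m ee heelt n]
    constructor
    · intro h i
      have := h i (i.2) 
      rwa [show ee (i : ℕ) = e i by rw [heedef]; dsimp only; rw [dif_pos i.2]] at this
    · intro h j hj
      have := h ⟨j, hj⟩
      rwa [show ee j = e ⟨j, hj⟩ by rw [heedef]; dsimp only; rw [dif_pos hj]]
  have h2 : Filter.Tendsto (fun N : ℕ =>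
      (((Finset.range N).filter (fun n => ∀ i : Fin m,
        ⌊(b : ℝ) * Int.fract ((b : ℝ) ^ (n + (i : ℕ)) * θ)⌋ = (e i : ℤ))).card : ℝ) / N)
      Filter.atTop (nhds (((b : ℝ) ^ m)⁻¹)) := by
    refine h1.congr fun N => ?_
    exact congrArg (fun z : ℕ => (z : ℝ) / (N : ℝ))
      (congrArg Finset.card ((filter_inst _ _ _ _).trans (hcong N)))
  exact h2


end Main


end Stmt1Aux

/-- Let `b ≥ 2` be an integer and `θ ∈ [0,1)`. Then `θ` is normal to base `b`
if and only if its remainder sequence `x_n = fract (b^n θ)`, `n ≥ 1`, is uniformly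
distributed mod 1. The `n`-th digit is `d_n(θ) = ⌊b · fract (b^{n-1} θ)⌋`. -/
theorem stmt_1 (b : ℕ) (hb : 2 ≤ b) (θ : ℝ) (hθ : θ ∈ Set.Ico (0 : ℝ) 1) :
    (∀ m : ℕ, 1 ≤ m → ∀ e : Fin m → ℕ, (∀ i, e i < b) →
      Filter.Tendsto (fun N : ℕ =>
        (((Finset.range N).filter (fun n => ∀ i : Fin m,
          ⌊(b : ℝ) * Int.fract ((b : ℝ) ^ (n + (i : ℕ)) * θ)⌋ = (e i : ℤ))).card : ℝ) / N)
        Filter.atTop (nhds (((b : ℝ) ^ m)⁻¹))) ↔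
    (∀ a c : ℝ, 0 ≤ a → a < c → c ≤ 1 →
      Filter.Tendsto (fun N : ℕ =>
        (((Finset.Icc 1 N).filter (fun n =>
          Int.fract ((b : ℝ) ^ n * θ) ∈ Set.Ico a c)).card : ℝ) / N)
        Filter.atTop (nhds (c - a))) := by
  constructor
  · intro hyp a c ha hac hc
    exact Stmt1Aux.forward b θ hb hyp a c ha hac hc
  · intro hud m hm e he
    exact Stmt1Aux.backward b θ hb hud m hm e he
end

section
/- Let b ≥ 2 be an integer and let (ε_n)_{n≥1} be real numbers with ε_n → 0. Set θ = Σ_{n=1}^∞ ε_n b^{−n} and t_n = Σ_{j=1}^∞ ε_{n+j} b^{−j}. Define the perturbed orbit by y_0 = 0 and y_{n+1} = fract(b·y_n + ε_{n+1}). Then for every n ≥ 0 one has fract(b^n θ) = fract(y_n + t_n); equivalently b^n θ − y_n − t_n is an integer. -/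
/-- Let `b ≥ 2` be an integer and `(ε_n)_{n≥1}` real numbers with `ε_n → 0`.
Set `θ = Σ_{n=1}^∞ ε_n b^{-n}` and `t_n = Σ_{j=1}^∞ ε_{n+j} b^{-j}`. Define the perturbed
orbit by `y_0 = 0` and `y_{n+1} = fract (b·y_n + ε_{n+1})`. Then for every `n ≥ 0`,
`fract (b^n θ) = fract (y_n + t_n)`, i.e. `b^n θ - y_n - t_n ∈ ℤ`. -/
theorem stmt_3 (b : ℕ) (hb : 2 ≤ b) (ε : ℕ → ℝ)
    (hε : Filter.Tendsto ε Filter.atTop (nhds 0))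
    (θ : ℝ) (hθ : θ = ∑' n : ℕ, ε (n + 1) / (b : ℝ) ^ (n + 1))
    (t : ℕ → ℝ) (ht : ∀ n : ℕ, t n = ∑' j : ℕ, ε (n + j + 1) / (b : ℝ) ^ (j + 1))
    (y : ℕ → ℝ) (hy0 : y 0 = 0)
    (hy : ∀ n : ℕ, y (n + 1) = Int.fract ((b : ℝ) * y n + ε (n + 1))) :
    ∀ n : ℕ, ∃ k : ℤ, (b : ℝ) ^ n * θ - y n - t n = (k : ℝ) := by
  have hb1 : (1 : ℝ) < (b : ℝ) := by exact_mod_cast hb.trans_lt' one_lt_two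
  have hb0 : (0 : ℝ) < (b : ℝ) := lt_trans one_pos hb1
  -- bound on ε
  have hεabs : Filter.Tendsto (fun n => |ε n|) Filter.atTop (nhds 0) := by
    simpa using hε.abs
  obtain ⟨M, hM⟩ := hεabs.bddAbove_range
  have hMle : ∀ k, |ε k| ≤ M := fun k => hM ⟨k, rfl⟩
  -- summability
  have hr : |(1 : ℝ) / (b : ℝ)| < 1 := by
    rw [abs_of_pos (by positivity)]
    rw [div_lt_one hb0]; exact hb1
  have hsum : ∀ n : ℕ, Summable (fun j : ℕ => ε (n + j + 1) / (b : ℝ) ^ (j + 1)) := by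
    intro n
    have hgeo : Summable (fun j : ℕ => (M / (b : ℝ)) * ((1 : ℝ) / (b : ℝ)) ^ j) :=
      (summable_geometric_of_abs_lt_one hr).mul_left _
    have hle : ∀ j : ℕ, |ε (n + j + 1) / (b : ℝ) ^ (j + 1)| ≤
        (M / (b : ℝ)) * ((1 : ℝ) / (b : ℝ)) ^ j := by
      intro j
      rw [abs_div, abs_pow, abs_of_pos hb0]
      have h2 : M / (b : ℝ) * (1 / (b : ℝ)) ^ j = M / (b : ℝ) ^ (j + 1) := by
        rw [div_pow, one_pow, div_mul_div_comm, mul_one, ← pow_succ']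
      rw [h2]
      gcongr
      exact hMle _
    exact Summable.of_abs (Summable.of_nonneg_of_le (fun j => abs_nonneg _) hle hgeo)
  -- key recursion for t
  have hkey : ∀ n : ℕ, (b : ℝ) * t n = ε (n + 1) + t (n + 1) := by
    intro n
    rw [ht n, ht (n + 1), ← tsum_mul_left]
    have heq : ∀ j : ℕ, (b : ℝ) * (ε (n + j + 1) / (b : ℝ) ^ (j + 1)) =
        ε (n + j + 1) / (b : ℝ) ^ j := by
      intro j
      rw [pow_succ]
      field_simp
    rw [tsum_congr heq]
    have hsum' : Summable (fun j : ℕ => ε (n + j + 1) / (b : ℝ) ^ j) := by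
      have := (hsum n).mul_left (b : ℝ)
      simpa [heq] using this
    rw [Summable.tsum_eq_zero_add hsum']
    simp only [pow_zero, div_one]
    congr 1
    apply tsum_congr
    intro j
    congr 2
    omega
  -- θ = t 0
  have hθt : θ = t 0 := by
    rw [hθ, ht 0]
    exact tsum_congr fun j => by rw [zero_add]
  intro n
  induction n with
  | zero =>
    exact ⟨0, by simp [hy0, hθt]⟩
  | succ n ih =>
    obtain ⟨k, hk⟩ := ih
    refine ⟨b * k + ⌊(b : ℝ) * y n + ε (n + 1)⌋, ?_⟩
    have hfloor : y (n + 1) = (b : ℝ) * y n + ε (n + 1) - ⌊(b : ℝ) * y n + ε (n + 1)⌋ := by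
      rw [hy n, Int.fract]
    have ht' : t (n + 1) = (b : ℝ) * t n - ε (n + 1) := by
      rw [hkey n]; ring
    rw [pow_succ, hfloor, ht']
    push_cast
    nlinarith [hk]
end

section
/- Let b ≥ 2 be an integer and let (ε_n)_{n≥1} be real numbers with ε_n → 0. Set θ = Σ_{n=1}^∞ ε_n b^{−n}, let x_n = fract(b^n θ) be the remainder sequence of the b-expansion of θ, and define the perturbed orbit by y_0 = 0, y_{n+1} = fract(b·y_n + ε_{n+1}). Then the distance in the circle ℝ/ℤ between the images of x_n and y_n tends to 0 as n → ∞. -/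
set_option maxHeartbeats 1000000

/-- Let `b ≥ 2` be an integer and `(ε_n)_{n≥1}` real numbers with `ε_n → 0`.
Set `θ = Σ_{n=1}^∞ ε_n b^{-n}`, let `x_n = fract (b^n θ)` be the remainder sequence of the
`b`-expansion of `θ`, and define the perturbed orbit by `y_0 = 0`,
`y_{n+1} = fract (b·y_n + ε_{n+1})`. Then the distance in the circle `ℝ/ℤ` between the
images of `x_n` and `y_n` tends to `0` as `n → ∞`. -/
theorem stmt_4 (b : ℕ) (hb : 2 ≤ b) (ε : ℕ → ℝ)
    (hε : Filter.Tendsto ε Filter.atTop (nhds 0))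
    (θ : ℝ) (hθ : θ = ∑' n : ℕ, ε (n + 1) / (b : ℝ) ^ (n + 1))
    (y : ℕ → ℝ) (hy0 : y 0 = 0)
    (hy : ∀ n : ℕ, y (n + 1) = Int.fract ((b : ℝ) * y n + ε (n + 1))) :
    Filter.Tendsto
      (fun n : ℕ =>
        dist ((Int.fract ((b : ℝ) ^ n * θ) : ℝ) : AddCircle (1 : ℝ))
          ((y n : ℝ) : AddCircle (1 : ℝ)))
      Filter.atTop (nhds 0) := by
  have hb2 : (2:ℝ) ≤ (b:ℝ) := by exact_mod_cast hb
  have hb1 : (1:ℝ) < (b:ℝ) := by linarith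
  have hb0 : (0:ℝ) < (b:ℝ) := by linarith
  have hbne : (b:ℝ) ≠ 0 := ne_of_gt hb0
  set u : ℝ := ((b:ℝ))⁻¹ with hu
  have hu0 : 0 ≤ u := by positivity
  have hu1 : u < 1 := inv_lt_one_of_one_lt₀ hb1
  have huhalf : u ≤ 1/2 := by
    have := inv_anti₀ (by norm_num : (0:ℝ) < 2) hb2
    simpa [hu] using this
  -- geometric series facts
  have hgeo : Summable (fun j : ℕ => u ^ j) := summable_geometric_of_lt_one hu0 hu1
  have hgeo1 : Summable (fun j : ℕ => u ^ (j+1)) := by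
    simpa [pow_succ] using hgeo.mul_right u
  have htsum_u : (∑' j : ℕ, u ^ (j+1)) ≤ 1 := by
    have heq : (∑' j : ℕ, u ^ (j+1)) = (1-u)⁻¹ * u := by
      simp_rw [pow_succ]
      rw [tsum_mul_right, tsum_geometric_of_lt_one hu0 hu1]
    have h1u : (0:ℝ) < 1 - u := by linarith
    rw [heq, inv_mul_le_iff₀ h1u]
    linarith
  -- a uniform bound on ε
  have habs : Filter.Tendsto (fun n => |ε n|) Filter.atTop (nhds 0) := by
    simpa using hε.abs
  obtain ⟨C, hC⟩ : ∃ C, ∀ n, |ε n| ≤ C := by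
    obtain ⟨C, hC⟩ := habs.bddAbove_range
    exact ⟨C, fun n => hC ⟨n, rfl⟩⟩
  have hC0 : 0 ≤ C := le_trans (abs_nonneg _) (hC 0)
  -- summability of shifted series
  have hsum : ∀ m : ℕ, Summable (fun j : ℕ => ε (j + m) / (b:ℝ) ^ (j+1)) := by
    intro m
    apply Summable.of_norm_bounded (g := fun j => C * u ^ (j+1)) (hgeo1.mul_left C)
    intro j
    rw [Real.norm_eq_abs, abs_div, abs_pow, abs_of_pos hb0, div_eq_mul_inv, ← inv_pow]
    exact mul_le_mul (hC _) le_rfl (by positivity) hC0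
  -- the remainder and partial sums
  set r : ℕ → ℝ := fun n => ∑' j : ℕ, ε (j + n + 1) / (b:ℝ) ^ (j+1) with hrdef
  set S : ℕ → ℝ := fun n => ∑ k ∈ Finset.range n, ε (k+1) * (b:ℝ) ^ (n-1-k) with hSdef
  have hrsum : ∀ n : ℕ, Summable (fun j : ℕ => ε (j + n + 1) / (b:ℝ) ^ (j+1)) := by
    intro n
    exact hsum (n+1)
  -- decomposition of b^n θ
  have hdecomp : ∀ n : ℕ, (b:ℝ) ^ n * θ = S n + r n := by
    intro n
    have hf : Summable (fun j : ℕ => ε (j + 1) / (b:ℝ) ^ (j+1)) := hsum 1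
    have h1 := Summable.sum_add_tsum_nat_add (f := fun j : ℕ => ε (j + 1) / (b:ℝ) ^ (j+1)) n hf
    rw [hθ, ← h1, mul_add]
    congr 1
    · rw [Finset.mul_sum]
      apply Finset.sum_congr rfl
      intro k hk
      have hk' : k < n := Finset.mem_range.1 hk
      have hip : (n - 1 - k) + (k+1) = n := by omega
      calc (b:ℝ)^n * (ε (k+1) / (b:ℝ)^(k+1))
          = ((b:ℝ)^(n-1-k) * (b:ℝ)^(k+1)) * (ε (k+1) / (b:ℝ)^(k+1)) := by
            rw [← pow_add, hip]
        _ = ε (k+1) * (b:ℝ)^(n-1-k) := by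
            field_simp
    · rw [← tsum_mul_left, hrdef]
      apply tsum_congr
      intro j
      show (b:ℝ)^n * (ε (j + n + 1) / (b:ℝ)^(j + n + 1)) = ε (j + n + 1) / (b:ℝ)^(j+1)
      have : (b:ℝ)^(j + n + 1) = (b:ℝ)^(j+1) * (b:ℝ)^n := by
        rw [← pow_add]; congr 1; omega
      rw [this]
      field_simp
  -- fract is trivial in the circle
  have hfract : ∀ x : ℝ, ((Int.fract x : ℝ) : AddCircle (1:ℝ)) = (x : AddCircle (1:ℝ)) := by
    intro x
    have h1 : Int.fract x = x - (⌊x⌋ : ℝ) := Int.self_sub_floor x ▸ rfl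
    rw [Int.fract, AddCircle.coe_sub]
    have : (((⌊x⌋ : ℝ)) : AddCircle (1:ℝ)) = 0 := by
      rw [AddCircle.coe_eq_zero_iff]
      exact ⟨⌊x⌋, by simp⟩
    rw [this, sub_zero]
  -- the perturbed orbit equals S n in the circle
  have hyS : ∀ n : ℕ, ((y n : ℝ) : AddCircle (1:ℝ)) = ((S n : ℝ) : AddCircle (1:ℝ)) := by
    intro n
    induction n with
    | zero => simp [hy0, hSdef]
    | succ n ih =>
      rw [hy n, hfract]
      have hS : (b:ℝ) * S n + ε (n+1) = S (n+1) := by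
        simp only [hSdef, Finset.mul_sum, Finset.sum_range_succ]
        congr 1
        · apply Finset.sum_congr rfl
          intro k hk
          have hk' : k < n := Finset.mem_range.1 hk
          have h2 : n + 1 - 1 - k = (n - 1 - k) + 1 := by omega
          rw [h2, pow_succ]
          ring
        · have : n + 1 - 1 - n = 0 := by omega
          simp [this]
      rw [← hS]
      have hbsmul : ∀ x : ℝ, (((b:ℝ) * x : ℝ) : AddCircle (1:ℝ)) = b • ((x:ℝ) : AddCircle (1:ℝ)) := by
        intro x
        rw [show (b:ℝ) * x = b • x from (nsmul_eq_mul b x).symm, AddCircle.coe_nsmul]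
      rw [AddCircle.coe_add, AddCircle.coe_add, hbsmul, hbsmul, ih]
  -- the remainder tends to 0
  have hr0 : Filter.Tendsto r Filter.atTop (nhds 0) := by
    rw [Metric.tendsto_atTop]
    intro δ hδ
    obtain ⟨N, hN⟩ := (Metric.tendsto_atTop.1 hε) (δ/2) (by linarith)
    refine ⟨N, fun n hn => ?_⟩
    rw [Real.dist_eq, sub_zero]
    have hb1' : ∀ j : ℕ, ‖ε (j + n + 1) / (b:ℝ) ^ (j+1)‖ ≤ (δ/2) * u ^ (j+1) := by
      intro j
      rw [Real.norm_eq_abs, abs_div, abs_pow, abs_of_pos hb0, div_eq_mul_inv, ← inv_pow]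
      have hj : N ≤ j + n + 1 := by omega
      have := hN (j + n + 1) hj
      rw [Real.dist_eq, sub_zero] at this
      exact mul_le_mul this.le le_rfl (by positivity) (by linarith)
    have ha : ‖∑' j : ℕ, ε (j + n + 1) / (b:ℝ) ^ (j+1)‖ ≤
        ∑' j : ℕ, ‖ε (j + n + 1) / (b:ℝ) ^ (j+1)‖ :=
      norm_tsum_le_tsum_norm (f := fun j : ℕ => ε (j + n + 1) / (b:ℝ) ^ (j+1)) ((hrsum n).abs)
    have hbd : (∑' j : ℕ, ‖ε (j + n + 1) / (b:ℝ) ^ (j+1)‖) ≤ ∑' j : ℕ, (δ/2) * u ^ (j+1) :=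
      Summable.tsum_le_tsum hb1' ((hrsum n).abs) (hgeo1.mul_left _)
    have h1 : |r n| ≤ ∑' j : ℕ, (δ/2) * u ^ (j+1) := le_trans (le_trans (le_of_eq rfl) ha) hbd
    have h2 : (∑' j : ℕ, (δ/2) * u ^ (j+1)) ≤ δ/2 := by
      rw [tsum_mul_left]
      calc (δ/2) * ∑' j : ℕ, u ^ (j+1) ≤ (δ/2) * 1 := by
            apply mul_le_mul_of_nonneg_left htsum_u (by linarith)
        _ = δ/2 := mul_one _
    linarith
  -- conclude
  have hcont : Filter.Tendsto (fun n => ((r n : ℝ) : AddCircle (1:ℝ))) Filter.atTop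
      (nhds (((0:ℝ) : AddCircle (1:ℝ)))) :=
    ((AddCircle.continuous_mk' (1:ℝ)).tendsto 0).comp hr0
  have hcont' : Filter.Tendsto (fun n => ((r n : ℝ) : AddCircle (1:ℝ))) Filter.atTop (nhds 0) := by
    simpa using hcont
  have hfinal := hcont'.dist (tendsto_const_nhds (x := (0 : AddCircle (1:ℝ))))
  rw [dist_self] at hfinal
  apply hfinal.congr
  intro n
  rw [hfract, hdecomp n, hyS n, AddCircle.coe_add]
  rw [dist_eq_norm, dist_eq_norm, sub_zero, add_sub_cancel_left]
end

section
/- Let b ≥ 2 be an integer and let (ε_n)_{n≥1} be real numbers with ε_n → 0. Set θ = Σ_{n=1}^∞ ε_n b^{−n} and define the perturbed orbit by y_0 = 0, y_{n+1} = fract(b·y_n + ε_{n+1}). Then θ is rational if and only if the set of cluster points of the sequence (y_n)_{n≥1} in ℝ is finite. -/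
open Filter Set
namespace Stmt7Aux



noncomputable def d1 (t : ℝ) : ℝ := |t - round t|

lemma d1_nonneg (t : ℝ) : 0 ≤ d1 t := abs_nonneg _

lemma d1_le_half (t : ℝ) : d1 t ≤ 1 / 2 := abs_sub_round t

lemma d1_le (t : ℝ) (m : ℤ) : d1 t ≤ |t - m| := by
  rcases eq_or_ne m (round t) with h | h
  · simp [d1, h]
  · have h1 : (1 : ℝ) ≤ |(m : ℝ) - round t| := by
      have h0 : (m - round t : ℤ) ≠ 0 := sub_ne_zero.mpr h
      have := Int.one_le_abs h0
      calc (1:ℝ) ≤ ((|m - round t| : ℤ) : ℝ) := by exact_mod_cast this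
        _ = |(m : ℝ) - round t| := by push_cast; ring_nf
    have h2 : |(m:ℝ) - round t| ≤ |(m:ℝ) - t| + |t - round t| := by
      have := abs_sub_abs_le_abs_sub ((m:ℝ) - t) ((round t : ℝ) - t)
      calc |(m:ℝ) - round t| = |((m:ℝ) - t) - ((round t:ℝ) - t)| := by ring_nf
        _ ≤ |(m:ℝ) - t| + |(round t:ℝ) - t| := abs_sub _ _
        _ = |(m:ℝ) - t| + |t - round t| := by rw [abs_sub_comm ((round t:ℝ)) t]
    have h3 := d1_le_half t
    have : d1 t = |t - round t| := rfl
    rw [abs_sub_comm ((m:ℝ)) t] at h2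
    linarith [d1_le_half t, le_of_eq this.symm]

lemma d1_le_abs (t : ℝ) : d1 t ≤ |t| := by simpa using d1_le t 0

lemma d1_add_int (t : ℝ) (m : ℤ) : d1 (t + m) = d1 t := by
  simp only [d1, round_add_intCast, Int.cast_add]
  ring_nf

lemma d1_sub_int (t : ℝ) (m : ℤ) : d1 (t - m) = d1 t := by
  simpa [sub_eq_add_neg] using d1_add_int t (-m)

lemma d1_intCast (m : ℤ) : d1 (m : ℝ) = 0 := by simp [d1, round_intCast]

lemma d1_eq_zero_iff {t : ℝ} : d1 t = 0 ↔ ∃ m : ℤ, t = m := by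
  constructor
  · intro h
    exact ⟨round t, by have := abs_eq_zero.mp h; linarith⟩
  · rintro ⟨m, rfl⟩; exact d1_intCast m

lemma d1_neg (t : ℝ) : d1 (-t) = d1 t := by
  have h1 := d1_le (-t) (-round t)
  have h2 := d1_le t (-round (-t))
  have e1 : |(-t) - ((-round t : ℤ) : ℝ)| = d1 t := by
    push_cast; rw [show -t - -(round t : ℝ) = -(t - round t) by ring, abs_neg]; rfl
  have e2 : |t - ((-round (-t) : ℤ) : ℝ)| = d1 (-t) := by
    push_cast; rw [show t - -(round (-t) : ℝ) = -(-t - round (-t)) by ring, abs_neg]; rfl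
  rw [e1] at h1; rw [e2] at h2; linarith

lemma d1_triangle (s t : ℝ) : d1 (s + t) ≤ d1 s + d1 t := by
  have := d1_le (s + t) (round s + round t)
  calc d1 (s + t) ≤ |s + t - ((round s + round t : ℤ) : ℝ)| := this
    _ = |(s - round s) + (t - round t)| := by push_cast; ring_nf
    _ ≤ |s - round s| + |t - round t| := abs_add_le _ _
    _ = d1 s + d1 t := rfl

lemma d1_scale {t : ℝ} {b : ℕ} (hb : 1 ≤ b) (h : (b : ℝ) * d1 t ≤ 1 / 2) :
    d1 ((b : ℝ) * t) = (b : ℝ) * d1 t := by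
  have hb0 : (0:ℝ) ≤ b := by positivity
  have hle : d1 ((b:ℝ) * t) ≤ (b:ℝ) * d1 t := by
    have := d1_le ((b:ℝ) * t) ((b : ℤ) * round t)
    calc d1 ((b:ℝ)*t) ≤ |(b:ℝ)*t - (((b:ℤ) * round t : ℤ):ℝ)| := this
      _ = (b:ℝ) * |t - round t| := by
            push_cast
            rw [show (b:ℝ)*t - (b:ℝ)*(round t) = (b:ℝ)*(t - round t) by ring, abs_mul,
              abs_of_nonneg hb0]
      _ = (b:ℝ) * d1 t := rfl
  rcases eq_or_ne (round ((b:ℝ)*t)) ((b:ℤ) * round t) with he | hne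
  · have : d1 ((b:ℝ)*t) = |(b:ℝ)*t - (((b:ℤ) * round t : ℤ):ℝ)| := by rw [d1, he]
    rw [this]
    push_cast
    rw [show (b:ℝ)*t - (b:ℝ)*(round t) = (b:ℝ)*(t - round t) by ring, abs_mul, abs_of_nonneg hb0]
    rfl
  · have h1 : (1:ℝ) ≤ |(round ((b:ℝ)*t) : ℝ) - ((b:ℤ) * round t : ℤ)| := by
      have h0 : (round ((b:ℝ)*t) - (b:ℤ) * round t : ℤ) ≠ 0 := sub_ne_zero.mpr hne
      have := Int.one_le_abs h0
      calc (1:ℝ) ≤ ((|round ((b:ℝ)*t) - (b:ℤ) * round t| : ℤ) : ℝ) := by exact_mod_cast this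
        _ = _ := by push_cast; ring_nf
    have h2 : |(round ((b:ℝ)*t):ℝ) - ((b:ℤ)*round t : ℤ)| ≤
        d1 ((b:ℝ)*t) + (b:ℝ) * d1 t := by
      have e : |(b:ℝ)*t - (((b:ℤ) * round t : ℤ):ℝ)| = (b:ℝ) * d1 t := by
        push_cast
        rw [show (b:ℝ)*t - (b:ℝ)*(round t) = (b:ℝ)*(t - round t) by ring, abs_mul,
          abs_of_nonneg hb0]
        rfl
      calc |(round ((b:ℝ)*t):ℝ) - ((b:ℤ)*round t : ℤ)|
          ≤ |(round ((b:ℝ)*t):ℝ) - (b:ℝ)*t| + |(b:ℝ)*t - (((b:ℤ) * round t : ℤ):ℝ)| :=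
            abs_sub_le _ _ _
        _ = d1 ((b:ℝ)*t) + (b:ℝ) * d1 t := by
            rw [abs_sub_comm, e]; rfl
    -- so d1 (b t) ≥ 1 - b * d1 t ≥ 1/2 ≥ b * d1 t, and d1 (bt) ≤ b d1 t : contradiction forces
    have h3 : (b:ℝ) * d1 t ≤ d1 ((b:ℝ)*t) := by linarith
    linarith


lemma clusterset_subset (u v : ℕ → ℝ) (G : Set ℝ) (hG : G.Finite)
    (hv : ∀ᶠ n in atTop, v n ∈ G)
    (h0 : Tendsto (fun n => u n - v n) atTop (nhds 0)) :
    {x : ℝ | MapClusterPt x atTop u} ⊆ G := by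
  intro x hx
  by_contra hxG
  have hopen : IsOpen Gᶜ := hG.isClosed.isOpen_compl
  obtain ⟨δ, hδpos, hδ⟩ := Metric.isOpen_iff.mp hopen x hxG
  have h1 : ∀ᶠ n in atTop, |u n - v n| < δ / 2 := by
    have := Metric.tendsto_nhds.mp h0 (δ / 2) (by linarith)
    filter_upwards [this] with n hn
    simpa [Real.dist_eq] using hn
  have h2 : ∃ᶠ n in atTop, u n ∈ Metric.ball x (δ / 2) :=
    mapClusterPt_iff_frequently.mp hx _ (Metric.ball_mem_nhds x (by linarith))
  obtain ⟨n, hnb, hnd, hnG⟩ := (h2.and_eventually (h1.and hv)).exists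
  have : v n ∈ Metric.ball x δ := by
    have hb : |u n - x| < δ / 2 := by simpa [Real.dist_eq] using hnb
    have : |v n - x| < δ := by
      have := abs_sub_le (v n) (u n) x
      rw [abs_sub_comm (v n) (u n)] at this
      linarith
    simpa [Metric.mem_ball, Real.dist_eq]
  exact (hδ this) hnG

lemma cluster_nonempty (u : ℕ → ℝ) (hu : ∀ n, u n ∈ Icc (0:ℝ) 1) :
    ∃ x, MapClusterPt x atTop u := by
  obtain ⟨x, _, hx⟩ := (isCompact_Icc (a := (0:ℝ)) (b := 1)).exists_mapClusterPt
    (f := atTop) (u := u) (Filter.le_principal_iff.mpr (Filter.mem_map.mpr (Filter.Eventually.of_forall hu)))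
  exact ⟨x, hx⟩

lemma cluster_approach (u : ℕ → ℝ) (hu : ∀ n, u n ∈ Icc (0:ℝ) 1)
    (hfin : {x : ℝ | MapClusterPt x atTop u}.Finite) {δ : ℝ} (hδ : 0 < δ) :
    ∀ᶠ n in atTop, ∃ c, MapClusterPt c atTop u ∧ |u n - c| < δ := by
  set C := {x : ℝ | MapClusterPt x atTop u} with hC
  by_contra hcon
  have hfreq : ∃ᶠ n in atTop, ∀ c ∈ C, δ ≤ |u n - c| := by
    rw [Filter.not_eventually] at hcon
    refine hcon.mono fun n hn c hc => ?_
    by_contra hlt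
    exact hn ⟨c, hc, by linarith⟩
  set T : Set ℝ := Icc (0:ℝ) 1 ∩ {t | ∀ c ∈ C, δ ≤ |t - c|} with hT
  have hclosed : IsClosed {t : ℝ | ∀ c ∈ C, δ ≤ |t - c|} := by
    have : {t : ℝ | ∀ c ∈ C, δ ≤ |t - c|} = ⋂ c ∈ C, {t : ℝ | δ ≤ |t - c|} := by
      ext t; simp
    rw [this]
    refine isClosed_biInter fun c _ => ?_
    exact isClosed_le continuous_const ((continuous_id.sub continuous_const).abs)
  have hTcomp : IsCompact T := isCompact_Icc.inter_right hclosed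
  set l : Filter ℕ := atTop ⊓ 𝓟 {n | u n ∈ T} with hl
  have hne : l.NeBot := by
    rw [hl, ← frequently_iff_neBot]
    exact (hfreq.mp (Filter.Eventually.of_forall fun n hn => ⟨hu n, hn⟩))
  have hmaple : Filter.map u l ≤ 𝓟 T := by
    rw [Filter.le_principal_iff, Filter.mem_map]
    exact Filter.mem_inf_of_right (Filter.mem_principal_self _)
  obtain ⟨x, hxT, hxcl⟩ := hTcomp.exists_mapClusterPt (f := l) hmaple
  have hxC : x ∈ C := by
    exact (hxcl.mono inf_le_left : MapClusterPt x atTop u)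
  have := hxT.2 x hxC
  simp at this
  linarith


lemma rat_of_orbit (b : ℕ) (hb : 2 ≤ b) (C : Set ℝ) (hC : C.Finite)
    (hinv : ∀ c ∈ C, ∃ c' ∈ C, ∃ m : ℤ, (b : ℝ) * c = c' + m) :
    ∀ c ∈ C, ∃ r : ℚ, c = (r : ℝ) := by
  intro c hc
  have hstep : ∀ x : C, ∃ y : C, ∃ m : ℤ, (b : ℝ) * (x : ℝ) = (y : ℝ) + m := by
    rintro ⟨x, hx⟩
    obtain ⟨c', hc', m, hm⟩ := hinv x hx
    exact ⟨⟨c', hc'⟩, m, hm⟩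
  choose g m hg using hstep
  set F : ℕ → C := fun k => g^[k] ⟨c, hc⟩ with hF
  have key : ∀ k, ∃ M : ℤ, (b : ℝ) ^ k * c = (F k : ℝ) + M := by
    intro k
    induction k with
    | zero => exact ⟨0, by simp [hF]⟩
    | succ k ih =>
      obtain ⟨M, hM⟩ := ih
      refine ⟨m (F k) + b * M, ?_⟩
      have hFk : F (k + 1) = g (F k) := Function.iterate_succ_apply' g k _
      rw [hFk]
      have := hg (F k)
      push_cast
      calc (b:ℝ)^(k+1) * c = (b:ℝ) * ((b:ℝ)^k * c) := by ring
        _ = (b:ℝ) * ((F k : ℝ) + M) := by rw [hM]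
        _ = (b:ℝ) * (F k : ℝ) + b * M := by ring
        _ = ((g (F k) : ℝ) + m (F k)) + b * M := by rw [this]
        _ = (g (F k) : ℝ) + ((m (F k) : ℝ) + (b:ℝ) * M) := by ring
  haveI : Finite C := hC.to_subtype
  obtain ⟨i, j, hij, hFij⟩ := Finite.exists_ne_map_eq_of_infinite F
  wlog hlt : i < j generalizing i j
  · exact this j i hij.symm hFij.symm (by omega)
  obtain ⟨Mi, hMi⟩ := key i
  obtain ⟨Mj, hMj⟩ := key j
  have hne : (b:ℝ) ^ j - (b:ℝ) ^ i ≠ 0 := by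
    have h1 : (1:ℝ) < b := by exact_mod_cast (by omega : 1 < b)
    have := pow_lt_pow_right₀ h1 hlt
    linarith
  have heq : ((b:ℝ) ^ j - (b:ℝ) ^ i) * c = (Mj : ℝ) - Mi := by
    have h1 : (F i : ℝ) = (b:ℝ)^i * c - Mi := by linarith
    have h2 : (F j : ℝ) = (b:ℝ)^j * c - Mj := by linarith
    have h3 : (F i : ℝ) = (F j : ℝ) := by rw [hFij]
    rw [h1, h2] at h3
    linarith
  refine ⟨((Mj - Mi : ℤ) : ℚ) / ((b:ℚ) ^ j - (b:ℚ) ^ i), ?_⟩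
  have hneq : ((b:ℚ) ^ j - (b:ℚ) ^ i) ≠ 0 := by
    intro h
    apply hne
    exact_mod_cast congrArg (fun q : ℚ => (q : ℝ)) h
  push_cast
  rw [eq_div_iff (by exact_mod_cast hneq : ((b:ℝ)^j - (b:ℝ)^i) ≠ 0)]
  linarith [heq]


lemma eps_bounded (ε : ℕ → ℝ) (hε : Tendsto ε atTop (nhds 0)) :
    ∃ Cb : ℝ, 0 ≤ Cb ∧ ∀ n, |ε n| ≤ Cb := by
  have h1 : ∀ᶠ n in atTop, |ε n| < 1 := by
    have := Metric.tendsto_nhds.mp hε 1 one_pos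
    filter_upwards [this] with n hn
    simpa [Real.dist_eq] using hn
  obtain ⟨N, hN⟩ := eventually_atTop.mp h1
  refine ⟨1 + ∑ k ∈ Finset.range N, |ε k|, by positivity, fun n => ?_⟩
  rcases le_or_gt N n with h | h
  · have := hN n h
    have hs : (0:ℝ) ≤ ∑ k ∈ Finset.range N, |ε k| :=
      Finset.sum_nonneg fun k _ => abs_nonneg _
    linarith
  · have : |ε n| ≤ ∑ k ∈ Finset.range N, |ε k| :=
      Finset.single_le_sum (fun k _ => abs_nonneg (ε k)) (Finset.mem_range.mpr h)
    linarith

lemma summable_aux (b : ℕ) (hb : 2 ≤ b) (a : ℕ → ℝ) (C : ℝ)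
    (hC : ∀ j, |a j| ≤ C) (e : ℕ) :
    Summable fun j => a j / (b : ℝ) ^ (j + e) := by
  have hb1 : (1:ℝ) < b := by exact_mod_cast (by omega : 1 < b)
  have hb0 : (0:ℝ) < b := by linarith
  have hinv0 : (0:ℝ) ≤ (b:ℝ)⁻¹ := by positivity
  have hinv1 : (b:ℝ)⁻¹ < 1 := by
    rw [inv_lt_one_iff₀]; right; exact hb1
  have hgeo : Summable fun j : ℕ => (C * ((b:ℝ)⁻¹) ^ e) * ((b:ℝ)⁻¹) ^ j :=
    (summable_geometric_of_lt_one hinv0 hinv1).mul_left _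
  refine Summable.of_norm_bounded hgeo fun j => ?_
  have hpow : (0:ℝ) < (b:ℝ) ^ (j + e) := by positivity
  rw [Real.norm_eq_abs, abs_div, abs_of_pos hpow]
  rw [div_le_iff₀ hpow]
  have : (C * ((b:ℝ)⁻¹) ^ e) * ((b:ℝ)⁻¹) ^ j * (b:ℝ) ^ (j + e) = C := by
    rw [pow_add]
    field_simp
    have hbj : (b:ℝ)^j ≠ 0 := by positivity
    have hbe : (b:ℝ)^e ≠ 0 := by positivity
    rw [one_div, inv_pow, inv_pow]
    calc C * ((b:ℝ)^e)⁻¹ * ((b:ℝ)^j)⁻¹ * (b:ℝ)^j * (b:ℝ)^e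
        = C * (((b:ℝ)^j)⁻¹ * (b:ℝ)^j) * (((b:ℝ)^e)⁻¹ * (b:ℝ)^e) := by ring
      _ = C := by rw [inv_mul_cancel₀ hbj, inv_mul_cancel₀ hbe]; ring
  rw [this]
  exact hC j

lemma half_geo_sum : ∑' j : ℕ, ((1:ℝ)/2) ^ (j + 1) = 1 := by
  have h : ∀ j : ℕ, ((1:ℝ)/2)^(j+1) = (1/2) * (1/2)^j := fun j => by rw [pow_succ]; ring
  rw [tsum_congr h, tsum_mul_left, tsum_geometric_of_lt_one (by norm_num) (by norm_num)]
  norm_num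


end Stmt7Aux

/-- Let `b ≥ 2` be an integer and `(ε_n)_{n≥1}` real numbers with `ε_n → 0`.
Set `θ = Σ_{n=1}^∞ ε_n b^{-n}` and define the perturbed orbit by `y_0 = 0`,
`y_{n+1} = fract (b·y_n + ε_{n+1})`. Then `θ` is rational if and only if the set of
cluster points of the sequence `(y_n)_{n≥1}` in `ℝ` is finite. -/
theorem stmt_7 (b : ℕ) (hb : 2 ≤ b) (ε : ℕ → ℝ)
    (hε : Filter.Tendsto ε Filter.atTop (nhds 0))
    (θ : ℝ) (hθ : θ = ∑' n : ℕ, ε (n + 1) / (b : ℝ) ^ (n + 1))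
    (y : ℕ → ℝ) (hy0 : y 0 = 0)
    (hy : ∀ n : ℕ, y (n + 1) = Int.fract ((b : ℝ) * y n + ε (n + 1))) :
    (∃ r : ℚ, θ = (r : ℝ)) ↔
      {x : ℝ | MapClusterPt x Filter.atTop (fun n : ℕ => y (n + 1))}.Finite := by
  classical
  have hb1 : (1:ℝ) < b := by exact_mod_cast (by omega : 1 < b)
  have hb0 : (0:ℝ) < b := by linarith
  have hbne : (b:ℝ) ≠ 0 := ne_of_gt hb0
  obtain ⟨Cb, hCb0, hCb⟩ := Stmt7Aux.eps_bounded ε hε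
  set R : ℕ → ℝ := fun n => ∑' j : ℕ, ε (n + 1 + j) / (b : ℝ) ^ (j + 1) with hRdef
  have hsumR : ∀ n, Summable fun j : ℕ => ε (n + 1 + j) / (b : ℝ) ^ (j + 1) :=
    fun n => Stmt7Aux.summable_aux b hb _ Cb (fun j => hCb _) 1
  have hsumR0 : ∀ n, Summable fun j : ℕ => ε (n + 1 + j) / (b : ℝ) ^ j := by
    intro n
    have := Stmt7Aux.summable_aux b hb (fun j => ε (n+1+j)) Cb (fun j => hCb _) 0
    simpa using this
  have hRrec : ∀ n, (b:ℝ) * R n = ε (n+1) + R (n+1) := by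
    intro n
    calc (b:ℝ) * ∑' j : ℕ, ε (n+1+j) / (b:ℝ)^(j+1)
        = ∑' j : ℕ, (b:ℝ) * (ε (n+1+j) / (b:ℝ)^(j+1)) := (tsum_mul_left).symm
      _ = ∑' j : ℕ, ε (n+1+j) / (b:ℝ)^j := by
          refine tsum_congr fun j => ?_
          rw [pow_succ]
          field_simp
      _ = ε (n+1+0) / (b:ℝ)^0 + ∑' j : ℕ, ε (n+1+(j+1)) / (b:ℝ)^(j+1) :=
          (hsumR0 n).tsum_eq_zero_add
      _ = ε (n+1) + R (n+1) := by
          rw [show n+1+0 = n+1 by omega, pow_zero, div_one]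
          congr 1
          exact tsum_congr fun j => by rw [show n+1+(j+1) = (n+1)+1+j by omega]
  have hR0 : Tendsto R atTop (nhds 0) := by
    rw [Metric.tendsto_atTop]
    intro η hη
    have hev : ∀ᶠ k in atTop, |ε k| < η/2 := by
      have := Metric.tendsto_nhds.mp hε (η/2) (by linarith)
      filter_upwards [this] with k hk
      simpa [Real.dist_eq] using hk
    obtain ⟨N, hN⟩ := eventually_atTop.mp hev
    refine ⟨N, fun n hn => ?_⟩
    rw [Real.dist_eq, sub_zero]
    have habs : |R n| ≤ ∑' j : ℕ, |ε (n+1+j) / (b:ℝ)^(j+1)| := by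
      have := norm_tsum_le_tsum_norm (f := fun j : ℕ => ε (n+1+j) / (b:ℝ)^(j+1))
        (by simpa only [Real.norm_eq_abs] using (hsumR n).abs)
      simpa only [Real.norm_eq_abs] using this
    have hterm : ∀ j : ℕ, |ε (n+1+j) / (b:ℝ)^(j+1)| ≤ (η/2) * ((1:ℝ)/2)^(j+1) := by
      intro j
      rw [abs_div, abs_of_pos (show (0:ℝ) < (b:ℝ)^(j+1) by positivity)]
      have h1 : |ε (n+1+j)| ≤ η/2 := le_of_lt (hN _ (by omega))
      have h2 : (2:ℝ)^(j+1) ≤ (b:ℝ)^(j+1) :=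
        pow_le_pow_left₀ (by norm_num) (by exact_mod_cast hb) _
      have h3 : |ε (n+1+j)| / (b:ℝ)^(j+1) ≤ (η/2) / (2:ℝ)^(j+1) :=
        div_le_div₀ (by linarith) h1 (by positivity) h2
      have h4 : (η/2) / (2:ℝ)^(j+1) = (η/2) * ((1:ℝ)/2)^(j+1) := by
        rw [div_pow, one_pow, div_eq_mul_inv, div_eq_mul_inv, inv_eq_one_div]
        norm_num
      linarith [h3, le_of_eq h4]
    have hsumhalf : Summable fun j : ℕ => ((1:ℝ)/2)^(j+1) := by
      have := (summable_geometric_of_lt_one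
        (by norm_num : (0:ℝ) ≤ 1/2) (by norm_num)).mul_left ((1:ℝ)/2)
      refine this.congr fun j => ?_
      rw [pow_succ]; ring
    have hle : ∑' j : ℕ, |ε (n+1+j)/(b:ℝ)^(j+1)| ≤ ∑' j : ℕ, (η/2) * ((1:ℝ)/2)^(j+1) :=
      Summable.tsum_le_tsum hterm (hsumR n).abs (hsumhalf.mul_left _)
    have hval : ∑' j : ℕ, (η/2) * ((1:ℝ)/2)^(j+1) = η/2 := by
      rw [tsum_mul_left, Stmt7Aux.half_geo_sum, mul_one]
    rw [hval] at hle
    linarith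
  set S : ℕ → ℝ := fun n => Nat.rec 0 (fun k Sk => (b:ℝ) * Sk + ε (k+1)) n with hSdef
  have hS0 : S 0 = 0 := rfl
  have hSsucc : ∀ n, S (n+1) = (b:ℝ) * S n + ε (n+1) := fun n => rfl
  have hfractmul : ∀ t e : ℝ,
      Int.fract ((b:ℝ) * Int.fract t + e) = Int.fract ((b:ℝ) * t + e) := by
    intro t e
    have h : (b:ℝ) * Int.fract t + e = ((b:ℝ) * t + e) - (((b:ℕ) * ⌊t⌋ : ℤ) : ℝ) := by
      rw [Int.fract]
      push_cast
      ring
    rw [h, Int.fract_sub_intCast]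
  have hyS : ∀ n, y n = Int.fract (S n) := by
    intro n
    induction n with
    | zero => rw [hy0, hS0, Int.fract_zero]
    | succ n ih => rw [hy n, ih, hfractmul, ← hSsucc]
  have hxS : ∀ n, (b:ℝ)^n * θ = S n + R n := by
    intro n
    induction n with
    | zero =>
      rw [pow_zero, one_mul, hS0, zero_add, hθ]
      exact tsum_congr fun j => by rw [show 0+1+j = j+1 by omega]
    | succ n ih =>
      have h := hRrec n
      calc (b:ℝ)^(n+1) * θ = (b:ℝ) * ((b:ℝ)^n * θ) := by ring
        _ = (b:ℝ) * (S n + R n) := by rw [ih]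
        _ = ((b:ℝ) * S n + ε (n+1)) + R (n+1) := by rw [mul_add]; linarith
        _ = S (n+1) + R (n+1) := by rw [← hSsucc]
  set w : ℕ → ℝ := fun n => y (n+1) with hwdef
  set z : ℕ → ℝ := fun n => Int.fract ((b:ℝ)^(n+1) * θ) with hzdef
  have hw01 : ∀ n, w n ∈ Icc (0:ℝ) 1 := by
    intro n
    have : w n = Int.fract ((b:ℝ) * y n + ε (n+1)) := hy n
    rw [this]
    exact ⟨Int.fract_nonneg _, (Int.fract_lt_one _).le⟩
  have hz01 : ∀ n, z n ∈ Icc (0:ℝ) 1 :=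
    fun n => ⟨Int.fract_nonneg _, (Int.fract_lt_one _).le⟩
  have hzrec : ∀ n, z (n+1) = Int.fract ((b:ℝ) * z n) := by
    intro n
    have h := hfractmul ((b:ℝ)^(n+1) * θ) 0
    simp only [add_zero] at h
    show Int.fract ((b:ℝ)^(n+1+1) * θ) = _
    rw [show (b:ℝ)^(n+1+1) * θ = (b:ℝ) * ((b:ℝ)^(n+1) * θ) by ring]
    exact h.symm
  have hm : ∀ n, ∃ m : ℤ, w n - z n + R (n+1) = m := by
    intro n
    refine ⟨⌊S (n+1) + R (n+1)⌋ - ⌊S (n+1)⌋, ?_⟩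
    have h1 : w n = S (n+1) - (⌊S (n+1)⌋ : ℝ) := by
      show y (n+1) = _
      rw [hyS (n+1)]
      exact (Int.self_sub_floor _).symm
    have h2 : z n = (S (n+1) + R (n+1)) - (⌊S (n+1) + R (n+1)⌋ : ℝ) := by
      show Int.fract ((b:ℝ)^(n+1) * θ) = _
      rw [hxS (n+1)]
      exact (Int.self_sub_floor _).symm
    rw [h1, h2]
    push_cast
    ring
  have hd1wz : ∀ n, Stmt7Aux.d1 (z n - w n) ≤ |R (n+1)| := by
    intro n
    obtain ⟨m, hm'⟩ := hm n
    have h : z n - w n = R (n+1) - m := by linarith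
    rw [h, Stmt7Aux.d1_sub_int]
    exact Stmt7Aux.d1_le_abs _
  have hR1 : Tendsto (fun n => R (n+1)) atTop (nhds 0) :=
    hR0.comp (tendsto_add_atTop_nat 1)
  constructor
  · -- forward
    rintro ⟨r, hr⟩
    have hq0 : (0:ℝ) < (r.den:ℝ) := by exact_mod_cast r.pos
    have hqne : (r.den:ℝ) ≠ 0 := ne_of_gt hq0
    have hrq : (r:ℝ) * (r.den:ℝ) = (r.num:ℝ) := by
      rw [Rat.cast_def]
      field_simp
    have hzval : ∀ n, ∃ j : ℤ, 0 ≤ j ∧ j ≤ (r.den:ℤ) ∧ z n = (j:ℝ) / (r.den:ℝ) := by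
      intro n
      have hzn : z n = (b:ℝ)^(n+1)*θ - (⌊(b:ℝ)^(n+1)*θ⌋ : ℝ) := (Int.self_sub_floor _).symm
      have htq : ((b:ℝ)^(n+1)*θ) * (r.den:ℝ) = (((b:ℤ)^(n+1) * r.num : ℤ) : ℝ) := by
        rw [hr]
        push_cast
        rw [mul_assoc, hrq]
      refine ⟨(b:ℤ)^(n+1) * r.num - ⌊(b:ℝ)^(n+1)*θ⌋ * (r.den:ℤ), ?_, ?_, ?_⟩
      · have : (((b:ℤ)^(n+1) * r.num - ⌊(b:ℝ)^(n+1)*θ⌋ * (r.den:ℤ) : ℤ) : ℝ)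
            = z n * (r.den:ℝ) := by
          push_cast
          push_cast at htq
          rw [hzn]
          ring_nf
          ring_nf at htq
          linarith
        have h0 : (0:ℝ) ≤ z n * (r.den:ℝ) :=
          mul_nonneg (hz01 n).1 hq0.le
        rw [← this] at h0
        exact_mod_cast h0
      · have : (((b:ℤ)^(n+1) * r.num - ⌊(b:ℝ)^(n+1)*θ⌋ * (r.den:ℤ) : ℤ) : ℝ)
            = z n * (r.den:ℝ) := by
          push_cast
          push_cast at htq
          rw [hzn]
          ring_nf
          ring_nf at htq
          linarith
        have h0 : z n * (r.den:ℝ) ≤ (r.den:ℝ) := by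
          have := (hz01 n).2
          nlinarith
        rw [← this] at h0
        exact_mod_cast h0
      · have : (((b:ℤ)^(n+1) * r.num - ⌊(b:ℝ)^(n+1)*θ⌋ * (r.den:ℤ) : ℤ) : ℝ)
            = z n * (r.den:ℝ) := by
          push_cast
          push_cast at htq
          rw [hzn]
          ring_nf
          ring_nf at htq
          linarith
        rw [this]
        field_simp
    set G : Set ℝ := (fun p : ℤ × ℤ => (p.1:ℝ)/(r.den:ℝ) + (p.2:ℝ)) ''
      (Icc 0 (r.den:ℤ) ×ˢ Icc (-2:ℤ) 2) with hG
    have hGfin : G.Finite := ((finite_Icc _ _).prod (finite_Icc _ _)).image _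
    set v : ℕ → ℝ := fun n => w n + R (n+1) with hv
    have hev : ∀ᶠ n in atTop, |R (n+1)| < 1 := by
      have := Metric.tendsto_nhds.mp hR1 1 one_pos
      filter_upwards [this] with n hn
      simpa [Real.dist_eq] using hn
    have hvG : ∀ᶠ n in atTop, v n ∈ G := by
      filter_upwards [hev] with n hn
      obtain ⟨m, hm'⟩ := hm n
      obtain ⟨j, hj0, hjq, hjz⟩ := hzval n
      refine ⟨(j, m), ?_, ?_⟩
      · rw [Set.mem_prod]
        refine ⟨Set.mem_Icc.mpr ⟨hj0, hjq⟩, Set.mem_Icc.mpr ⟨?_, ?_⟩⟩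
        · have h1 : -2 < (m:ℝ) := by
            have hw := hw01 n
            have hz := hz01 n
            simp only [Set.mem_Icc] at hw hz
            have habs := abs_lt.mp hn
            linarith [hm']
          have : (-2:ℤ) < m := by exact_mod_cast h1
          omega
        · have h1 : (m:ℝ) < 2 := by
            have hw := hw01 n
            have hz := hz01 n
            simp only [Set.mem_Icc] at hw hz
            have habs := abs_lt.mp hn
            linarith [hm']
          have : m < (2:ℤ) := by exact_mod_cast h1
          omega
      · show (j:ℝ)/(r.den:ℝ) + (m:ℝ) = v n
        rw [← hjz, hv]
        simp only
        linarith [hm']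
    have h0 : Tendsto (fun n => w n - v n) atTop (nhds 0) := by
      have he : (fun n => w n - v n) = fun n => -(R (n+1)) := funext fun n => by
        rw [hv]; ring
      rw [he]
      simpa using hR1.neg
    exact hGfin.subset (Stmt7Aux.clusterset_subset w v G hGfin hvG h0)

  · -- reverse
    intro hfin
    set C : Set ℝ := {x | MapClusterPt x atTop w} with hCdef
    obtain ⟨c0, hc0⟩ := Stmt7Aux.cluster_nonempty w hw01
    have hCne : (hfin.toFinset).Nonempty := ⟨c0, hfin.mem_toFinset.mpr hc0⟩
    have hinv : ∀ c ∈ C, ∃ c' ∈ C, ∃ m : ℤ, (b:ℝ) * c = c' + m := by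
      intro c hc
      by_contra hcon
      push_neg at hcon
      have hne0 : ∀ c' ∈ C, Stmt7Aux.d1 ((b:ℝ)*c - c') ≠ 0 := by
        intro c' hc' h0
        obtain ⟨m, hm'⟩ := Stmt7Aux.d1_eq_zero_iff.mp h0
        exact hcon c' hc' m (by linarith)
      set D := hfin.toFinset.image (fun c' => Stmt7Aux.d1 ((b:ℝ)*c - c')) with hD
      have hDne : D.Nonempty := hCne.image _
      set η := D.min' hDne with hη
      have hηpos : 0 < η := by
        obtain ⟨c', hc', he⟩ := Finset.mem_image.mp (D.min'_mem hDne)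
        have h1 := hne0 c' (hfin.mem_toFinset.mp hc')
        have h2 := Stmt7Aux.d1_nonneg ((b:ℝ)*c - c')
        have : η = Stmt7Aux.d1 ((b:ℝ)*c - c') := by rw [hη, ← he]
        rw [this]
        exact lt_of_le_of_ne h2 (Ne.symm h1)
      have hηle : ∀ c' ∈ C, η ≤ Stmt7Aux.d1 ((b:ℝ)*c - c') := fun c' hc' =>
        D.min'_le _ (Finset.mem_image_of_mem _ (hfin.mem_toFinset.mpr hc'))
      have E1 : ∀ᶠ n in atTop, |ε (n+2)| < η/4 := by
        have h1 := Metric.tendsto_nhds.mp hε (η/4) (by linarith)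
        have h2 := (tendsto_add_atTop_nat 2).eventually h1
        filter_upwards [h2] with n hn
        simpa [Real.dist_eq] using hn
      have E2 : ∀ᶠ n in atTop,
          ∃ c'', MapClusterPt c'' atTop w ∧ |w (n+1) - c''| < η/4 := by
        have h1 := Stmt7Aux.cluster_approach w hw01 hfin (show (0:ℝ) < η/4 by linarith)
        exact (tendsto_add_atTop_nat 1).eventually h1
      have F : ∃ᶠ n in atTop, |w n - c| < η/(4*(b:ℝ)) := by
        have hpos : 0 < η/(4*(b:ℝ)) := by positivity
        have h1 := mapClusterPt_iff_frequently.mp hc (Metric.ball c (η/(4*(b:ℝ))))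
          (Metric.ball_mem_nhds _ hpos)
        exact h1.mono fun n hn => by simpa [Real.dist_eq] using hn
      obtain ⟨n, hF, hE1, c'', hc''C, hc''near⟩ := (F.and_eventually (E1.and E2)).exists
      have hwn1 : w (n+1) = Int.fract ((b:ℝ) * w n + ε (n+2)) := hy (n+1)
      obtain ⟨M, hM⟩ : ∃ M : ℤ, (b:ℝ)*w n + ε (n+2) - w (n+1) = M := by
        refine ⟨⌊(b:ℝ)*w n + ε (n+2)⌋, ?_⟩
        rw [hwn1, ← Int.self_sub_floor]
        ring
      have hkey : Stmt7Aux.d1 ((b:ℝ)*c - c'') < η := by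
        have hsplit : (b:ℝ)*c - c'' =
            ((((b:ℝ)*c - (b:ℝ)*w n - ε (n+2)) + (w (n+1) - c''))) + M := by
          rw [← hM]; ring
        rw [hsplit, Stmt7Aux.d1_add_int]
        have t1 := Stmt7Aux.d1_triangle ((b:ℝ)*c - (b:ℝ)*w n - ε (n+2)) (w (n+1) - c'')
        have t2 := Stmt7Aux.d1_le_abs ((b:ℝ)*c - (b:ℝ)*w n - ε (n+2))
        have t3 := Stmt7Aux.d1_le_abs (w (n+1) - c'')
        have t4 : |(b:ℝ)*c - (b:ℝ)*w n - ε (n+2)| ≤ (b:ℝ) * |c - w n| + |ε (n+2)| := by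
          have := abs_sub ((b:ℝ)*c - (b:ℝ)*w n) (ε (n+2))
          have h5 : |(b:ℝ)*c - (b:ℝ)*w n| = (b:ℝ) * |c - w n| := by
            rw [show (b:ℝ)*c - (b:ℝ)*w n = (b:ℝ)*(c - w n) by ring, abs_mul,
              abs_of_pos hb0]
          calc |(b:ℝ)*c - (b:ℝ)*w n - ε (n+2)|
              ≤ |(b:ℝ)*c - (b:ℝ)*w n| + |ε (n+2)| := abs_sub _ _
            _ = (b:ℝ) * |c - w n| + |ε (n+2)| := by rw [h5]
        have t5 : (b:ℝ) * |c - w n| < η/4 := by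
          have h6 : |c - w n| < η/(4*(b:ℝ)) := by rw [abs_sub_comm]; exact hF
          have := mul_lt_mul_of_pos_left h6 hb0
          calc (b:ℝ) * |c - w n| < (b:ℝ) * (η/(4*(b:ℝ))) := this
            _ = η/4 := by field_simp
        calc Stmt7Aux.d1 (((b:ℝ)*c - (b:ℝ)*w n - ε (n+2)) + (w (n+1) - c''))
            ≤ Stmt7Aux.d1 ((b:ℝ)*c - (b:ℝ)*w n - ε (n+2)) +
              Stmt7Aux.d1 (w (n+1) - c'') := t1
          _ ≤ ((b:ℝ) * |c - w n| + |ε (n+2)|) + |w (n+1) - c''| := by linarith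
          _ < η/4 + η/4 + η/4 := by linarith
          _ < η := by linarith
      exact absurd hkey (not_lt.mpr (hηle c'' hc''C))
    -- the gap g
    set P := (hfin.toFinset ×ˢ hfin.toFinset).filter
      (fun p : ℝ × ℝ => Stmt7Aux.d1 (p.1 - p.2) ≠ 0) with hP
    set Dg := insert (1:ℝ) (P.image (fun p : ℝ × ℝ => Stmt7Aux.d1 (p.1 - p.2))) with hDg
    have hDgne : Dg.Nonempty := ⟨1, Finset.mem_insert_self _ _⟩
    set g := Dg.min' hDgne with hgdef
    have hg1 : g ≤ 1 := Finset.min'_le _ _ (Finset.mem_insert_self _ _)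
    have hgpos : 0 < g := by
      have hmem := Dg.min'_mem hDgne
      rw [← hgdef] at hmem
      rcases Finset.mem_insert.mp hmem with h | h
      · rw [h]; norm_num
      · obtain ⟨p, hp, he⟩ := Finset.mem_image.mp h
        have h1 := (Finset.mem_filter.mp hp).2
        have h2 := Stmt7Aux.d1_nonneg (p.1 - p.2)
        rw [← he]
        exact lt_of_le_of_ne h2 (Ne.symm h1)
    have hgle : ∀ cc ∈ C, ∀ f ∈ C, Stmt7Aux.d1 (cc - f) ≠ 0 →
        g ≤ Stmt7Aux.d1 (cc - f) := by
      intro cc hcc f hf hne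
      refine Finset.min'_le _ _ ?_
      refine Finset.mem_insert_of_mem (Finset.mem_image.mpr ⟨(cc, f), ?_, rfl⟩)
      exact Finset.mem_filter.mpr
        ⟨Finset.mem_product.mpr ⟨hfin.mem_toFinset.mpr hcc, hfin.mem_toFinset.mpr hf⟩, hne⟩
    set δ := g / (2*(b:ℝ)) with hδdef
    have hδpos : 0 < δ := by positivity
    have hbδ : (b:ℝ) * δ = g/2 := by
      rw [hδdef]
      field_simp
    -- the distance function ρ
    have hρne : ∀ n : ℕ, (hfin.toFinset.image (fun cc => Stmt7Aux.d1 (z n - cc))).Nonempty :=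
      fun n => hCne.image _
    set ρ : ℕ → ℝ := fun n =>
      (hfin.toFinset.image (fun cc => Stmt7Aux.d1 (z n - cc))).min' (hρne n) with hρdef
    have hρmem : ∀ n, ∃ cc ∈ C, ρ n = Stmt7Aux.d1 (z n - cc) := by
      intro n
      obtain ⟨cc, hcc, he⟩ := Finset.mem_image.mp
        ((hfin.toFinset.image (fun cc => Stmt7Aux.d1 (z n - cc))).min'_mem (hρne n))
      exact ⟨cc, hfin.mem_toFinset.mp hcc, he.symm⟩
    have hρle : ∀ n, ∀ cc ∈ C, ρ n ≤ Stmt7Aux.d1 (z n - cc) := fun n cc hcc =>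
      Finset.min'_le _ _ (Finset.mem_image_of_mem _ (hfin.mem_toFinset.mpr hcc))
    have hρnn : ∀ n, 0 ≤ ρ n := by
      intro n
      obtain ⟨cc, _, he⟩ := hρmem n
      rw [he]
      exact Stmt7Aux.d1_nonneg _
    have hρsmall : ∀ η' : ℝ, 0 < η' → ∀ᶠ n in atTop, ρ n < η' := by
      intro η' hη'
      have Ea : ∀ᶠ n in atTop, |R (n+1)| < η'/2 := by
        have := Metric.tendsto_nhds.mp hR1 (η'/2) (by linarith)
        filter_upwards [this] with n hn
        simpa [Real.dist_eq] using hn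
      have Eb : ∀ᶠ n in atTop, ∃ c'', MapClusterPt c'' atTop w ∧ |w n - c''| < η'/2 :=
        Stmt7Aux.cluster_approach w hw01 hfin (by linarith)
      filter_upwards [Ea, Eb] with n ha hb'
      obtain ⟨c'', hc'', hnear⟩ := hb'
      have hch : z n - c'' = (z n - w n) + (w n - c'') := by ring
      calc ρ n ≤ Stmt7Aux.d1 (z n - c'') := hρle n c'' hc''
        _ ≤ Stmt7Aux.d1 (z n - w n) + Stmt7Aux.d1 (w n - c'') := by
            rw [hch]; exact Stmt7Aux.d1_triangle _ _
        _ ≤ |R (n+1)| + |w n - c''| := add_le_add (hd1wz n) (Stmt7Aux.d1_le_abs _)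
        _ < η' := by linarith
    have hexp : ∀ n, ρ n ≤ δ → (b:ℝ) * ρ n ≤ ρ (n+1) := by
      intro n hρδ
      obtain ⟨c, hcC, hce⟩ := hρmem n
      have hbρhalf : (b:ℝ) * ρ n ≤ 1/2 := by
        have h1 : (b:ℝ) * ρ n ≤ (b:ℝ) * δ := mul_le_mul_of_nonneg_left hρδ hb0.le
        rw [hbδ] at h1
        linarith
      have hscale : Stmt7Aux.d1 ((b:ℝ) * (z n - c)) = (b:ℝ) * ρ n := by
        rw [hce] at hbρhalf ⊢
        exact Stmt7Aux.d1_scale (by omega) hbρhalf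
      obtain ⟨c', hc'C, m, hbc⟩ := hinv c hcC
      obtain ⟨K, hK⟩ : ∃ K : ℤ, z (n+1) = (b:ℝ) * z n - K := by
        refine ⟨⌊(b:ℝ) * z n⌋, ?_⟩
        rw [hzrec n, ← Int.self_sub_floor]
      have hall : ∀ f ∈ C, (b:ℝ) * ρ n ≤ Stmt7Aux.d1 (z (n+1) - f) := by
        intro f hf
        have he1 : Stmt7Aux.d1 (z (n+1) - f) = Stmt7Aux.d1 ((b:ℝ) * z n - f) := by
          rw [hK, show (b:ℝ)*z n - (K:ℝ) - f = ((b:ℝ)*z n - f) - (K:ℝ) by ring,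
            Stmt7Aux.d1_sub_int]
        rw [he1]
        by_cases hcf : Stmt7Aux.d1 (c' - f) = 0
        · obtain ⟨m2, hm2⟩ := Stmt7Aux.d1_eq_zero_iff.mp hcf
          have hsp : (b:ℝ) * z n - f = ((b:ℝ)*(z n - c)) + ((m + m2 : ℤ) : ℝ) := by
            push_cast
            linarith [hbc, hm2]
          rw [hsp, Stmt7Aux.d1_add_int, hscale]
        · have hgle' := hgle c' hc'C f hf hcf
          have h1 : Stmt7Aux.d1 (c' - (b:ℝ)*z n) = (b:ℝ) * ρ n := by
            have hc'e : c' = (b:ℝ)*c - (m:ℝ) := by linarith [hbc]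
            rw [hc'e, show (b:ℝ)*c - (m:ℝ) - (b:ℝ)*z n
              = (-((b:ℝ)*(z n - c))) - (m:ℝ) by ring, Stmt7Aux.d1_sub_int,
              Stmt7Aux.d1_neg, hscale]
          have h2 : Stmt7Aux.d1 (c' - f) ≤
              Stmt7Aux.d1 (c' - (b:ℝ)*z n) + Stmt7Aux.d1 ((b:ℝ)*z n - f) := by
            rw [show c' - f = (c' - (b:ℝ)*z n) + ((b:ℝ)*z n - f) by ring]
            exact Stmt7Aux.d1_triangle _ _
          have h3 : (b:ℝ) * ρ n ≤ g/2 := by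
            have := mul_le_mul_of_nonneg_left hρδ hb0.le
            rw [hbδ] at this
            linarith
          linarith
      obtain ⟨cc, hccC, hcce⟩ := hρmem (n+1)
      rw [hcce]
      exact hall cc hccC
    obtain ⟨N, hN⟩ := eventually_atTop.mp (hρsmall δ hδpos)
    have hρN : ρ N = 0 := by
      by_contra hne
      have hpos : 0 < ρ N := lt_of_le_of_ne (hρnn N) (Ne.symm hne)
      have grow : ∀ k, (b:ℝ)^k * ρ N ≤ ρ (N + k) := by
        intro k
        induction k with
        | zero => simp
        | succ k ih =>
          have h1 : ρ (N+k) ≤ δ := (hN (N+k) (by omega)).le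
          have h2 := hexp (N+k) h1
          calc (b:ℝ)^(k+1) * ρ N = (b:ℝ) * ((b:ℝ)^k * ρ N) := by ring
            _ ≤ (b:ℝ) * ρ (N+k) := mul_le_mul_of_nonneg_left ih hb0.le
            _ ≤ ρ (N+k+1) := h2
      obtain ⟨k, hk⟩ := pow_unbounded_of_one_lt (δ / ρ N) hb1
      have h1 := grow k
      have h2 : ρ (N+k) < δ := hN (N+k) (by omega)
      have h3 : δ < (b:ℝ)^k * ρ N := by
        rw [div_lt_iff₀ hpos] at hk
        linarith
      linarith
    obtain ⟨c, hcC, hce⟩ := hρmem N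
    obtain ⟨mz, hmz⟩ := Stmt7Aux.d1_eq_zero_iff.mp (by rw [← hce]; exact hρN)
    obtain ⟨r, hcr⟩ := Stmt7Aux.rat_of_orbit b hb C hfin hinv c hcC
    have hzNe : z N = (b:ℝ)^(N+1)*θ - (⌊(b:ℝ)^(N+1)*θ⌋ : ℝ) := (Int.self_sub_floor _).symm
    refine ⟨(((⌊(b:ℝ)^(N+1)*θ⌋ + mz : ℤ) : ℚ) + r) / (b:ℚ)^(N+1), ?_⟩
    have hkey : (b:ℝ)^(N+1)*θ = ((⌊(b:ℝ)^(N+1)*θ⌋ : ℝ) + (mz:ℝ)) + (r:ℝ) := by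
      rw [← hcr]
      linarith [hmz, hzNe]
    have hbne' : ((b:ℚ)^(N+1) : ℚ) ≠ 0 := by positivity
    rw [Rat.cast_div]
    push_cast
    rw [eq_div_iff (by positivity : ((b:ℝ))^(N+1) ≠ 0)]
    linear_combination hkey
end

section
/- Let b ≥ 2 be an integer and let (ε_n)_{n≥1} be real numbers with ε_n → 0, and suppose θ = Σ_{n=1}^∞ ε_n b^{−n} is rational. Define the perturbed orbit by y_0 = 0, y_{n+1} = fract(b·y_n + ε_{n+1}). Then there exist p ≥ 1 and points z_0, …, z_{p−1} ∈ [0,1) forming a periodic orbit of the b-transformation, i.e. fract(b·z_k) = z_{k+1 mod p} for 0 ≤ k ≤ p−1, such that for each j ∈ {0,…,p−1}, along the subsequence of indices n ≡ j (mod p) the distance in the circle ℝ/ℤ between y_n and z_j tends to 0. -/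
open Filter


private lemma circle_eq_of_int (x y : ℝ) (c : ℤ) (h : x - y = c) :
    ((x : ℝ) : AddCircle (1:ℝ)) = ((y : ℝ) : AddCircle (1:ℝ)) := by
  have h0 : (x : AddCircle (1:ℝ)) - (y : AddCircle (1:ℝ)) = 0 := by
    show ((x - y : ℝ) : AddCircle (1:ℝ)) = 0
    rw [h, AddCircle.coe_eq_zero_iff]
    exact ⟨c, by simp⟩
  exact sub_eq_zero.mp h0

private lemma circle_dist_le (u v : ℝ) :
    dist ((u : ℝ) : AddCircle (1:ℝ)) ((v : ℝ) : AddCircle (1:ℝ)) ≤ |u - v| := by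
  rw [dist_eq_norm]
  have h : ((u:ℝ) : AddCircle (1:ℝ)) - ((v:ℝ) : AddCircle (1:ℝ))
      = ((u - v : ℝ) : AddCircle (1:ℝ)) := rfl
  rw [h]
  simpa using QuotientAddGroup.norm_mk_le_norm (S := AddSubgroup.zmultiples (1:ℝ)) (m := u - v)

private noncomputable def tail8 (b : ℕ) (ε : ℕ → ℝ) (n : ℕ) : ℝ :=
  ∑' k : ℕ, ε (n + k + 1) / (b:ℝ) ^ (k + 1)

section tail8

variable {b : ℕ} {ε : ℕ → ℝ} (hb : 2 ≤ b)
include hb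

private lemma hb1' : (1:ℝ) < (b:ℝ) := by exact_mod_cast Nat.lt_of_lt_of_le one_lt_two hb
private lemma hb0' : (0:ℝ) < (b:ℝ) := lt_trans one_pos (hb1' hb)

private lemma geo_sum (C : ℝ) : Summable (fun k : ℕ => C * ((b:ℝ)⁻¹) ^ (k + 1)) := by
  apply Summable.mul_left
  exact (summable_geometric_of_lt_one (by positivity)
    (inv_lt_one_of_one_lt₀ (hb1' hb))).comp_injective (add_left_injective 1)

private lemma tail8_summable (C : ℝ) (hC : ∀ n, |ε n| ≤ C) (n : ℕ) :
    Summable (fun k : ℕ => ε (n + k + 1) / (b:ℝ) ^ (k + 1)) := by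
  apply Summable.of_norm_bounded (geo_sum hb C)
  intro k
  rw [Real.norm_eq_abs, abs_div, abs_pow, abs_of_pos (hb0' hb), inv_pow, div_eq_mul_inv]
  exact mul_le_mul_of_nonneg_right (hC _) (by positivity)

private lemma tail8_rec (C : ℝ) (hC : ∀ n, |ε n| ≤ C) (n : ℕ) :
    (b:ℝ) * tail8 b ε n = ε (n + 1) + tail8 b ε (n + 1) := by
  have hbne : (b:ℝ) ≠ 0 := ne_of_gt (hb0' hb)
  have h1 : (b:ℝ) * tail8 b ε n = ∑' k : ℕ, ε (n + k + 1) / (b:ℝ) ^ k := by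
    rw [tail8, ← tsum_mul_left]
    exact tsum_congr fun k => by rw [pow_succ]; field_simp
  have hs : Summable (fun k : ℕ => ε (n + k + 1) / (b:ℝ) ^ k) := by
    have h2 := (tail8_summable hb C hC n).mul_left (b:ℝ)
    refine h2.congr fun k => ?_
    rw [pow_succ]; field_simp
  rw [h1, Summable.tsum_eq_zero_add hs]
  congr 1
  · norm_num
  · rw [tail8]
    exact tsum_congr fun k => by rw [show n + (k+1) + 1 = (n+1) + k + 1 by omega]

private lemma tail8_bound (C : ℝ) (hC : ∀ n, |ε n| ≤ C) (n : ℕ) (d : ℝ) (hd : 0 ≤ d)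
    (hm : ∀ m, n + 1 ≤ m → |ε m| ≤ d) : |tail8 b ε n| ≤ d := by
  have h1 : |tail8 b ε n| ≤ ∑' k : ℕ, d * ((b:ℝ)⁻¹) ^ (k + 1) := by
    rw [tail8]
    refine (norm_tsum_le_tsum_norm (tail8_summable hb C hC n).norm).trans ?_
    refine Summable.tsum_le_tsum ?_ (tail8_summable hb C hC n).norm (geo_sum hb d)
    intro k
    rw [Real.norm_eq_abs, abs_div, abs_pow, abs_of_pos (hb0' hb), inv_pow, div_eq_mul_inv]
    exact mul_le_mul_of_nonneg_right (hm _ (by omega)) (by positivity)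
  refine h1.trans ?_
  have hgeom : ∑' k : ℕ, ((b:ℝ)⁻¹) ^ k = (1 - (b:ℝ)⁻¹)⁻¹ :=
    tsum_geometric_of_lt_one (by positivity) (inv_lt_one_of_one_lt₀ (hb1' hb))
  have h2 : ∑' k : ℕ, d * ((b:ℝ)⁻¹) ^ (k + 1) = d * ((b:ℝ)⁻¹ * (1 - (b:ℝ)⁻¹)⁻¹) := by
    rw [← hgeom, ← tsum_mul_left, ← tsum_mul_left]
    exact tsum_congr fun k => by rw [pow_succ]; ring
  rw [h2]
  have hb2 : (2:ℝ) ≤ (b:ℝ) := by exact_mod_cast hb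
  have hinv2 : (b:ℝ)⁻¹ ≤ 2⁻¹ := by
    apply inv_anti₀ two_pos hb2
  have hpos : (0:ℝ) < 1 - (b:ℝ)⁻¹ := by
    have : (0:ℝ) < (b:ℝ)⁻¹ := by positivity
    linarith [hinv2]
  have h3 : (b:ℝ)⁻¹ * (1 - (b:ℝ)⁻¹)⁻¹ ≤ 1 := by
    rw [mul_comm, inv_mul_le_iff₀ hpos, mul_one]
    linarith
  nlinarith [inv_nonneg.mpr (le_of_lt (hb0' hb)), inv_nonneg.mpr hpos.le]

end tail8

/-- Let `b ≥ 2` be an integer, `(ε_n)_{n≥1}` real numbers with `ε_n → 0`,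
and suppose `θ = Σ_{n=1}^∞ ε_n b^{-n}` is rational. Define the perturbed orbit by
`y_0 = 0`, `y_{n+1} = fract (b·y_n + ε_{n+1})`. Then there exist `p ≥ 1` and points
`z_0, …, z_{p-1} ∈ [0,1)` forming a periodic orbit of the `b`-transformation, i.e.
`fract (b·z_k) = z_{(k+1) mod p}`, such that for each `j ∈ {0,…,p-1}`, along the
subsequence of indices `n ≡ j (mod p)` the distance in `ℝ/ℤ` between `y_n` and `z_j`
tends to `0`. -/
theorem stmt_8 (b : ℕ) (hb : 2 ≤ b) (ε : ℕ → ℝ)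
    (hε : Filter.Tendsto ε Filter.atTop (nhds 0))
    (θ : ℝ) (hθ : θ = ∑' n : ℕ, ε (n + 1) / (b : ℝ) ^ (n + 1))
    (hrat : ∃ r : ℚ, θ = (r : ℝ))
    (y : ℕ → ℝ) (hy0 : y 0 = 0)
    (hy : ∀ n : ℕ, y (n + 1) = Int.fract ((b : ℝ) * y n + ε (n + 1))) :
    ∃ p : ℕ, 1 ≤ p ∧ ∃ z : ℕ → ℝ,
      (∀ k < p, z k ∈ Set.Ico (0 : ℝ) 1) ∧
      (∀ k < p, Int.fract ((b : ℝ) * z k) = z ((k + 1) % p)) ∧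
      (∀ j < p, Filter.Tendsto
        (fun m : ℕ => dist ((y (m * p + j) : ℝ) : AddCircle (1 : ℝ))
          ((z j : ℝ) : AddCircle (1 : ℝ)))
        Filter.atTop (nhds 0)) := by
  obtain ⟨r, hr⟩ := hrat
  have habs : Tendsto (fun n => |ε n|) atTop (nhds 0) := by simpa using hε.abs
  obtain ⟨C, hC⟩ : ∃ C, ∀ n, |ε n| ≤ C := by
    obtain ⟨C, hC⟩ := habs.bddAbove_range
    exact ⟨C, fun n => hC ⟨n, rfl⟩⟩
  have ht0 : θ = tail8 b ε 0 := by
    rw [hθ, tail8]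
    exact tsum_congr fun k => by norm_num
  -- t → 0
  have ht_to0 : Tendsto (tail8 b ε) atTop (nhds 0) := by
    rw [Metric.tendsto_atTop]
    intro δ hδ
    rw [Metric.tendsto_atTop] at hε
    obtain ⟨N, hN⟩ := hε (δ/2) (by linarith)
    refine ⟨N, fun n hn => ?_⟩
    rw [Real.dist_eq, sub_zero]
    have h : |tail8 b ε n| ≤ δ/2 := by
      refine tail8_bound hb C hC n (δ/2) (by linarith) fun m hm => ?_
      have := hN m (by omega)
      rw [Real.dist_eq, sub_zero] at this
      linarith
    linarith
  -- invariant
  have hinv : ∀ n, ∃ c : ℤ, (b:ℝ)^n * θ - y n - tail8 b ε n = c := by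
    intro n
    induction n with
    | zero => exact ⟨0, by rw [hy0, ht0]; simp⟩
    | succ n ih =>
      obtain ⟨c, hc⟩ := ih
      refine ⟨b * c + ⌊(b:ℝ) * y n + ε (n+1)⌋, ?_⟩
      have h1 := tail8_rec hb C hC n
      rw [hy n, Int.fract]
      push_cast
      rw [pow_succ]
      linear_combination (b:ℝ) * hc + h1
  -- periodicity from rationality
  haveI : NeZero r.den := ⟨r.den_nz⟩
  obtain ⟨N, M, hNM, hfNM⟩ : ∃ N M : ℕ, N < M ∧
      ((b : ZMod r.den))^N * (r.num : ZMod r.den) = ((b : ZMod r.den))^M * (r.num : ZMod r.den) := by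
    obtain ⟨x, x', hne, heq⟩ := Finite.exists_ne_map_eq_of_infinite
      (fun n : ℕ => ((b : ZMod r.den))^n * (r.num : ZMod r.den))
    rcases lt_or_gt_of_ne hne with h | h
    · exact ⟨x, x', h, heq⟩
    · exact ⟨x', x, h, heq.symm⟩
  set p := M - N with hp_def
  have hp1 : 1 ≤ p := by omega
  have hMeq : M = N + p := by omega
  -- base period relation
  have hper : ∃ c : ℤ, (b:ℝ)^(N+p) * θ - (b:ℝ)^N * θ = c := by
    have hdvd : (r.den : ℤ) ∣ (b:ℤ)^M * r.num - (b:ℤ)^N * r.num := by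
      rw [← ZMod.intCast_zmod_eq_zero_iff_dvd]
      push_cast
      rw [hfNM]
      ring
    obtain ⟨c, hc⟩ := hdvd
    refine ⟨c, ?_⟩
    have hden : (r.den : ℝ) ≠ 0 := by
      exact_mod_cast r.den_nz
    have hcast : ((b:ℤ)^M * r.num - (b:ℤ)^N * r.num : ℤ) = ((r.den : ℤ) * c : ℤ) := hc
    have hcR : ((b:ℝ))^M * (r.num:ℝ) - ((b:ℝ))^N * (r.num:ℝ) = (r.den:ℝ) * (c:ℝ) := by
      exact_mod_cast congrArg (Int.cast : ℤ → ℝ) hcast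
    rw [hr, Rat.cast_def, ← hMeq]
    field_simp
    linarith [hcR]
  -- propagate: all n ≥ N
  have hper2 : ∀ n, N ≤ n → ∃ c : ℤ, (b:ℝ)^(n+p) * θ - (b:ℝ)^n * θ = c := by
    intro n hn
    obtain ⟨c, hc⟩ := hper
    obtain ⟨d, rfl⟩ := Nat.exists_eq_add_of_le hn
    refine ⟨(b:ℤ)^d * c, ?_⟩
    push_cast
    have : (b:ℝ)^(N + d + p) = (b:ℝ)^d * (b:ℝ)^(N+p) := by rw [← pow_add]; ring_nf
    rw [this, show (b:ℝ)^(N+d) = (b:ℝ)^d * (b:ℝ)^N by rw [← pow_add]; ring_nf]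
    linear_combination (b:ℝ)^d * hc
  have hper3 : ∀ n, N ≤ n → ∀ m : ℕ, ∃ c : ℤ, (b:ℝ)^(n + m * p) * θ - (b:ℝ)^n * θ = c := by
    intro n hn m
    induction m with
    | zero => exact ⟨0, by simp⟩
    | succ m ih =>
      obtain ⟨c, hc⟩ := ih
      obtain ⟨c', hc'⟩ := hper2 (n + m * p) (by omega)
      refine ⟨c + c', ?_⟩
      push_cast
      rw [show n + (m+1) * p = n + m * p + p by ring]
      linarith [hc, hc']
  -- the periodic points
  set N₀ := N * p with hN0_def
  have hN0 : N ≤ N₀ := Nat.le_mul_of_pos_right N hp1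
  refine ⟨p, hp1, fun j => Int.fract ((b:ℝ)^(N₀ + j) * θ), ?_, ?_, ?_⟩
  · exact fun k _ => ⟨Int.fract_nonneg _, Int.fract_lt_one _⟩
  · intro k hk
    have h1 : (b:ℝ) * Int.fract ((b:ℝ)^(N₀ + k) * θ)
        = (b:ℝ)^(N₀ + k + 1) * θ - ((b:ℤ) * ⌊(b:ℝ)^(N₀+k) * θ⌋ : ℤ) := by
      rw [Int.fract]
      push_cast
      rw [pow_succ]
      ring
    rw [h1, Int.fract_sub_intCast]
    rcases Nat.lt_or_ge (k + 1) p with h | h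
    · rw [Nat.mod_eq_of_lt h]
      ring_nf
    · have hkp : k + 1 = p := by omega
      rw [hkp, Nat.mod_self]
      rw [Int.fract_eq_fract]
      obtain ⟨c, hc⟩ := hper2 (N₀ + 0) (by omega)
      refine ⟨c, ?_⟩
      rw [show N₀ + k + 1 = N₀ + 0 + p by omega, show N₀ + 0 = N₀ from by omega] at *
      simpa using hc
  · intro j hj
    -- squeeze
    apply squeeze_zero' (Filter.Eventually.of_forall fun m => dist_nonneg)
      (g := fun m => |tail8 b ε (m * p + j)|)
    · rw [eventually_atTop]
      refine ⟨N, fun m hm => ?_⟩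
      -- y (m*p+j) ≡ b^(m*p+j) θ - t(m*p+j)  in the circle
      obtain ⟨c, hc⟩ := hinv (m * p + j)
      have e1 : ((y (m*p+j) : ℝ) : AddCircle (1:ℝ))
          = (((b:ℝ)^(m*p+j) * θ - tail8 b ε (m*p+j) : ℝ) : AddCircle (1:ℝ)) := by
        apply circle_eq_of_int _ _ (-c)
        push_cast
        linarith [hc]
      -- z j ≡ b^(N₀+j) θ ≡ b^(m*p+j) θ
      have e2 : ((Int.fract ((b:ℝ)^(N₀ + j) * θ) : ℝ) : AddCircle (1:ℝ))
          = (((b:ℝ)^(m*p+j) * θ : ℝ) : AddCircle (1:ℝ)) := by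
        obtain ⟨c', hc'⟩ := hper3 (N₀ + j) (by omega) (m - N)
        have hidx : N₀ + j + (m - N) * p = m * p + j := by
          rw [hN0_def]
          have : N * p + (m - N) * p = m * p := by
            rw [← Nat.add_mul]
            congr 1
            omega
          omega
        rw [hidx] at hc'
        apply circle_eq_of_int _ _ (-⌊(b:ℝ)^(N₀ + j) * θ⌋ - c')
        rw [Int.fract]
        push_cast
        linarith [hc']
      rw [e1, e2]
      calc dist (((b:ℝ)^(m*p+j) * θ - tail8 b ε (m*p+j) : ℝ) : AddCircle (1:ℝ))
            (((b:ℝ)^(m*p+j) * θ : ℝ) : AddCircle (1:ℝ))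
          ≤ |((b:ℝ)^(m*p+j) * θ - tail8 b ε (m*p+j)) - (b:ℝ)^(m*p+j) * θ| := circle_dist_le _ _
        _ = |tail8 b ε (m*p+j)| := by rw [show ((b:ℝ)^(m*p+j) * θ - tail8 b ε (m*p+j)) - (b:ℝ)^(m*p+j) * θ = -(tail8 b ε (m*p+j)) by ring, abs_neg]
    · have hcomp : Tendsto (fun m : ℕ => m * p + j) atTop atTop := by
        apply tendsto_atTop_atTop_of_monotone
        · intro a a' haa
          exact Nat.add_le_add_right (Nat.mul_le_mul_right p haa) j
        · intro x
          exact ⟨x, by nlinarith [hp1]⟩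
      have := (ht_to0.comp hcomp).abs
      simpa using this
end

section
/- Let b ≥ 2 be an integer, let p(x), q(x) ∈ ℤ[x] with deg p < deg q and q(n) ≠ 0 for all integers n ≥ 1, set ε_n = p(n)/q(n) and θ = Σ_{n=1}^∞ ε_n b^{−n}, and define y_0 = 0, y_{n+1} = fract(b·y_n + ε_{n+1}). If the sequence (y_n)_{n≥1} either has a finite set of cluster points or is dense in [0,1], then θ is rational or fract(θ) is digit-dense to base b. -/
open Filter Metric Set Topology

namespace Stmt9Aux

/-- subsequence from cluster point, metric (ℝ) version -/
lemma subseq_of_mapClusterPt {u : ℕ → ℝ} {x : ℝ} (h : MapClusterPt x atTop u) :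
    ∃ φ : ℕ → ℕ, StrictMono φ ∧ Tendsto (u ∘ φ) atTop (𝓝 x) := by
  have hfreq : ∀ n : ℕ, ∃ᶠ k in atTop, |u k - x| < 1 / (n + 1) := by
    intro n
    have hb : Metric.ball x (1 / (n + 1 : ℝ)) ∈ 𝓝 x :=
      Metric.ball_mem_nhds _ (by positivity)
    have := (mapClusterPt_iff_frequently.1 h) _ hb
    refine this.mono fun k hk => ?_
    simpa [Real.dist_eq] using hk
  obtain ⟨φ, hmono, hφ⟩ := Filter.extraction_forall_of_frequently hfreq
  refine ⟨φ, hmono, ?_⟩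
  rw [Metric.tendsto_atTop]
  intro δ hδ
  obtain ⟨N, hN⟩ := exists_nat_one_div_lt hδ
  refine ⟨N, fun n hn => ?_⟩
  have h1 : |u (φ n) - x| < 1 / (n + 1) := hφ n
  have h2 : (1 : ℝ) / (n + 1) ≤ 1 / (N + 1) := by
    apply one_div_le_one_div_of_le (by positivity)
    exact_mod_cast by omega
  calc dist (u (φ n)) x = |u (φ n) - x| := Real.dist_eq _ _
    _ < 1 / (n + 1) := h1
    _ ≤ 1 / (N + 1) := h2
    _ < δ := hN

lemma mapClusterPt_of_subseq {u : ℕ → ℝ} {x : ℝ} {φ : ℕ → ℕ} (hφ : StrictMono φ)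
    (h : Tendsto (u ∘ φ) atTop (𝓝 x)) : MapClusterPt x atTop u :=
  MapClusterPt.of_comp hφ.tendsto_atTop h.mapClusterPt



lemma sumV_nonneg {b : ℕ} {m : ℕ} (e : Fin m → ℕ) :
    0 ≤ ∑ i : Fin m, (e i : ℝ) / (b : ℝ) ^ ((i : ℕ) + 1) := by
  apply Finset.sum_nonneg
  intro i _
  positivity

lemma sumV_le {b : ℕ} (hb : 2 ≤ b) :
    ∀ (m : ℕ) (e : Fin m → ℕ), (∀ i, e i < b) →
    (∑ i : Fin m, (e i : ℝ) / (b : ℝ) ^ ((i : ℕ) + 1)) ≤ 1 - (1 / (b : ℝ)) ^ m := by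
  have hb0 : (0 : ℝ) < b := by positivity
  intro m
  induction m with
  | zero => intro e he; simp
  | succ m ih =>
    intro e he
    rw [Fin.sum_univ_succ]
    have h1 : ∑ i : Fin m, (e i.succ : ℝ) / (b : ℝ) ^ ((i.succ : ℕ) + 1)
        = (∑ i : Fin m, (e i.succ : ℝ) / (b : ℝ) ^ ((i : ℕ) + 1)) / b := by
      rw [Finset.sum_div]
      apply Finset.sum_congr rfl
      intro i _
      rw [Fin.val_succ, div_div, pow_succ]
    rw [h1]
    have h2 := ih (fun i => e i.succ) (fun i => he i.succ)
    have h3 : (e 0 : ℝ) ≤ (b : ℝ) - 1 := by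
      have h := he 0
      have : ((e 0 : ℕ) : ℝ) + 1 ≤ (b : ℝ) := by exact_mod_cast h
      linarith
    simp only [Fin.val_zero, pow_one, zero_add]
    have key : (e 0 : ℝ) / b + (∑ i : Fin m, (e i.succ : ℝ) / (b : ℝ) ^ ((i : ℕ) + 1)) / b
        ≤ ((b : ℝ) - 1) / b + (1 - (1 / (b : ℝ)) ^ m) / b := by
      gcongr
    have hbne : (b : ℝ) ≠ 0 := ne_of_gt hb0
    refine key.trans_eq ?_
    rw [pow_succ, mul_one_div]
    have heq : ((b:ℝ)-1)/b + (1 - (1/(b:ℝ))^m)/b = ((b:ℝ) - (1/(b:ℝ))^m)/b := by ring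
    rw [heq, sub_div, div_self hbne]



lemma sumV_nonneg' {b : ℕ} {m : ℕ} (e : Fin m → ℕ) :
    0 ≤ ∑ i : Fin m, (e i : ℝ) / (b : ℝ) ^ ((i : ℕ) + 1) := by
  apply Finset.sum_nonneg; intro i _; positivity

lemma digit_key {b : ℕ} (hb : 2 ≤ b)
    (sumV_le : ∀ (m : ℕ) (e : Fin m → ℕ), (∀ i, e i < b) →
      (∑ i : Fin m, (e i : ℝ) / (b : ℝ) ^ ((i : ℕ) + 1)) ≤ 1 - (1 / (b : ℝ)) ^ m) :
    ∀ (m : ℕ) (e : Fin m → ℕ), (∀ i, e i < b) → ∀ x : ℝ,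
    (∑ i : Fin m, (e i : ℝ) / (b : ℝ) ^ ((i : ℕ) + 1)) ≤ x →
    x < (∑ i : Fin m, (e i : ℝ) / (b : ℝ) ^ ((i : ℕ) + 1)) + (1 / (b : ℝ)) ^ m →
    ∀ i : Fin m, ⌊(b : ℝ) * Int.fract ((b : ℝ) ^ (i : ℕ) * x)⌋ = (e i : ℤ) := by
  have hb0 : (0 : ℝ) < b := by positivity
  have hbne : (b : ℝ) ≠ 0 := ne_of_gt hb0
  intro m
  induction m with
  | zero => intro e he x h1 h2 i; exact i.elim0
  | succ m ih =>
    intro e he x h1 h2 i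
    -- decompose the sum
    have hsplit : (∑ i : Fin (m+1), (e i : ℝ) / (b : ℝ) ^ ((i : ℕ) + 1))
        = (e 0 : ℝ) / b + (∑ i : Fin m, (e i.succ : ℝ) / (b : ℝ) ^ ((i : ℕ) + 1)) / b := by
      rw [Fin.sum_univ_succ, Finset.sum_div]
      congr 1
      · simp
      · apply Finset.sum_congr rfl
        intro j _
        rw [Fin.val_succ, div_div, pow_succ]
    set V' : ℝ := ∑ i : Fin m, (e i.succ : ℝ) / (b : ℝ) ^ ((i : ℕ) + 1) with hV'
    have hV'0 : 0 ≤ V' := sumV_nonneg' _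
    have hV'le : V' ≤ 1 - (1 / (b : ℝ)) ^ m := sumV_le m (fun i => e i.succ) (fun i => he i.succ)
    rw [hsplit] at h1 h2
    -- x bounds
    have hx0 : 0 ≤ x := le_trans (by positivity) h1
    have hx1 : x < 1 := by
      have : (e 0 : ℝ) / b ≤ ((b:ℝ) - 1) / b := by
        gcongr
        have h := he 0
        have : ((e 0 : ℕ) : ℝ) + 1 ≤ (b : ℝ) := by exact_mod_cast h
        linarith
      have hp : (1/(b:ℝ))^(m+1) = (1/(b:ℝ))^m / b := by rw [pow_succ, mul_one_div]
      have hb1 : (1:ℝ) < b := by exact_mod_cast lt_of_lt_of_le one_lt_two (by exact_mod_cast hb)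
      have hPm : (0:ℝ) < (1/(b:ℝ))^m := by positivity
      rw [hp] at h2
      calc x < (e 0 : ℝ)/b + V'/b + (1/(b:ℝ))^m / b := h2
        _ ≤ ((b:ℝ)-1)/b + (1 - (1/(b:ℝ))^m)/b + (1/(b:ℝ))^m/b := by gcongr
        _ = 1 := by field_simp; ring
    -- base digit
    have hbx1 : (e 0 : ℝ) + V' ≤ (b:ℝ) * x := by
      have := mul_le_mul_of_nonneg_left h1 hb0.le
      calc (e 0 : ℝ) + V' = (b:ℝ) * ((e 0 : ℝ)/b + V'/b) := by field_simp
        _ ≤ (b:ℝ) * x := this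
    have hbx2 : (b:ℝ) * x < (e 0 : ℝ) + V' + (1/(b:ℝ))^m := by
      have := mul_lt_mul_of_pos_left h2 hb0
      calc (b:ℝ) * x < (b:ℝ) * ((e 0:ℝ)/b + V'/b + (1/(b:ℝ))^(m+1)) := this
        _ = (e 0 : ℝ) + V' + (1/(b:ℝ))^m := by
            rw [pow_succ, mul_one_div]
            field_simp
    have hfl : ⌊(b:ℝ) * x⌋ = (e 0 : ℤ) := by
      rw [Int.floor_eq_iff]
      constructor
      · push_cast
        linarith
      · push_cast
        have : V' + (1/(b:ℝ))^m ≤ 1 := by linarith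
        linarith
    have hfr : Int.fract ((b:ℝ) * x) = (b:ℝ) * x - (e 0 : ℝ) := by
      rw [Int.fract, hfl]
      push_cast
      ring
    -- case on i
    refine Fin.cases ?_ ?_ i
    · -- i = 0
      have h00 : ((0 : Fin (m+1)) : ℕ) = 0 := rfl
      rw [h00, pow_zero, one_mul, Int.fract_eq_self.mpr ⟨hx0, hx1⟩]
      exact hfl
    · -- i = j.succ
      intro j
      have hx' : Int.fract ((b:ℝ)*x) = (b:ℝ)*x - (e 0 : ℝ) := hfr
      set x' : ℝ := (b:ℝ)*x - (e 0 : ℝ) with hx'def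
      have h1' : V' ≤ x' := by rw [hx'def]; linarith
      have h2' : x' < V' + (1/(b:ℝ))^m := by rw [hx'def]; linarith
      have ihj := ih (fun i => e i.succ) (fun i => he i.succ) x' h1' h2' j
      have hfreq : Int.fract ((b:ℝ)^((j.succ : ℕ)) * x) = Int.fract ((b:ℝ)^(j:ℕ) * x') := by
        rw [Fin.val_succ]
        have : (b:ℝ)^((j:ℕ)+1) * x = (b:ℝ)^(j:ℕ) * x' + ((b:ℝ)^(j:ℕ) * (e 0 : ℕ)) := by
          rw [hx'def]; push_cast; ring
        rw [this]
        have hcast : ((b:ℝ)^(j:ℕ) * ((e 0 : ℕ):ℝ)) = (((b^(j:ℕ) * e 0 : ℕ) : ℤ) : ℝ) := by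
          push_cast; ring
        rw [hcast, Int.fract_add_intCast]
      rw [hfreq]
      exact ihj




lemma bounded_of_tendsto_zero {ε : ℕ → ℝ} (h : Tendsto ε atTop (𝓝 0)) :
    ∃ M : ℝ, ∀ n, |ε n| ≤ M := by
  have := Metric.tendsto_atTop.1 h 1 one_pos
  obtain ⟨N, hN⟩ := this
  refine ⟨1 + ∑ k ∈ Finset.range N, |ε k|, fun n => ?_⟩
  rcases le_or_gt N n with hn | hn
  · have := hN n hn
    rw [Real.dist_eq, sub_zero] at this
    have hs : 0 ≤ ∑ k ∈ Finset.range N, |ε k| :=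
      Finset.sum_nonneg fun k _ => abs_nonneg _
    linarith
  · have : |ε n| ≤ ∑ k ∈ Finset.range N, |ε k| :=
      Finset.single_le_sum (fun k _ => abs_nonneg (ε k)) (Finset.mem_range.2 hn)
    linarith

lemma summable_div_pow {b : ℕ} (hb : 2 ≤ b) {g : ℕ → ℝ} {M : ℝ} (hM : ∀ k, |g k| ≤ M) :
    Summable (fun k => g k / (b : ℝ) ^ (k + 1)) := by
  have hb1 : (1 : ℝ) < b := by exact_mod_cast lt_of_lt_of_le one_lt_two (by exact_mod_cast hb)
  have hb0 : (0 : ℝ) < b := by positivity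
  have hgeo : Summable (fun k : ℕ => M * (1 / (b:ℝ)) ^ (k+1)) := by
    apply Summable.mul_left
    exact ((summable_geometric_of_lt_one (by positivity) (by
      rw [div_lt_one hb0]; exact hb1)).comp_injective (add_left_injective 1)).congr
      (fun k => rfl) |>.congr (fun k => rfl)
  apply Summable.of_norm_bounded hgeo
  intro k
  have hM0 : (0:ℝ) ≤ M := le_trans (abs_nonneg _) (hM 0)
  have hrhs : M * (1/(b:ℝ))^(k+1) = M / (b:ℝ)^(k+1) := by
    rw [div_pow, one_pow]; ring
  rw [Real.norm_eq_abs, abs_div, abs_pow, abs_of_pos hb0, hrhs]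
  gcongr
  exact hM k


lemma pow_mul_theta {b : ℕ} (hb : 2 ≤ b) {ε : ℕ → ℝ}
    (hsum : Summable fun n : ℕ => ε (n + 1) / (b : ℝ) ^ (n + 1)) (n : ℕ) :
    (b : ℝ) ^ n * (∑' k : ℕ, ε (k + 1) / (b : ℝ) ^ (k + 1)) =
      (∑ k ∈ Finset.range n, ε (k + 1) * (b : ℝ) ^ (n - 1 - k)) +
        ∑' k : ℕ, ε (k + n + 1) / (b : ℝ) ^ (k + 1) := by
  have hb0 : (0 : ℝ) < b := by positivity
  have hbne : (b : ℝ) ≠ 0 := ne_of_gt hb0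
  rw [← Summable.sum_add_tsum_nat_add n hsum, mul_add, Finset.mul_sum]
  congr 1
  · apply Finset.sum_congr rfl
    intro i hi
    have hi' : i < n := Finset.mem_range.1 hi
    have hpow : (b:ℝ)^n = (b:ℝ)^(i+1) * (b:ℝ)^(n-1-i) := by
      rw [← pow_add]
      congr 1
      omega
    rw [hpow]
    field_simp
  · rw [← tsum_mul_left]
    apply tsum_congr
    intro k
    have hpow : (b:ℝ)^(k+n+1) = (b:ℝ)^(k+1) * (b:ℝ)^n := by
      rw [← pow_add]
      congr 1
      omega
    rw [hpow]
    field_simp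

lemma tail_tendsto_zero {b : ℕ} (hb : 2 ≤ b) {ε : ℕ → ℝ} (hε : Tendsto ε atTop (𝓝 0)) :
    Tendsto (fun n => ∑' k : ℕ, ε (k + n + 1) / (b : ℝ) ^ (k + 1)) atTop (𝓝 0) := by
  have hb1 : (1 : ℝ) < b := by exact_mod_cast lt_of_lt_of_le one_lt_two (by exact_mod_cast hb)
  have hb0 : (0 : ℝ) < b := by positivity
  have hgs : ∑' k : ℕ, (1 / (b:ℝ)) ^ (k + 1) ≤ 1 := by
    have h1 : ∑' k : ℕ, (1 / (b:ℝ)) ^ (k + 1) = (1/(b:ℝ)) * ∑' k : ℕ, (1 / (b:ℝ)) ^ k := by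
      rw [← tsum_mul_left]
      apply tsum_congr
      intro k
      rw [pow_succ]
      ring
    rw [h1, tsum_geometric_of_lt_one (by positivity) (by rw [div_lt_one hb0]; exact hb1)]
    have hb2 : (2:ℝ) ≤ (b:ℝ) := by exact_mod_cast hb
    have hbm0 : ((b:ℝ) - 1) ≠ 0 := by linarith
    have hx : (1/(b:ℝ)) * ((1:ℝ) - 1/(b:ℝ))⁻¹ = 1 / ((b:ℝ) - 1) := by
      rw [eq_div_iff hbm0]
      field_simp
    rw [hx, div_le_one (by linarith : (0:ℝ) < (b:ℝ) - 1)]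
    linarith
  rw [Metric.tendsto_atTop]
  intro δ hδ
  obtain ⟨N, hN⟩ := Metric.tendsto_atTop.1 hε (δ/2) (by linarith)
  refine ⟨N, fun n hn => ?_⟩
  have habs : ∀ k : ℕ, |ε (k + n + 1)| ≤ δ/2 := by
    intro k
    have := hN (k + n + 1) (by omega)
    rw [Real.dist_eq, sub_zero] at this
    linarith
  have hsum1 : Summable (fun k => ε (k + n + 1) / (b:ℝ)^(k+1)) :=
    summable_div_pow hb habs
  have hsum2 : Summable (fun k : ℕ => (δ/2) * (1/(b:ℝ))^(k+1)) := by
    apply Summable.mul_left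
    exact (summable_geometric_of_lt_one (by positivity)
      (by rw [div_lt_one hb0]; exact hb1)).comp_injective (add_left_injective 1)
  have hsumabs : Summable (fun k => ‖ε (k + n + 1) / (b:ℝ)^(k+1)‖) := by
    apply Summable.of_nonneg_of_le (fun k => norm_nonneg _) _ hsum2
    intro k
    rw [Real.norm_eq_abs, abs_div, abs_pow, abs_of_pos hb0]
    have hrhs : (δ/2) * (1/(b:ℝ))^(k+1) = (δ/2) / (b:ℝ)^(k+1) := by
      rw [div_pow, one_pow]; ring
    rw [hrhs]
    gcongr
    exact habs k
  rw [Real.dist_eq, sub_zero]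
  calc |∑' k : ℕ, ε (k + n + 1) / (b : ℝ) ^ (k + 1)|
      ≤ ∑' k : ℕ, ‖ε (k + n + 1) / (b : ℝ) ^ (k + 1)‖ := by
        rw [← Real.norm_eq_abs]
        exact norm_tsum_le_tsum_norm hsumabs
    _ ≤ ∑' k : ℕ, (δ/2) * (1/(b:ℝ))^(k+1) := by
        apply Summable.tsum_le_tsum _ hsumabs hsum2
        intro k
        rw [Real.norm_eq_abs, abs_div, abs_pow, abs_of_pos hb0]
        have hrhs : (δ/2) * (1/(b:ℝ))^(k+1) = (δ/2) / (b:ℝ)^(k+1) := by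
          rw [div_pow, one_pow]; ring
        rw [hrhs]
        gcongr
        exact habs k
    _ = (δ/2) * ∑' k : ℕ, (1/(b:ℝ))^(k+1) := tsum_mul_left
    _ ≤ (δ/2) * 1 := by
        apply mul_le_mul_of_nonneg_left hgs (by linarith)
    _ < δ := by linarith


end Stmt9Aux
set_option maxHeartbeats 4000000 in
open Stmt9Aux in
/-- Let `b ≥ 2` be an integer, `p(x), q(x) ∈ ℤ[x]` with `deg p < deg q` and
`q(n) ≠ 0` for all integers `n ≥ 1`, set `ε_n = p(n)/q(n)` and `θ = Σ_{n=1}^∞ ε_n b^{-n}`,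
and define `y_0 = 0`, `y_{n+1} = fract (b·y_n + ε_{n+1})`. If the sequence `(y_n)_{n≥1}`
either has a finite set of cluster points or is dense in `[0,1]`, then `θ` is rational or
`fract θ` is digit-dense to base `b`. -/
theorem stmt_9 (b : ℕ) (hb : 2 ≤ b) (p q : Polynomial ℤ)
    (hdeg : p.degree < q.degree)
    (hq : ∀ n : ℕ, 1 ≤ n → q.eval (n : ℤ) ≠ 0)
    (ε : ℕ → ℝ) (hε : ∀ n : ℕ, ε n = (↑(p.eval (n : ℤ)) / ↑(q.eval (n : ℤ)) : ℝ))
    (θ : ℝ) (hθ : θ = ∑' n : ℕ, ε (n + 1) / (b : ℝ) ^ (n + 1))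
    (y : ℕ → ℝ) (hy0 : y 0 = 0)
    (hy : ∀ n : ℕ, y (n + 1) = Int.fract ((b : ℝ) * y n + ε (n + 1)))
    (hdich : {x : ℝ | MapClusterPt x Filter.atTop (fun n : ℕ => y (n + 1))}.Finite ∨
      Set.Icc (0 : ℝ) 1 ⊆ closure (Set.range fun n : ℕ => y (n + 1))) :
    (∃ r : ℚ, θ = (r : ℝ)) ∨
      (∀ m : ℕ, 1 ≤ m → ∀ e : Fin m → ℕ, (∀ i, e i < b) →
        ∃ n : ℕ, ∀ i : Fin m,
          ⌊(b : ℝ) * Int.fract ((b : ℝ) ^ (n + (i : ℕ)) * Int.fract θ)⌋ = (e i : ℤ)) := by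
  classical
  have hb1 : (1:ℝ) < b := by exact_mod_cast lt_of_lt_of_le one_lt_two (by exact_mod_cast hb)
  have hb0 : (0:ℝ) < b := by positivity
  have hbne : (b:ℝ) ≠ 0 := ne_of_gt hb0
  -- ε tends to zero
  have hεlim : Tendsto ε atTop (𝓝 0) := by
    have hinj : Function.Injective (Int.castRingHom ℝ) := Int.cast_injective
    have hdeg' : (p.map (Int.castRingHom ℝ)).degree < (q.map (Int.castRingHom ℝ)).degree := by
      rwa [Polynomial.degree_map_eq_of_injective hinj, Polynomial.degree_map_eq_of_injective hinj]
    have h0 := Polynomial.div_tendsto_zero_of_degree_lt (p.map (Int.castRingHom ℝ))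
      (q.map (Int.castRingHom ℝ)) hdeg'
    have h1 := h0.comp (tendsto_natCast_atTop_atTop (R := ℝ))
    apply h1.congr
    intro n
    have hevp : ∀ r : Polynomial ℤ,
        (r.map (Int.castRingHom ℝ)).eval ((n : ℝ)) = ((r.eval (n:ℤ) : ℤ) : ℝ) := by
      intro r
      have hc : ((n:ℝ)) = (Int.castRingHom ℝ) (n : ℤ) := by simp
      rw [hc, Polynomial.eval_map, Polynomial.eval₂_at_apply]
      rfl
    simp only [Function.comp_apply]
    rw [hevp p, hevp q, hε n]
  obtain ⟨M, hM⟩ := bounded_of_tendsto_zero hεlim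
  have hsum : Summable (fun n : ℕ => ε (n+1)/(b:ℝ)^(n+1)) :=
    summable_div_pow hb (M := M) (fun k => hM _)
  set Sp : ℕ → ℝ := fun n => ∑ k ∈ Finset.range n, ε (k+1) * (b:ℝ)^(n-1-k) with hSp
  set t : ℕ → ℝ := fun n => ∑' k : ℕ, ε (k+n+1) / (b:ℝ)^(k+1) with ht
  have hkey : ∀ n, (b:ℝ)^n * θ = Sp n + t n := by
    intro n
    rw [hθ]
    exact pow_mul_theta hb hsum n
  have ht0 : Tendsto t atTop (𝓝 0) := tail_tendsto_zero hb hεlim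
  have hySp : ∀ n, y n = Int.fract (Sp n) := by
    intro n
    induction n with
    | zero =>
      rw [hy0, hSp]
      simp
    | succ n ih =>
      have hSpsucc : Sp (n+1) = (b:ℝ) * Sp n + ε (n+1) := by
        rw [hSp]
        simp only
        rw [Finset.sum_range_succ, Finset.mul_sum]
        have hlast : ε (n+1) * (b:ℝ)^(n+1-1-n) = ε (n+1) := by
          have : n+1-1-n = 0 := by omega
          rw [this, pow_zero, mul_one]
        rw [hlast]
        congr 1
        apply Finset.sum_congr rfl
        intro k hk
        have hk' : k < n := Finset.mem_range.1 hk
        have : n+1-1-k = (n-1-k)+1 := by omega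
        rw [this, pow_succ]
        ring
      rw [hy n, ih, hSpsucc]
      have harg : (b:ℝ) * Int.fract (Sp n) + ε (n+1)
          = ((b:ℝ) * Sp n + ε (n+1)) - (((b:ℤ) * ⌊Sp n⌋ : ℤ) : ℝ) := by
        rw [Int.fract]
        push_cast
        ring
      rw [harg, Int.fract_sub_intCast]
  have hfract : ∀ n, Int.fract ((b:ℝ)^n * θ) = Int.fract (y n + t n) := by
    intro n
    have harg : (b:ℝ)^n * θ = (y n + t n) + ((⌊Sp n⌋ : ℤ) : ℝ) := by
      rw [hkey n, hySp n, Int.fract]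
      push_cast
      ring
    rw [harg, Int.fract_add_intCast]
  have hfθ : ∀ k : ℕ, Int.fract ((b:ℝ)^k * Int.fract θ) = Int.fract ((b:ℝ)^k * θ) := by
    intro k
    have harg : (b:ℝ)^k * θ = (b:ℝ)^k * Int.fract θ + (((b^k : ℕ) : ℤ) * ⌊θ⌋ : ℤ) := by
      rw [Int.fract]
      push_cast
      ring
    rw [harg, Int.fract_add_intCast]
  rcases hdich with hfin | hdense
  · -- finite cluster set case : θ is rational
    left
    set g : ℕ → ℝ := fun n : ℕ => y (n + 1) with hg
    set C : Set ℝ := {x : ℝ | MapClusterPt x atTop g} with hC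
    have hg01 : ∀ n, g n ∈ Set.Icc (0:ℝ) 1 := by
      intro n
      rw [hg]
      simp only
      rw [hy n]
      exact ⟨Int.fract_nonneg _, (Int.fract_lt_one _).le⟩
    have hmaple : Filter.map g atTop ≤ Filter.principal (Set.Icc (0:ℝ) 1) := by
      rw [Filter.le_principal_iff, Filter.mem_map]
      exact Filter.Eventually.of_forall hg01
    obtain ⟨c₀, hc₀Icc, hc₀⟩ := isCompact_Icc.exists_mapClusterPt (u := g) hmaple
    have hCne : C.Nonempty := ⟨c₀, hc₀⟩
    have hCsub : C ⊆ Set.Icc (0:ℝ) 1 := by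
      intro c hc
      obtain ⟨φ, hφ, hlim⟩ := subseq_of_mapClusterPt hc
      exact isClosed_Icc.mem_of_tendsto hlim (Filter.Eventually.of_forall fun n => hg01 _)
    have hinv : ∀ c ∈ C, ∃ k : ℤ, (b:ℝ) * c - k ∈ C := by
      intro c hc
      obtain ⟨φ, hφmono, hφlim⟩ := subseq_of_mapClusterPt hc
      set w : ℕ → ℝ := fun n => (b:ℝ) * g (φ n) + ε (φ n + 2) with hwdef
      have hεφ : Tendsto (fun n => ε (φ n + 2)) atTop (𝓝 0) := by
        apply hεlim.comp
        exact (tendsto_add_atTop_nat 2).comp hφmono.tendsto_atTop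
      have hw : Tendsto w atTop (𝓝 ((b:ℝ)*c)) := by
        have h1 : Tendsto (fun n => (b:ℝ) * g (φ n)) atTop (𝓝 ((b:ℝ)*c)) :=
          hφlim.const_mul _
        have := h1.add hεφ
        rwa [add_zero] at this
      have hyw : ∀ n, y (φ n + 2) = Int.fract (w n) := by
        intro n
        rw [hwdef]
        exact hy (φ n + 1)
      obtain ⟨c₂, hc₂Icc, ψ, hψmono, hψlim⟩ :=
        isCompact_Icc.tendsto_subseq (x := fun n => y (φ n + 2)) (fun n => hg01 (φ n + 1))
      have hklim : Tendsto (fun n => (⌊w (ψ n)⌋ : ℝ)) atTop (𝓝 ((b:ℝ)*c - c₂)) := by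
        have h1 : ∀ n, (⌊w (ψ n)⌋ : ℝ) = w (ψ n) - y (φ (ψ n) + 2) := by
          intro n
          rw [hyw (ψ n), Int.fract]
          ring
        have h2 := (hw.comp hψmono.tendsto_atTop).sub hψlim
        exact h2.congr (fun n => (h1 n).symm)
      obtain ⟨N₁, hN₁⟩ := Metric.tendsto_atTop.1 hklim (1/2) (by norm_num)
      set k : ℤ := ⌊w (ψ N₁)⌋ with hk
      have hkconst : ∀ n, N₁ ≤ n → ⌊w (ψ n)⌋ = k := by
        intro n hn
        have h1 := hN₁ n hn
        have h2 := hN₁ N₁ le_rfl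
        rw [Real.dist_eq] at h1 h2
        have h3 : |((⌊w (ψ n)⌋ - k : ℤ) : ℝ)| < 1 := by
          push_cast
          rw [abs_lt] at h1 h2 ⊢
          constructor <;> [linarith; linarith]
        have h4 : |⌊w (ψ n)⌋ - k| < 1 := by exact_mod_cast h3
        rw [abs_lt] at h4
        omega
      have hc₂eq : c₂ = (b:ℝ)*c - k := by
        have hconst : Tendsto (fun _ : ℕ => (k:ℝ)) atTop (𝓝 ((b:ℝ)*c - c₂)) := by
          apply hklim.congr'
          filter_upwards [Filter.eventually_atTop.2 ⟨N₁, fun n hn => hkconst n hn⟩] with n hn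
          rw [hn]
        have := tendsto_nhds_unique hconst tendsto_const_nhds
        linarith
      refine ⟨k, ?_⟩
      have hceq : (b:ℝ)*c - k = c₂ := by linarith
      rw [hC]
      show MapClusterPt ((b:ℝ)*c - k) atTop g
      rw [hceq]
      have hmono2 : StrictMono (fun n => φ (ψ n) + 1) := fun a a' haa =>
        Nat.add_lt_add_right ((hφmono.comp hψmono) haa) 1
      apply mapClusterPt_of_subseq hmono2
      exact hψlim.congr (fun n => rfl)
    -- the set F = C + ℤ
    set F : Set ℝ := {x : ℝ | ∃ c ∈ C, ∃ k : ℤ, x = c + k} with hF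
    have hFne : F.Nonempty := ⟨c₀ + (0:ℤ), c₀, hc₀, 0, rfl⟩
    have hFclosed : IsClosed F := by
      have heqF : F = ⋃ c ∈ C, (fun k : ℝ => c + k) '' (Set.range (Int.cast : ℤ → ℝ)) := by
        ext x
        constructor
        · rintro ⟨c, hc, k, rfl⟩
          exact Set.mem_biUnion hc ⟨(k:ℝ), ⟨k, rfl⟩, rfl⟩
        · intro hx
          rw [Set.mem_iUnion₂] at hx
          obtain ⟨c, hc, hx⟩ := hx
          obtain ⟨_, ⟨k, rfl⟩, rfl⟩ := hx
          exact ⟨c, hc, k, rfl⟩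
      rw [heqF]
      apply hfin.isClosed_biUnion
      intro c hc
      have hZ : IsClosed (Set.range (Int.cast : ℤ → ℝ)) :=
        Int.isClosedEmbedding_coe_real.isClosed_range
      exact (Homeomorph.addLeft c).isClosedMap _ hZ
    have hFinv : ∀ f ∈ F, (b:ℝ) * f ∈ F := by
      rintro f ⟨c, hc, k, rfl⟩
      obtain ⟨m', hm'⟩ := hinv c hc
      refine ⟨(b:ℝ)*c - m', hm', m' + b * k, ?_⟩
      push_cast
      ring
    -- minimal gap of F
    set T : Finset ℝ := ((hfin.toFinset ×ˢ hfin.toFinset) ×ˢ ({-1,0,1} : Finset ℤ)).image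
      (fun pk => |pk.1.1 - pk.1.2 + (pk.2 : ℝ)|) with hT
    set T' : Finset ℝ := insert 1 (T.filter (fun d => 0 < d)) with hT'
    have hT'ne : T'.Nonempty := ⟨1, Finset.mem_insert_self _ _⟩
    set γ : ℝ := T'.min' hT'ne with hγ
    have hγpos : 0 < γ := by
      rcases Finset.mem_insert.1 (T'.min'_mem hT'ne) with h | h
      · rw [hγ] at *; rw [h]; norm_num
      · exact (Finset.mem_filter.1 h).2
    have hγle1 : γ ≤ 1 := Finset.min'_le _ _ (Finset.mem_insert_self _ _)
    have hsep : ∀ f ∈ F, ∀ f' ∈ F, f ≠ f' → γ ≤ |f - f'| := by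
      rintro _ ⟨c, hc, k, rfl⟩ _ ⟨c', hc', k', rfl⟩ hne
      rcases le_or_gt 1 |c + k - (c' + k')| with h | h
      · linarith
      · have hcI := hCsub hc
        have hc'I := hCsub hc'
        have hcc' : |c - c'| ≤ 1 := by
          rw [abs_le]
          constructor <;> [linarith [hcI.1, hc'I.2]; linarith [hcI.2, hc'I.1]]
        have heqd : c + k - (c' + k') = (c - c') + ((k - k' : ℤ) : ℝ) := by
          push_cast
          ring
        have hkk' : |((k - k' : ℤ) : ℝ)| < 2 := by
          have h1 : ((k - k' : ℤ) : ℝ) = (c + k - (c' + k')) - (c - c') := by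
            push_cast; ring
          rw [h1]
          calc |(c + k - (c' + k')) - (c - c')| ≤ |c + k - (c' + k')| + |c - c'| :=
                abs_sub _ _
            _ < 2 := by linarith
        have hkmem : (k - k') ∈ ({-1,0,1} : Finset ℤ) := by
          have h2 : |k - k'| < 2 := by
            have : |((k - k' : ℤ) : ℝ)| = ((|k - k'| : ℤ) : ℝ) := by
              rw [Int.cast_abs]
            rw [this] at hkk'
            exact_mod_cast hkk'
          rw [abs_lt] at h2
          simp only [Finset.mem_insert, Finset.mem_singleton]
          omega
        have hmemT : |c + k - (c' + k')| ∈ T := by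
          rw [hT]
          apply Finset.mem_image.2
          refine ⟨((c, c'), k - k'), ?_, ?_⟩
          · rw [Finset.mem_product]
            constructor
            · rw [Finset.mem_product]
              exact ⟨hfin.mem_toFinset.2 hc, hfin.mem_toFinset.2 hc'⟩
            · exact hkmem
          · simp only
            rw [← heqd]
        apply Finset.min'_le
        rw [hT']
        apply Finset.mem_insert_of_mem
        rw [Finset.mem_filter]
        exact ⟨hmemT, abs_pos.2 (sub_ne_zero.2 hne)⟩
    -- distance of the orbit to C tends to zero
    have hCclosed : IsClosed C := hfin.isClosed
    have hdistC : Tendsto (fun n => Metric.infDist (g n) C) atTop (𝓝 0) := by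
      by_contra hcon
      rw [Metric.tendsto_atTop] at hcon
      push_neg at hcon
      obtain ⟨δ₁, hδ₁, hfreq⟩ := hcon
      obtain ⟨φ, hφmono, hφ⟩ := Filter.extraction_of_frequently_atTop
        (P := fun n => δ₁ ≤ dist (Metric.infDist (g n) C) 0) (Filter.frequently_atTop'.2 <| by
          intro N
          obtain ⟨n, hn, hd⟩ := hfreq (N+1)
          exact ⟨n, by omega, hd⟩)
      obtain ⟨a, haIcc, ψ, hψmono, hψlim⟩ :=
        isCompact_Icc.tendsto_subseq (x := g ∘ φ) (fun n => hg01 _)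
      have haC : a ∈ C := by
        rw [hC]
        show MapClusterPt a atTop g
        apply mapClusterPt_of_subseq (hφmono.comp hψmono)
        exact hψlim.congr (fun n => rfl)
      have h1 : Tendsto (fun n => Metric.infDist (((g ∘ φ) ∘ ψ) n) C) atTop
          (𝓝 (Metric.infDist a C)) :=
        ((Metric.continuous_infDist_pt C).tendsto a).comp hψlim
      rw [Metric.infDist_zero_of_mem haC] at h1
      have h2 : ∀ n, δ₁ ≤ Metric.infDist (((g ∘ φ) ∘ ψ) n) C := by
        intro n
        have h3 := hφ (ψ n)
        rwa [Real.dist_eq, sub_zero, abs_of_nonneg Metric.infDist_nonneg] at h3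
      have h4 := ge_of_tendsto h1 (Filter.Eventually.of_forall h2)
      linarith
    -- infDist of b^n θ to F tends to zero
    set u : ℕ → ℝ := fun n => Metric.infDist ((b:ℝ)^n * θ) F with hu
    have hu0 : Tendsto u atTop (𝓝 0) := by
      rw [Metric.tendsto_atTop]
      intro δ hδ
      obtain ⟨N₂, hN₂⟩ := Metric.tendsto_atTop.1 hdistC (δ/2) (by linarith)
      obtain ⟨N₃, hN₃⟩ := Metric.tendsto_atTop.1 ht0 (δ/2) (by linarith)
      refine ⟨N₂ + N₃ + 1, fun n hn => ?_⟩
      obtain ⟨c, hcC, hceq⟩ := hCclosed.exists_infDist_eq_dist hCne (y n)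
      have hub : u n ≤ Metric.infDist (y n) C + |t n| := by
        rw [hu]
        have hmem : c + ((⌊Sp n⌋ : ℤ) : ℝ) ∈ F := ⟨c, hcC, ⌊Sp n⌋, rfl⟩
        calc Metric.infDist ((b:ℝ)^n*θ) F ≤ dist ((b:ℝ)^n*θ) (c + ((⌊Sp n⌋ : ℤ) : ℝ)) :=
              Metric.infDist_le_dist_of_mem hmem
          _ = |(y n - c) + t n| := by
              rw [Real.dist_eq, hkey n, hySp n, Int.fract]
              ring_nf
          _ ≤ |y n - c| + |t n| := abs_add_le _ _
          _ = dist (y n) c + |t n| := by rw [Real.dist_eq]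
          _ = Metric.infDist (y n) C + |t n| := by rw [hceq]
      obtain ⟨n', rfl⟩ : ∃ n', n = n' + 1 := ⟨n-1, by omega⟩
      have h1 : Metric.infDist (y (n'+1)) C < δ/2 := by
        have h2 := hN₂ n' (by omega)
        rwa [Real.dist_eq, sub_zero, abs_of_nonneg Metric.infDist_nonneg] at h2
      have h2 : |t (n'+1)| < δ/2 := by
        have h3 := hN₃ (n'+1) (by omega)
        rwa [Real.dist_eq, sub_zero] at h3
      rw [Real.dist_eq, sub_zero, abs_of_nonneg (by rw [hu]; exact Metric.infDist_nonneg)]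
      calc u (n'+1) ≤ Metric.infDist (y (n'+1)) C + |t (n'+1)| := hub
        _ < δ := by linarith
    -- expansion
    set δ₀ : ℝ := γ / (2*(b:ℝ)) with hδ₀
    have hδ₀pos : 0 < δ₀ := by
      rw [hδ₀]
      positivity
    have hgrowth : ∀ z : ℝ, Metric.infDist z F ≤ δ₀ →
        (b:ℝ) * Metric.infDist z F ≤ Metric.infDist ((b:ℝ)*z) F := by
      intro z hz
      obtain ⟨f, hfF, hfd⟩ := hFclosed.exists_infDist_eq_dist hFne z
      have hbf : (b:ℝ)*f ∈ F := hFinv f hfF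
      have hbδ : (b:ℝ)*δ₀ = γ/2 := by
        rw [hδ₀]
        field_simp
      have hlb : ∀ f' ∈ F, (b:ℝ) * Metric.infDist z F ≤ dist ((b:ℝ)*z) f' := by
        intro f' hf'
        rcases eq_or_ne f' ((b:ℝ)*f) with rfl | hne
        · rw [Real.dist_eq]
          have h1 : (b:ℝ)*z - (b:ℝ)*f = (b:ℝ)*(z-f) := by ring
          rw [h1, abs_mul, abs_of_pos hb0, hfd, Real.dist_eq]
        · have hsep' : γ ≤ |f' - (b:ℝ)*f| := hsep f' hf' _ hbf hne
          have h1 : |(b:ℝ)*z - (b:ℝ)*f| ≤ (b:ℝ)*δ₀ := by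
            have h2 : (b:ℝ)*z - (b:ℝ)*f = (b:ℝ)*(z-f) := by ring
            rw [h2, abs_mul, abs_of_pos hb0]
            apply mul_le_mul_of_nonneg_left _ hb0.le
            rw [← Real.dist_eq, ← hfd]
            exact hz
          have hlow : (b:ℝ) * Metric.infDist z F ≤ (b:ℝ)*δ₀ :=
            mul_le_mul_of_nonneg_left hz hb0.le
          have htri : |f' - (b:ℝ)*f| - |(b:ℝ)*z - (b:ℝ)*f| ≤ |(b:ℝ)*z - f'| := by
            have h3 := abs_sub_abs_le_abs_sub (f' - (b:ℝ)*f) ((b:ℝ)*z - (b:ℝ)*f) -- wrong direction? check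
            have h4 : (f' - (b:ℝ)*f) - ((b:ℝ)*z - (b:ℝ)*f) = f' - (b:ℝ)*z := by ring
            rw [h4] at h3
            rw [abs_sub_comm ((b:ℝ)*z) f']
            exact h3
          rw [Real.dist_eq]
          linarith
      by_contra hcon
      push_neg at hcon
      obtain ⟨f', hf', hd⟩ := (Metric.infDist_lt_iff hFne).1 hcon
      exact absurd hd (not_lt.2 (hlb f' hf'))
    obtain ⟨N₄, hN₄'⟩ := Metric.tendsto_atTop.1 hu0 δ₀ hδ₀pos
    have hN₄ : ∀ n, N₄ ≤ n → u n ≤ δ₀ := by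
      intro n hn
      have h1 := hN₄' n hn
      rw [Real.dist_eq, sub_zero, abs_of_nonneg (by rw [hu]; exact Metric.infDist_nonneg)] at h1
      exact h1.le
    have hpow : ∀ j : ℕ, (b:ℝ)^j * u N₄ ≤ u (N₄ + j) := by
      intro j
      induction j with
      | zero =>
        rw [pow_zero, one_mul]
        exact le_of_eq (by norm_num)
      | succ j ih =>
        have h1 := hgrowth ((b:ℝ)^(N₄+j)*θ) (hN₄ (N₄+j) (by omega))
        calc (b:ℝ)^(j+1) * u N₄ = (b:ℝ) * ((b:ℝ)^j * u N₄) := by ring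
          _ ≤ (b:ℝ) * u (N₄+j) := mul_le_mul_of_nonneg_left ih hb0.le
          _ ≤ Metric.infDist ((b:ℝ) * ((b:ℝ)^(N₄+j)*θ)) F := h1
          _ = u (N₄ + (j+1)) := by
              rw [hu]
              congr 1
              rw [show N₄ + (j+1) = (N₄+j)+1 from rfl, pow_succ]
              ring
    have huN0 : u N₄ = 0 := by
      by_contra hne
      have hupos : 0 < u N₄ :=
        lt_of_le_of_ne (by rw [hu]; exact Metric.infDist_nonneg) (Ne.symm hne)
      obtain ⟨j, hj⟩ := pow_unbounded_of_one_lt (δ₀ / u N₄) hb1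
      rw [div_lt_iff₀ hupos] at hj
      have h1 := hpow j
      have h2 := hN₄ (N₄+j) (by omega)
      linarith
    have hmemF : ∀ j : ℕ, (b:ℝ)^(N₄+j) * θ ∈ F := by
      intro j
      induction j with
      | zero =>
        have := (hFclosed.mem_iff_infDist_zero hFne).2 huN0
        simpa using this
      | succ j ih =>
        have h1 := hFinv _ ih
        have h2 : (b:ℝ)^(N₄+(j+1)) * θ = (b:ℝ) * ((b:ℝ)^(N₄+j) * θ) := by
          rw [show N₄ + (j+1) = (N₄+j)+1 from rfl, pow_succ]
          ring
        rw [h2]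
        exact h1
    -- pigeonhole on fractional parts
    set G : Set ℝ := Int.fract '' C with hG
    have hGfin : G.Finite := hfin.image _
    have hmemG : ∀ j : ℕ, Int.fract ((b:ℝ)^(N₄+j) * θ) ∈ G := by
      intro j
      obtain ⟨c, hc, k, hk⟩ := hmemF j
      rw [hk, Int.fract_add_intCast]
      exact ⟨c, hc, rfl⟩
    haveI : Finite G := hGfin.to_subtype
    obtain ⟨i, j, hij, hfij⟩ := Finite.exists_ne_map_eq_of_infinite
      (fun j : ℕ => (⟨Int.fract ((b:ℝ)^(N₄+j) * θ), hmemG j⟩ : G))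
    have hfeq : Int.fract ((b:ℝ)^(N₄+i) * θ) = Int.fract ((b:ℝ)^(N₄+j) * θ) :=
      congrArg Subtype.val hfij
    have key : ∀ a a' : ℕ, a' < a → Int.fract ((b:ℝ)^a * θ) = Int.fract ((b:ℝ)^a' * θ) →
        ∃ r : ℚ, θ = (r : ℝ) := by
      intro a a' hlt hfr
      rw [Int.fract, Int.fract] at hfr
      set z : ℤ := ⌊(b:ℝ)^a * θ⌋ - ⌊(b:ℝ)^a' * θ⌋ with hz
      have hθz : θ * ((b:ℝ)^a - (b:ℝ)^a') = (z : ℝ) := by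
        rw [hz]
        push_cast
        linarith
      have hltR : (b:ℝ)^a' < (b:ℝ)^a := pow_lt_pow_right₀ hb1 hlt
      have hbR : ((b:ℝ)^a - (b:ℝ)^a') ≠ 0 := sub_ne_zero.2 (ne_of_gt hltR)
      refine ⟨(z : ℚ) / ((b:ℚ)^a - (b:ℚ)^a'), ?_⟩
      have hcast : (((z : ℚ) / ((b:ℚ)^a - (b:ℚ)^a') : ℚ) : ℝ)
          = (z:ℝ) / ((b:ℝ)^a - (b:ℝ)^a') := by
        push_cast
        ring
      rw [hcast, eq_div_iff hbR]
      linarith [hθz]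
    rcases hij.lt_or_gt with h | h
    · exact key (N₄+j) (N₄+i) (by omega) hfeq.symm
    · exact key (N₄+i) (N₄+j) (by omega) hfeq
  · -- dense case
    right
    intro m hm e he
    set V : ℝ := ∑ i : Fin m, (e i : ℝ)/(b:ℝ)^((i:ℕ)+1) with hV
    have hV0 : 0 ≤ V := sumV_nonneg e
    have hVle : V ≤ 1 - (1/(b:ℝ))^m := sumV_le hb m e he
    set β : ℝ := (1/(b:ℝ))^m with hβ
    have hβ0 : 0 < β := by positivity
    set α : ℝ := V + β/2 with hα
    set δ : ℝ := β/4 with hδ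
    have hδ0 : 0 < δ := by positivity
    obtain ⟨N, hN⟩ := Metric.tendsto_atTop.1 ht0 δ hδ0
    have hex : ∃ n, N ≤ n ∧ |y (n+1) - α| < δ := by
      by_contra hcon
      push_neg at hcon
      have hsubI : Metric.ball α (δ/2) ⊆ Set.Icc (0:ℝ) 1 := by
        intro z hz
        rw [Metric.mem_ball, Real.dist_eq] at hz
        have h1 := abs_lt.1 hz
        constructor
        · have : (0:ℝ) < α - δ/2 := by
            rw [hα, hδ]
            nlinarith
          linarith [h1.1]
        · have : α + δ/2 ≤ 1 := by
            rw [hα, hδ]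
            nlinarith
          linarith [h1.2]
      have hdecomp : (Set.range fun n : ℕ => y (n+1)) ⊆
          ((fun k => y (k+1)) '' (Set.Iio N)) ∪ (Set.range fun k : ℕ => y (N + k + 1)) := by
        rintro _ ⟨n, rfl⟩
        rcases lt_or_ge n N with h | h
        · exact Or.inl ⟨n, h, rfl⟩
        · refine Or.inr ⟨n - N, ?_⟩
          simp only
          have hidx : N + (n - N) + 1 = n + 1 := by omega
          rw [hidx]
      have hfin' : ((fun k => y (k+1)) '' (Set.Iio N)).Finite := (Set.finite_Iio N).image _
      have htail : (Set.range fun k : ℕ => y (N + k + 1)) ⊆ (Metric.ball α δ)ᶜ := by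
        rintro _ ⟨k, rfl⟩ hmem
        rw [Metric.mem_ball, Real.dist_eq] at hmem
        have h2 := hcon (N+k) (by omega)
        have hmem' : |y (N + k + 1) - α| < δ := hmem
        have hidx : N + k + 1 = (N + k) + 1 := rfl
        rw [hidx] at hmem'
        linarith
      have hcl : closure (Set.range fun k : ℕ => y (N + k + 1)) ⊆ (Metric.ball α δ)ᶜ :=
        closure_minimal htail (Metric.isOpen_ball).isClosed_compl
      have hball : Metric.ball α (δ/2) ⊆ ((fun k => y (k+1)) '' (Set.Iio N)) := by
        intro z hz
        have hz2 : z ∈ closure (Set.range fun n : ℕ => y (n+1)) := hdense (hsubI hz)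
        have hz3 : z ∈ closure (((fun k => y (k+1)) '' (Set.Iio N)) ∪
            (Set.range fun k : ℕ => y (N + k + 1))) := closure_mono hdecomp hz2
        rw [closure_union, hfin'.isClosed.closure_eq] at hz3
        rcases hz3 with h | h
        · exact h
        · exfalso
          exact (hcl h) (Metric.ball_subset_ball (by linarith) hz)
      have hinf : (Metric.ball α (δ/2)).Infinite := by
        rw [Real.ball_eq_Ioo]
        exact Set.Ioo_infinite (by linarith)
      exact hinf (hfin'.subset hball)
    obtain ⟨n, hnN, hny⟩ := hex
    have htb : |t (n+1)| < δ := by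
      have := hN (n+1) (by omega)
      rwa [Real.dist_eq, sub_zero] at this
    set x : ℝ := y (n+1) + t (n+1) with hx
    have hxV1 : V < x := by
      rw [hx]
      have h1 := abs_lt.1 hny
      have h2 := abs_lt.1 htb
      rw [hα, hδ] at *
      nlinarith
    have hxV2 : x < V + β := by
      have h1 := abs_lt.1 hny
      have h2 := abs_lt.1 htb
      rw [hx, hα, hδ] at *
      nlinarith
    have hx0 : 0 ≤ x := le_of_lt (lt_of_le_of_lt hV0 hxV1)
    have hx1 : x < 1 := by
      have : V + β ≤ 1 := by rw [hβ]; linarith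
      linarith
    have hfx : Int.fract ((b:ℝ)^(n+1) * θ) = x := by
      rw [hfract (n+1), Int.fract_eq_self.mpr ⟨hx0, hx1⟩]
    refine ⟨n+1, ?_⟩
    intro i
    set K : ℤ := ⌊(b:ℝ)^(n+1) * Int.fract θ⌋ with hK
    have hxeq : (b:ℝ)^(n+1) * Int.fract θ = x + (K : ℝ) := by
      have h1 : Int.fract ((b:ℝ)^(n+1) * Int.fract θ) = x := by rw [hfθ (n+1), hfx]
      rw [Int.fract] at h1
      rw [hK]
      linarith
    have hfr2 : Int.fract ((b:ℝ)^((n+1) + (i:ℕ)) * Int.fract θ)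
        = Int.fract ((b:ℝ)^(i:ℕ) * x) := by
      have harg : (b:ℝ)^((n+1) + (i:ℕ)) * Int.fract θ
          = (b:ℝ)^(i:ℕ) * x + (((b^(i:ℕ) : ℕ) : ℤ) * K : ℤ) := by
        have h2 : (b:ℝ)^((n+1)+(i:ℕ)) = (b:ℝ)^(i:ℕ) * (b:ℝ)^(n+1) := by
          rw [pow_add]; ring
        rw [h2, mul_assoc, hxeq]
        push_cast
        ring
      rw [harg, Int.fract_add_intCast]
    rw [hfr2]
    exact digit_key hb (fun m' e' he' => sumV_le hb m' e' he') m e he x (le_of_lt hxV1)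
      (by rw [← hV, ← hβ]; exact hxV2) i
end

section
/- Let b ≥ 2 be an integer, let p(x), q(x) ∈ ℤ[x] with deg p < deg q and q(n) ≠ 0 for all integers n ≥ 1, set ε_n = p(n)/q(n) and θ = Σ_{n=1}^∞ ε_n b^{−n}, and define y_0 = 0, y_{n+1} = fract(b·y_n + ε_{n+1}). If the sequence (y_n)_{n≥1} either has a finite set of cluster points or is uniformly distributed mod 1, then θ is rational or fract(θ) is normal to base b. -/
open scoped Classical

open Filter Set

set_option maxHeartbeats 1000000

lemma floor_pow_succ (b : ℕ) (w : ℝ) (m : ℕ) :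
    ⌊(b:ℝ)^(m+1) * w⌋ = b * ⌊(b:ℝ)^m * w⌋ + ⌊(b:ℝ) * Int.fract ((b:ℝ)^m * w)⌋ := by
  have h : (b:ℝ)^(m+1) * w = ((b * ⌊(b:ℝ)^m * w⌋ : ℤ) : ℝ) + (b:ℝ) * Int.fract ((b:ℝ)^m * w) := by
    rw [Int.fract]
    push_cast
    ring
  rw [h, Int.floor_intCast_add]

lemma digit_range (b : ℕ) (hb : 2 ≤ b) (x : ℝ) :
    0 ≤ ⌊(b:ℝ) * Int.fract x⌋ ∧ ⌊(b:ℝ) * Int.fract x⌋ < b := by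
  have hb0 : (0:ℝ) < b := by positivity
  constructor
  · apply Int.floor_nonneg.2
    have h1 : (0:ℝ) ≤ Int.fract x := Int.fract_nonneg x
    positivity
  · rw [Int.floor_lt]
    push_cast
    calc (b:ℝ) * Int.fract x < b * 1 := by
          exact mul_lt_mul_of_pos_left (Int.fract_lt_one x) hb0
      _ = b := mul_one _

lemma digit_iff (b : ℕ) (hb : 2 ≤ b) (w : ℝ) (hw0 : 0 ≤ w) (hw1 : w < 1) :
    ∀ (m : ℕ) (e : Fin m → ℕ), (∀ i, e i < b) →
      ((∀ i : Fin m, ⌊(b:ℝ) * Int.fract ((b:ℝ)^(i:ℕ) * w)⌋ = (e i : ℤ)) ↔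
        ⌊(b:ℝ)^m * w⌋ = ∑ i : Fin m, (e i : ℤ) * (b:ℤ)^(m - 1 - (i:ℕ))) := by
  intro m
  induction m with
  | zero =>
    intro e he
    simp [Int.floor_eq_zero_iff, Set.mem_Ico, hw0, hw1]
  | succ m ih =>
    intro e he
    have hE : ∑ i : Fin (m+1), (e i : ℤ) * (b:ℤ)^(m + 1 - 1 - (i:ℕ))
        = b * (∑ i : Fin m, ((e i.castSucc : ℤ)) * (b:ℤ)^(m - 1 - (i:ℕ))) + (e (Fin.last m) : ℤ) := by
      rw [Fin.sum_univ_castSucc]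
      simp only [Fin.coe_castSucc, Fin.val_last]
      rw [Finset.mul_sum]
      congr 1
      · apply Finset.sum_congr rfl
        intro i _
        have hi : (i:ℕ) < m := i.isLt
        have : m + 1 - 1 - (i:ℕ) = (m - 1 - (i:ℕ)) + 1 := by omega
        rw [this, pow_succ]
        ring
      · simp
    have key := floor_pow_succ b w m
    constructor
    · intro h
      have h1 := (ih (fun i => e i.castSucc) (fun i => he _)).1 (fun i => h i.castSucc)
      have h2 := h (Fin.last m)
      simp only [Fin.val_last] at h2
      rw [hE, key, h1, h2]
    · intro h
      rw [hE, key] at h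
      have hd := digit_range b hb ((b:ℝ)^m * w)
      set d := ⌊(b:ℝ) * Int.fract ((b:ℝ)^m * w)⌋ with hdd
      have he' : (0:ℤ) ≤ (e (Fin.last m) : ℤ) ∧ (e (Fin.last m) : ℤ) < b := by
        constructor
        · positivity
        · exact_mod_cast he (Fin.last m)
      -- uniqueness of division
      have hdvd : (b:ℤ) ∣ ((e (Fin.last m) : ℤ) - d) := by
        refine ⟨⌊(b:ℝ)^m * w⌋ - (∑ i : Fin m, ((e i.castSucc : ℤ)) * (b:ℤ)^(m - 1 - (i:ℕ))), ?_⟩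
        linarith [h]
      have hz : (e (Fin.last m) : ℤ) - d = 0 := by
        refine Int.eq_zero_of_abs_lt_dvd hdvd ?_
        rw [abs_lt]
        omega
      have hd_eq : d = (e (Fin.last m) : ℤ) := by omega
      have hA : ⌊(b:ℝ)^m * w⌋ = ∑ i : Fin m, ((e i.castSucc : ℤ)) * (b:ℤ)^(m - 1 - (i:ℕ)) := by
        have hb0 : (b:ℤ) ≠ 0 := by positivity
        have : (b:ℤ) * ⌊(b:ℝ)^m * w⌋ = b * ∑ i : Fin m, ((e i.castSucc : ℤ)) * (b:ℤ)^(m - 1 - (i:ℕ)) := by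
          omega
        exact mul_left_cancel₀ hb0 this
      have h1 := (ih (fun i => e i.castSucc) (fun i => he _)).2 hA
      intro i
      refine Fin.lastCases ?_ ?_ i
      · simpa [Fin.val_last] using hd_eq
      · intro j
        simpa using h1 j

lemma eps_tendsto (p q : Polynomial ℤ) (hdeg : p.degree < q.degree)
    (ε : ℕ → ℝ) (hε : ∀ n : ℕ, ε n = (↑(p.eval (n : ℤ)) / ↑(q.eval (n : ℤ)) : ℝ)) :
    Tendsto ε atTop (nhds 0) := by
  set P := p.map (Int.castRingHom ℝ)
  set Q := q.map (Int.castRingHom ℝ)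
  have hdeg' : P.degree < Q.degree := by
    rwa [Polynomial.degree_map_eq_of_injective (f := Int.castRingHom ℝ) Int.cast_injective,
      Polynomial.degree_map_eq_of_injective (f := Int.castRingHom ℝ) Int.cast_injective]
  have h := (Polynomial.div_tendsto_zero_of_degree_lt P Q hdeg').comp
    tendsto_natCast_atTop_atTop (α := ℕ)
  convert h using 1
  funext n
  simp only [Function.comp, hε]
  rw [Polynomial.eval_natCast_map, Polynomial.eval_natCast_map]
  simp

lemma setup (b : ℕ) (hb : 2 ≤ b) (ε : ℕ → ℝ) (hεlim : Tendsto ε atTop (nhds 0))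
    (θ : ℝ) (hθ : θ = ∑' n : ℕ, ε (n + 1) / (b : ℝ) ^ (n + 1))
    (y : ℕ → ℝ) (hy0 : y 0 = 0)
    (hy : ∀ n : ℕ, y (n + 1) = Int.fract ((b : ℝ) * y n + ε (n + 1))) :
    ∃ (k : ℕ → ℤ) (t : ℕ → ℝ), Tendsto t atTop (nhds 0) ∧
      ∀ n, (b:ℝ)^n * θ = (k n : ℝ) + y n + t n := by
  have hb1 : (1:ℝ) < (b:ℝ) := by exact_mod_cast hb.trans_lt' one_lt_two
  have hb0 : (0:ℝ) < (b:ℝ) := lt_trans zero_lt_one hb1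
  have hrb0 : (0:ℝ) ≤ 1/(b:ℝ) := by positivity
  have hrb1 : 1/(b:ℝ) < 1 := by rw [div_lt_one hb0]; exact hb1
  -- bound on ε
  obtain ⟨C, hC⟩ : ∃ C : ℝ, ∀ n, |ε n| ≤ C := by
    obtain ⟨C, hC⟩ := (hεlim.abs).bddAbove_range
    exact ⟨C, fun n => hC ⟨n, rfl⟩⟩
  have hC0 : 0 ≤ C := le_trans (abs_nonneg _) (hC 0)
  -- summability helpers
  have habs : ∀ (n i : ℕ), |ε (n+i+1) / (b:ℝ)^(i+1)| ≤ C * (1/(b:ℝ))^i := by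
    intro n i
    have h1 : |ε (n+i+1) / (b:ℝ)^(i+1)| = |ε (n+i+1)| / (b:ℝ)^(i+1) := by
      rw [abs_div, abs_pow, abs_of_pos hb0]
    have h2 : C * (1/(b:ℝ))^i = C / (b:ℝ)^i := by
      rw [div_pow, one_pow]; ring
    rw [h1, h2]
    gcongr
    · exact hC _
    · exact hb1.le
    · omega
  have hsumabs : ∀ (n : ℕ), Summable (fun i : ℕ => |ε (n+i+1) / (b:ℝ)^(i+1)|) := by
    intro n
    exact Summable.of_nonneg_of_le (fun i => abs_nonneg _) (habs n)
      ((summable_geometric_of_lt_one hrb0 hrb1).mul_left C)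
  have hsum' : ∀ (n : ℕ), Summable (fun i : ℕ => ε (n+i+1) / (b:ℝ)^(i+1)) := fun n =>
    (hsumabs n).of_abs
  have hsum : Summable (fun i : ℕ => ε (i+1) / (b:ℝ)^(i+1)) := by
    have := hsum' 0
    simpa using this
  -- definitions
  set s : ℕ → ℝ := fun n => ∑ j ∈ Finset.range n, ε (j+1) * ((b:ℝ)^n / (b:ℝ)^(j+1)) with hs
  set t : ℕ → ℝ := fun n => ∑' i : ℕ, ε (n+i+1) / (b:ℝ)^(i+1) with ht
  have key1 : ∀ n, (b:ℝ)^n * θ = s n + t n := by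
    intro n
    rw [hθ, ← tsum_mul_left]
    have h := Summable.sum_add_tsum_nat_add (f := fun j : ℕ => (b:ℝ)^n * (ε (j+1) / (b:ℝ)^(j+1))) n
      (hsum.mul_left _)
    rw [← h]
    congr 1
    · apply Finset.sum_congr rfl
      intro j _
      ring
    · apply tsum_congr
      intro i
      have hpow : (b:ℝ)^(i+n+1) = (b:ℝ)^(i+1) * (b:ℝ)^n := by
        rw [← pow_add]; ring_nf
      have : n + i + 1 = i + n + 1 := by omega
      rw [this]
      field_simp [hpow]
      ring
  have key2 : ∀ n, y n = Int.fract (s n) := by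
    intro n
    induction n with
    | zero => simp [hy0, hs]
    | succ n ihn =>
      have hstep : s (n+1) = ((b:ℝ) * s n + ε (n+1)) - 0 := by
        rw [sub_zero, hs]
        simp only []
        rw [Finset.sum_range_succ, Finset.mul_sum]
        congr 1
        · apply Finset.sum_congr rfl
          intro j _
          rw [pow_succ]
          ring
        · rw [div_self (by positivity)]
          ring
      rw [sub_zero] at hstep
      rw [hy n, ihn]
      have : (b:ℝ) * Int.fract (s n) + ε (n+1) = s (n+1) - (⌊s n⌋ * b : ℤ) := by
        rw [hstep, Int.fract]
        push_cast
        ring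
      rw [this, Int.fract_sub_intCast]
  have htend : Tendsto t atTop (nhds 0) := by
    rw [Metric.tendsto_atTop]
    intro δ hδ
    obtain ⟨N, hN⟩ := (Metric.tendsto_atTop.1 hεlim) (δ/2) (by linarith)
    refine ⟨N, fun n hn => ?_⟩
    rw [Real.dist_eq, sub_zero]
    have h1 : |t n| ≤ ∑' i : ℕ, |ε (n+i+1) / (b:ℝ)^(i+1)| := by
      have := norm_tsum_le_tsum_norm (f := fun i : ℕ => ε (n+i+1) / (b:ℝ)^(i+1))
        (by simp only [Real.norm_eq_abs]; exact hsumabs n)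
      simp only [Real.norm_eq_abs] at this
      exact this
    have h2 : ∑' i : ℕ, |ε (n+i+1) / (b:ℝ)^(i+1)| ≤ ∑' i : ℕ, (δ/2) * (1/(b:ℝ))^(i+1) := by
      have hg : Summable (fun i : ℕ => (δ/2) * (1/(b:ℝ))^(i+1)) := by
        refine ((summable_geometric_of_lt_one hrb0 hrb1).mul_left ((δ/2) * (1/(b:ℝ)))).congr
          fun i => ?_
        rw [pow_succ]; ring
      apply Summable.tsum_le_tsum _ (hsumabs n) hg
      · intro i
        have hd : dist (ε (n+i+1)) 0 < δ/2 := hN (n+i+1) (by omega)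
        rw [Real.dist_eq, sub_zero] at hd
        have h3 : |ε (n+i+1) / (b:ℝ)^(i+1)| = |ε (n+i+1)| / (b:ℝ)^(i+1) := by
          rw [abs_div, abs_pow, abs_of_pos hb0]
        rw [h3]
        have : (δ/2) * (1/(b:ℝ))^(i+1) = (δ/2) / (b:ℝ)^(i+1) := by
          rw [div_pow, one_pow]; ring
        rw [this]
        gcongr
    have h4 : ∑' i : ℕ, (δ/2) * (1/(b:ℝ))^(i+1) ≤ δ/2 := by
      have hgeo : ∑' i : ℕ, (1/(b:ℝ))^(i+1) = (1/(b:ℝ)) * (1 - 1/(b:ℝ))⁻¹ := by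
        have := tsum_geometric_of_lt_one hrb0 hrb1
        calc ∑' i : ℕ, (1/(b:ℝ))^(i+1) = ∑' i : ℕ, (1/(b:ℝ)) * (1/(b:ℝ))^i := by
              apply tsum_congr; intro i; rw [pow_succ]; ring
          _ = (1/(b:ℝ)) * ∑' i : ℕ, (1/(b:ℝ))^i := tsum_mul_left
          _ = (1/(b:ℝ)) * (1 - 1/(b:ℝ))⁻¹ := by rw [this]
      rw [tsum_mul_left, hgeo]
      have hle : (1/(b:ℝ)) * (1 - 1/(b:ℝ))⁻¹ ≤ 1 := by
        rw [mul_inv_le_iff₀ (by linarith)]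
        have h2b : (2:ℝ) ≤ (b:ℝ) := by exact_mod_cast hb
        have h12 : 1/(b:ℝ) ≤ 1/2 := one_div_le_one_div_of_le (by norm_num) h2b
        linarith
      nlinarith [hδ]
    calc |t n| ≤ ∑' i : ℕ, |ε (n+i+1) / (b:ℝ)^(i+1)| := h1
      _ ≤ ∑' i : ℕ, (δ/2) * (1/(b:ℝ))^(i+1) := h2
      _ ≤ δ/2 := h4
      _ < δ := by linarith
  refine ⟨fun n => ⌊s n⌋, t, htend, fun n => ?_⟩
  rw [key1, key2 n]
  have hf := Int.floor_add_fract (s n)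
  linarith

lemma min_fract_le_abs (v : ℝ) (m : ℤ) (hv : ¬ ∃ z : ℤ, v = (z:ℝ)) :
    min (Int.fract v) (1 - Int.fract v) ≤ |v - m| := by
  rcases le_or_gt (m : ℝ) v with h | h
  · have hm : m ≤ ⌊v⌋ := by
      rwa [Int.le_floor]
    have : Int.fract v ≤ v - m := by
      rw [Int.fract]
      have : (m:ℝ) ≤ (⌊v⌋:ℝ) := by exact_mod_cast hm
      linarith
    calc min _ _ ≤ Int.fract v := min_le_left _ _
      _ ≤ v - m := this
      _ ≤ |v - m| := le_abs_self _
  · have hm : ⌊v⌋ + 1 ≤ m := by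
      have : ⌊v⌋ < m := by
        rw [Int.floor_lt]
        exact h
      omega
    have h1 : 1 - Int.fract v ≤ m - v := by
      rw [Int.fract]
      have : ((⌊v⌋:ℝ) + 1) ≤ (m:ℝ) := by exact_mod_cast hm
      linarith
    calc min _ _ ≤ 1 - Int.fract v := min_le_right _ _
      _ ≤ m - v := h1
      _ ≤ |v - m| := by rw [abs_sub_comm]; exact le_abs_self _

lemma branch1 (b : ℕ) (hb : 2 ≤ b) (θ : ℝ) (y : ℕ → ℝ) (k : ℕ → ℤ) (t : ℕ → ℝ)
    (htend : Filter.Tendsto t Filter.atTop (nhds 0))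
    (hkey : ∀ n, (b:ℝ)^n * θ = (k n : ℝ) + y n + t n)
    (hy01 : ∀ n : ℕ, 0 ≤ y (n+1) ∧ y (n+1) < 1)
    (hCfin : {x : ℝ | MapClusterPt x Filter.atTop (fun n : ℕ => y (n + 1))}.Finite) :
    ∃ r : ℚ, θ = (r : ℝ) := by
  classical
  have hb1 : (1:ℝ) < (b:ℝ) := by exact_mod_cast hb.trans_lt' one_lt_two
  set u : ℕ → ℝ := fun n => y (n+1) with hu
  set C : Set ℝ := {x : ℝ | MapClusterPt x Filter.atTop u} with hCdef
  have hmem : ∀ n, u n ∈ Set.Icc (0:ℝ) 1 := fun n => ⟨(hy01 n).1, (hy01 n).2.le⟩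
  -- approximation by cluster set
  have happr : ∀ δ : ℝ, 0 < δ → ∀ᶠ n in atTop, ∃ c ∈ C, |u n - c| < δ := by
    intro δ hδ
    by_contra hcon
    rw [Filter.not_eventually] at hcon
    have hfreq : ∃ᶠ n in atTop, ∀ c ∈ C, δ ≤ |u n - c| := by
      apply hcon.mono
      intro n hn c hc
      by_contra h
      exact hn ⟨c, hc, not_le.1 h⟩
    obtain ⟨φ, hφ, hP⟩ := Filter.extraction_of_frequently_atTop hfreq
    obtain ⟨x, hxIcc, ψ, hψ, hlim⟩ := (isCompact_Icc (a := (0:ℝ)) (b := 1)).tendsto_subseq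
      (fun n => hmem (φ n))
    have hxC : x ∈ C := by
      have htend2 : Tendsto (φ ∘ ψ) atTop atTop :=
        (hφ.comp hψ).tendsto_atTop
      exact MapClusterPt.of_comp htend2 hlim.mapClusterPt
    obtain ⟨N, hN⟩ := (Metric.tendsto_atTop.1 hlim) δ hδ
    have := hP (ψ N) x hxC
    have hd := hN N le_rfl
    rw [Real.dist_eq] at hd
    exact absurd hd (not_lt.2 this)
  have hCne : C.Nonempty := by
    have h := happr 1 one_pos
    obtain ⟨n, hn⟩ := h.exists
    obtain ⟨c, hc, _⟩ := hn
    exact ⟨c, hc⟩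
  -- nearest point selection
  have hFne : hCfin.toFinset.Nonempty := by
    rwa [Set.Finite.toFinset_nonempty]
  have hex : ∀ n, ∃ c ∈ hCfin.toFinset, ∀ c' ∈ hCfin.toFinset, |u n - c| ≤ |u n - c'| :=
    fun n => hCfin.toFinset.exists_min_image (fun c => |u n - c|) hFne
  set c : ℕ → ℝ := fun n => (hex n).choose with hcdef
  have hcC : ∀ n, c n ∈ C := by
    intro n
    have := (hex n).choose_spec.1
    rwa [Set.Finite.mem_toFinset] at this
  have hcmin : ∀ n, ∀ c' ∈ C, |u n - c n| ≤ |u n - c'| := by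
    intro n c' hc'
    exact (hex n).choose_spec.2 c' (hCfin.mem_toFinset.2 hc')
  -- x' tendsto 0
  set x' : ℕ → ℝ := fun n => u n + t (n+1) - c n with hx'def
  have hx'0 : Tendsto x' atTop (nhds 0) := by
    rw [Metric.tendsto_atTop]
    intro δ hδ
    have h1 := happr (δ/2) (by linarith)
    have h2 := (Metric.tendsto_atTop.1 htend) (δ/2) (by linarith)
    obtain ⟨N1, hN1⟩ := Filter.eventually_atTop.1 h1
    obtain ⟨N2, hN2⟩ := h2
    refine ⟨max N1 N2, fun n hn => ?_⟩
    obtain ⟨cc, hccC, hcc⟩ := hN1 n (le_trans (le_max_left _ _) hn)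
    have ht' : |t (n+1)| < δ/2 := by
      have := hN2 (n+1) (le_trans (le_trans (le_max_right _ _) hn) (Nat.le_succ n))
      rwa [Real.dist_eq, sub_zero] at this
    have hmin : |u n - c n| ≤ |u n - cc| := hcmin n cc hccC
    rw [Real.dist_eq, sub_zero]
    have hxeq : x' n = (u n - c n) + t (n+1) := by rw [hx'def]; ring
    rw [hxeq]
    calc |(u n - c n) + t (n+1)| ≤ |u n - c n| + |t (n+1)| := abs_add_le _ _
      _ < δ/2 + δ/2 := by
          have : |u n - c n| < δ/2 := lt_of_le_of_lt hmin hcc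
          linarith
      _ = δ := by ring
  -- separation constant ρ
  have hgood : ∃ ρ : ℝ, 0 < ρ ∧ ρ ≤ 1 ∧ ∀ cc ∈ C, ∀ cc' ∈ C,
      (¬ ∃ m : ℤ, (b:ℝ) * cc - cc' = (m:ℝ)) → ∀ m : ℤ, ρ ≤ |(b:ℝ) * cc - cc' - m| := by
    set F : Finset ℝ := (hCfin.toFinset ×ˢ hCfin.toFinset).image
      (fun p : ℝ × ℝ => (b:ℝ) * p.1 - p.2) with hF
    set Fbad : Finset ℝ := F.filter (fun v => ¬ ∃ m : ℤ, v = (m:ℝ)) with hFbad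
    by_cases hne : Fbad.Nonempty
    · set ρ0 : ℝ := Fbad.inf' hne (fun v => min (Int.fract v) (1 - Int.fract v)) with hρ0
      refine ⟨min ρ0 1, ?_, min_le_right _ _, ?_⟩
      · rw [lt_min_iff]
        refine ⟨?_, one_pos⟩
        rw [Finset.lt_inf'_iff]
        intro v hv
        rw [hFbad, Finset.mem_filter] at hv
        have hvne : Int.fract v ≠ 0 := by
          intro h0
          apply hv.2
          refine ⟨⌊v⌋, ?_⟩
          have := Int.fract_add_floor v
          rw [h0] at this
          linarith
        have h1 : 0 < Int.fract v := lt_of_le_of_ne (Int.fract_nonneg v) (Ne.symm hvne)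
        have h2 : Int.fract v < 1 := Int.fract_lt_one v
        rw [lt_min_iff]
        exact ⟨h1, by linarith⟩
      · intro cc hcc cc' hcc' hbad m
        have hvF : (b:ℝ) * cc - cc' ∈ Fbad := by
          rw [hFbad, Finset.mem_filter]
          refine ⟨?_, hbad⟩
          rw [hF, Finset.mem_image]
          exact ⟨(cc, cc'), Finset.mem_product.2 ⟨hCfin.mem_toFinset.2 hcc,
            hCfin.mem_toFinset.2 hcc'⟩, rfl⟩
        calc min ρ0 1 ≤ ρ0 := min_le_left _ _
          _ ≤ min (Int.fract ((b:ℝ) * cc - cc')) (1 - Int.fract ((b:ℝ) * cc - cc')) :=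
            Finset.inf'_le _ hvF
          _ ≤ |(b:ℝ) * cc - cc' - m| := min_fract_le_abs _ m hbad
    · refine ⟨1, one_pos, le_rfl, ?_⟩
      intro cc hcc cc' hcc' hbad m
      exfalso
      apply hne
      refine ⟨(b:ℝ) * cc - cc', ?_⟩
      rw [hFbad, Finset.mem_filter]
      refine ⟨?_, hbad⟩
      rw [hF, Finset.mem_image]
      exact ⟨(cc, cc'), Finset.mem_product.2 ⟨hCfin.mem_toFinset.2 hcc,
        hCfin.mem_toFinset.2 hcc'⟩, rfl⟩
  obtain ⟨ρ, hρpos, hρ1, hρ⟩ := hgood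
  -- eventually x' (n+1) = b * x' n
  have hsmall : ∀ᶠ n in atTop, |x' n| < ρ / (2 * ((b:ℝ) + 1)) := by
    have := Metric.tendsto_atTop.1 hx'0 (ρ / (2 * ((b:ℝ) + 1))) (by positivity)
    obtain ⟨N, hN⟩ := this
    rw [Filter.eventually_atTop]
    exact ⟨N, fun n hn => by have := hN n hn; rwa [Real.dist_eq, sub_zero] at this⟩
  have hb0 : (0:ℝ) < (b:ℝ) := lt_trans zero_lt_one hb1
  have hstep : ∀ᶠ n in atTop, x' (n+1) = (b:ℝ) * x' n := by
    obtain ⟨N, hN⟩ := Filter.eventually_atTop.1 hsmall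
    rw [Filter.eventually_atTop]
    refine ⟨N, fun n hn => ?_⟩
    have h1 := hN n hn
    have h2 := hN (n+1) (le_trans hn (Nat.le_succ n))
    have hy1 : (k (n+1) : ℝ) + y (n+1) + t (n+1) = (k (n+1) : ℝ) + c n + x' n := by
      simp only [hx'def, hu]; ring
    have hy2 : (k (n+2) : ℝ) + y (n+2) + t (n+2) = (k (n+2) : ℝ) + c (n+1) + x' (n+1) := by
      simp only [hx'def, hu]; ring
    have emain : (k (n+2):ℝ) + c (n+1) + x' (n+1) = (b:ℝ) * ((k (n+1):ℝ) + c n + x' n) := by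
      rw [← hy1, ← hy2, ← hkey (n+1), ← hkey (n+2)]; ring
    set M : ℤ := k (n+2) - b * k (n+1) with hM
    have heq : (b:ℝ) * c n - c (n+1) = (M:ℝ) + (x' (n+1) - (b:ℝ) * x' n) := by
      rw [hM]; push_cast; linarith [emain]
    have hBid : ((b:ℝ)+1) * (ρ / (2*((b:ℝ)+1))) = ρ/2 := by
      field_simp
    have hble : (b:ℝ) * |x' n| ≤ (b:ℝ) * (ρ / (2*((b:ℝ)+1))) :=
      mul_le_mul_of_nonneg_left h1.le hb0.le
    have hwsmall : |x' (n+1) - (b:ℝ) * x' n| < ρ / 2 := by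
      calc |x' (n+1) - (b:ℝ) * x' n| ≤ |x' (n+1)| + |(b:ℝ) * x' n| := abs_sub _ _
        _ = |x' (n+1)| + (b:ℝ) * |x' n| := by rw [abs_mul, abs_of_pos hb0]
        _ < ρ / 2 := by linarith
    have hint : ∃ m : ℤ, (b:ℝ) * c n - c (n+1) = (m:ℝ) := by
      by_contra hbad
      have hge := hρ (c n) (hcC n) (c (n+1)) (hcC (n+1)) hbad M
      have hid : (b:ℝ) * c n - c (n+1) - M = x' (n+1) - (b:ℝ) * x' n := by linarith [heq]
      rw [hid] at hge
      linarith
    obtain ⟨m, hm⟩ := hint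
    have hw : x' (n+1) - (b:ℝ) * x' n = ((m - M : ℤ) : ℝ) := by
      push_cast; linarith [heq, hm]
    have hmz : m - M = 0 := by
      have habs : |((m - M : ℤ):ℝ)| < 1 := by
        rw [← hw]; exact lt_of_lt_of_le hwsmall (by linarith)
      have habs' : |m - M| < 1 := by exact_mod_cast habs
      rw [abs_lt] at habs'
      omega
    have : x' (n+1) - (b:ℝ) * x' n = 0 := by rw [hw, hmz]; simp
    linarith
  obtain ⟨N1, hN1⟩ := Filter.eventually_atTop.1 (hstep.and hsmall)
  have hzero : ∀ j, x' (N1 + j) = 0 := by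
    have hx0 : x' N1 = 0 := by
      by_contra h0
      have hpos : 0 < |x' N1| := abs_pos.2 h0
      have hgrow : ∀ j, |x' (N1 + j)| = (b:ℝ)^j * |x' N1| := by
        intro j
        induction j with
        | zero => simp
        | succ j ih =>
          have hs := (hN1 (N1+j) (Nat.le_add_right _ _)).1
          have : N1 + (j+1) = (N1+j)+1 := by omega
          rw [this, hs, abs_mul, abs_of_pos hb0, ih, pow_succ]; ring
      obtain ⟨j, hj⟩ := pow_unbounded_of_one_lt (1 / |x' N1|) hb1
      have h1 := (hN1 (N1+j) (Nat.le_add_right _ _)).2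
      rw [hgrow j] at h1
      have hlt : 1 < (b:ℝ)^j * |x' N1| := by
        rw [div_lt_iff₀ hpos] at hj; linarith
      have hd : ρ/(2*((b:ℝ)+1)) ≤ 1 := by
        rw [div_le_one (by positivity)]
        nlinarith
      linarith
    intro j
    induction j with
    | zero => simpa using hx0
    | succ j ih =>
      have hs := (hN1 (N1+j) (Nat.le_add_right _ _)).1
      have : N1 + (j+1) = (N1+j)+1 := by omega
      rw [this, hs, ih, mul_zero]
  -- final step helper
  have hfinal : ∀ a1 a2 : ℕ, N1 ≤ a1 → N1 ≤ a2 → a1 < a2 → c a1 = c a2 → ∃ r : ℚ, θ = (r:ℝ) := by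
    intro a1 a2 ha1 ha2 hlt hceq
    have hxa : ∀ a : ℕ, N1 ≤ a → x' a = 0 := by
      intro a ha
      obtain ⟨j, hj⟩ : ∃ j, a = N1 + j := ⟨a - N1, by omega⟩
      rw [hj]; exact hzero j
    have e1 : (b:ℝ)^(a1+1) * θ = (k (a1+1) : ℝ) + c a1 := by
      rw [hkey (a1+1)]
      have hid : y (a1+1) + t (a1+1) - c a1 = x' a1 := by simp only [hx'def, hu]
      have := hxa a1 ha1
      linarith
    have e2 : (b:ℝ)^(a2+1) * θ = (k (a2+1) : ℝ) + c a2 := by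
      rw [hkey (a2+1)]
      have hid : y (a2+1) + t (a2+1) - c a2 = x' a2 := by simp only [hx'def, hu]
      have := hxa a2 ha2
      linarith
    set B : ℤ := (b:ℤ)^(a2+1) - (b:ℤ)^(a1+1) with hBdef
    have hBR : (B:ℝ) = (b:ℝ)^(a2+1) - (b:ℝ)^(a1+1) := by rw [hBdef]; push_cast; ring
    have hpowlt : (b:ℝ)^(a1+1) < (b:ℝ)^(a2+1) := by
      apply pow_lt_pow_right₀ hb1; omega
    have hBne : (B:ℝ) ≠ 0 := by rw [hBR]; linarith
    have hBθ : (B:ℝ) * θ = ((k (a2+1) - k (a1+1) : ℤ) : ℝ) := by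
      rw [hBR]; push_cast
      rw [hceq] at e1
      linarith [e1, e2]
    refine ⟨((k (a2+1) - k (a1+1) : ℤ) : ℚ) / (B : ℚ), ?_⟩
    have hθval : θ = ((k (a2+1) - k (a1+1) : ℤ) : ℝ) / (B:ℝ) := by
      rw [eq_div_iff hBne]; linarith [hBθ]
    rw [hθval]
    push_cast
    ring
  have hinf : (Set.Ici N1).Infinite := Set.Ici_infinite _
  obtain ⟨a1, ha1, a2, ha2, hne12, heq12⟩ := hinf.exists_ne_map_eq_of_mapsTo
    (fun n _ => hcC n) hCfin
  rcases hne12.lt_or_gt with hlt | hlt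
  · exact hfinal a1 a2 ha1 ha2 hlt heq12
  · exact hfinal a2 a1 ha2 ha1 hlt heq12.symm

lemma branch2_count (b : ℕ) (hb : 2 ≤ b) (y : ℕ → ℝ) (t : ℕ → ℝ) (w : ℕ → ℝ)
    (htend : Tendsto t atTop (nhds 0))
    (hw : ∀ n : ℕ, w n = Int.fract (y n + t n))
    (hy01 : ∀ n : ℕ, 1 ≤ n → 0 ≤ y n ∧ y n < 1)
    (hUD : ∀ a c : ℝ, 0 ≤ a → a < c → c ≤ 1 →
        Tendsto (fun N : ℕ =>
          (((Finset.Icc 1 N).filter (fun n => Int.fract (y n) ∈ Set.Ico a c)).card : ℝ) / N)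
          atTop (nhds (c - a)))
    (x δ : ℝ) (hx : 0 ≤ x) (hδ : 0 < δ) (hxδ : x + δ ≤ 1) :
    Tendsto (fun N : ℕ =>
      (((Finset.range N).filter (fun n => w n ∈ Set.Ico x (x+δ))).card : ℝ) / N)
      atTop (nhds δ) := by
  have hδ1 : δ ≤ 1 := by linarith
  rw [Metric.tendsto_nhds]
  intro ε hε
  set η : ℝ := min (ε/9) (δ/3) with hηdef
  have hηpos : 0 < η := by
    rw [lt_min_iff]; constructor <;> linarith
  have hηε : η ≤ ε/9 := min_le_left _ _
  have hηδ : η ≤ δ/3 := min_le_right _ _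
  have hη1 : η ≤ 1 := by linarith
  -- the four intervals
  set a1 : ℝ := max (x - η) 0 with ha1
  set c1 : ℝ := min (x + δ + η) 1 with hc1
  have ha1c1 : a1 < c1 := by
    rw [ha1, hc1, lt_min_iff, max_lt_iff, max_lt_iff]
    constructor <;> constructor <;> linarith
  have hL1 : c1 - a1 ≤ δ + 2*η := by
    have h1 : c1 ≤ x + δ + η := min_le_left _ _
    have h2 : x - η ≤ a1 := le_max_left _ _
    linarith
  have hA := hUD (x+η) (x+δ-η) (by linarith) (by linarith) (by linarith)
  have hU1 := hUD a1 c1 (le_max_right _ _) ha1c1 (min_le_right _ _)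
  have hU2 := hUD 0 η le_rfl hηpos hη1
  have hU3 := hUD (1-η) 1 (by linarith) (by linarith) le_rfl
  -- threshold for t
  obtain ⟨N₀, hN₀⟩ := Metric.tendsto_atTop.1 htend η hηpos
  set M : ℕ := N₀ + 2 with hM
  have ht' : ∀ n : ℕ, M ≤ n + 1 → |t n| < η := by
    intro n hn
    have := hN₀ n (by omega)
    rwa [Real.dist_eq, sub_zero] at this
  -- card claims
  have claim1 : ∀ N : ℕ, ((Finset.Icc 1 N).filter
      (fun n => Int.fract (y n) ∈ Set.Ico (x+η) (x+δ-η))).card ≤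
      ((Finset.range N).filter (fun n => w n ∈ Set.Ico x (x+δ))).card + M := by
    intro N
    have hsub : (Finset.Icc 1 N).filter
        (fun n => Int.fract (y n) ∈ Set.Ico (x+η) (x+δ-η)) ⊆
        (((Finset.range N).filter (fun n => w n ∈ Set.Ico x (x+δ))) ∪ Finset.range (M-1)) ∪ {N} := by
      intro n hn
      rw [Finset.mem_filter, Finset.mem_Icc] at hn
      obtain ⟨⟨hn1, hnN⟩, hmem⟩ := hn
      rw [Finset.mem_union, Finset.mem_union]
      by_cases hcase : n < M - 1
      · exact Or.inl (Or.inr (Finset.mem_range.2 hcase))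
      by_cases hcase2 : n = N
      · exact Or.inr (by simp [hcase2])
      left; left
      rw [Finset.mem_filter, Finset.mem_range]
      have hfy : Int.fract (y n) = y n := Int.fract_eq_self.2 (hy01 n hn1)
      rw [hfy, Set.mem_Ico] at hmem
      obtain ⟨hm1, hm2⟩ := hmem
      have htn : |t n| < η := ht' n (by omega)
      rw [abs_lt] at htn
      have hv1 : x < y n + t n := by linarith
      have hv2 : y n + t n < x + δ := by linarith
      have hfr : Int.fract (y n + t n) = y n + t n :=
        Int.fract_eq_self.2 ⟨by linarith, by linarith⟩
      refine ⟨by omega, ?_⟩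
      rw [hw, hfr]
      exact Set.mem_Ico.2 ⟨hv1.le, hv2⟩
    calc ((Finset.Icc 1 N).filter _).card
        ≤ ((((Finset.range N).filter (fun n => w n ∈ Set.Ico x (x+δ))) ∪
            Finset.range (M-1)) ∪ {N}).card := Finset.card_le_card hsub
      _ ≤ ((((Finset.range N).filter (fun n => w n ∈ Set.Ico x (x+δ))) ∪
            Finset.range (M-1))).card + 1 := by
          refine le_trans (Finset.card_union_le _ _) ?_
          simp
      _ ≤ ((Finset.range N).filter (fun n => w n ∈ Set.Ico x (x+δ))).card + (M-1) + 1 := by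
          have := Finset.card_union_le (((Finset.range N).filter
            (fun n => w n ∈ Set.Ico x (x+δ)))) (Finset.range (M-1))
          simp only [Finset.card_range] at this
          omega
      _ ≤ _ := by omega
  have claim2 : ∀ N : ℕ, ((Finset.range N).filter (fun n => w n ∈ Set.Ico x (x+δ))).card ≤
      ((Finset.Icc 1 N).filter (fun n => Int.fract (y n) ∈ Set.Ico a1 c1)).card +
      ((Finset.Icc 1 N).filter (fun n => Int.fract (y n) ∈ Set.Ico 0 η)).card +
      ((Finset.Icc 1 N).filter (fun n => Int.fract (y n) ∈ Set.Ico (1-η) 1)).card + M := by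
    intro N
    have hsub : (Finset.range N).filter (fun n => w n ∈ Set.Ico x (x+δ)) ⊆
        ((((Finset.Icc 1 N).filter (fun n => Int.fract (y n) ∈ Set.Ico a1 c1)) ∪
          ((Finset.Icc 1 N).filter (fun n => Int.fract (y n) ∈ Set.Ico 0 η))) ∪
          ((Finset.Icc 1 N).filter (fun n => Int.fract (y n) ∈ Set.Ico (1-η) 1))) ∪
          Finset.range M := by
      intro n hn
      rw [Finset.mem_filter, Finset.mem_range] at hn
      obtain ⟨hnN, hmem⟩ := hn
      rw [Finset.mem_union, Finset.mem_union, Finset.mem_union]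
      by_cases hcase : n < M
      · exact Or.inr (Finset.mem_range.2 hcase)
      push_neg at hcase
      have hn1 : 1 ≤ n := by omega
      have hy0 := (hy01 n hn1).1
      have hy1 := (hy01 n hn1).2
      have hfy : Int.fract (y n) = y n := Int.fract_eq_self.2 (hy01 n hn1)
      have htn : |t n| < η := ht' n (by omega)
      rw [abs_lt] at htn
      have hnIcc : n ∈ Finset.Icc 1 N := Finset.mem_Icc.2 ⟨hn1, by omega⟩
      rw [hw] at hmem
      left
      rcases lt_or_ge (y n + t n) 0 with hv0 | hv0
      · left; right
        rw [Finset.mem_filter, hfy]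
        refine ⟨hnIcc, Set.mem_Ico.2 ⟨hy0, by linarith⟩⟩
      rcases lt_or_ge (y n + t n) 1 with hv1 | hv1
      · left; left
        rw [Finset.mem_filter, hfy]
        have hfr : Int.fract (y n + t n) = y n + t n := Int.fract_eq_self.2 ⟨hv0, hv1⟩
        rw [hfr, Set.mem_Ico] at hmem
        refine ⟨hnIcc, Set.mem_Ico.2 ⟨?_, ?_⟩⟩
        · rw [ha1]
          exact max_le (by linarith [hmem.1]) hy0
        · rw [hc1, lt_min_iff]
          exact ⟨by linarith [hmem.2], hy1⟩
      · right
        rw [Finset.mem_filter, hfy]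
        refine ⟨hnIcc, Set.mem_Ico.2 ⟨by linarith, hy1⟩⟩
    calc ((Finset.range N).filter (fun n => w n ∈ Set.Ico x (x+δ))).card
        ≤ (((((Finset.Icc 1 N).filter (fun n => Int.fract (y n) ∈ Set.Ico a1 c1)) ∪
          ((Finset.Icc 1 N).filter (fun n => Int.fract (y n) ∈ Set.Ico 0 η))) ∪
          ((Finset.Icc 1 N).filter (fun n => Int.fract (y n) ∈ Set.Ico (1-η) 1))) ∪
          Finset.range M).card := Finset.card_le_card hsub
      _ ≤ _ := by
          refine le_trans (Finset.card_union_le _ _) ?_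
          have u1 := Finset.card_union_le
            ((((Finset.Icc 1 N).filter (fun n => Int.fract (y n) ∈ Set.Ico a1 c1)) ∪
              ((Finset.Icc 1 N).filter (fun n => Int.fract (y n) ∈ Set.Ico 0 η))))
            ((Finset.Icc 1 N).filter (fun n => Int.fract (y n) ∈ Set.Ico (1-η) 1))
          have u2 := Finset.card_union_le
            (((Finset.Icc 1 N).filter (fun n => Int.fract (y n) ∈ Set.Ico a1 c1)))
            (((Finset.Icc 1 N).filter (fun n => Int.fract (y n) ∈ Set.Ico 0 η)))
          simp only [Finset.card_range]
          omega
  -- eventual bounds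
  have hAe := (Metric.tendsto_nhds.1 hA) η hηpos
  have hU1e := (Metric.tendsto_nhds.1 hU1) η hηpos
  have hU2e := (Metric.tendsto_nhds.1 hU2) η hηpos
  have hU3e := (Metric.tendsto_nhds.1 hU3) η hηpos
  have hMe : Tendsto (fun N : ℕ => (M:ℝ)/N) atTop (nhds 0) :=
    tendsto_const_div_atTop_nhds_zero_nat _
  have hMe' := (Metric.tendsto_nhds.1 hMe) η hηpos
  filter_upwards [hAe, hU1e, hU2e, hU3e, hMe', eventually_ge_atTop 1]
    with N h1 h2 h3 h4 h5 h6
  have hNpos : (0:ℝ) < (N:ℝ) := by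
    have : (1:ℕ) ≤ N := h6
    exact_mod_cast Nat.lt_of_lt_of_le Nat.zero_lt_one this
  rw [Real.dist_eq] at h1 h2 h3 h4 ⊢
  rw [Real.dist_eq, sub_zero] at h5
  have h5' : (M:ℝ)/(N:ℝ) < η := lt_of_abs_lt h5
  have hcl1 : ((((Finset.Icc 1 N).filter
      (fun n => Int.fract (y n) ∈ Set.Ico (x+η) (x+δ-η))).card : ℝ)) ≤
      (((Finset.range N).filter (fun n => w n ∈ Set.Ico x (x+δ))).card : ℝ) + (M:ℝ) := by
    exact_mod_cast claim1 N
  have hcl2 : ((((Finset.range N).filter (fun n => w n ∈ Set.Ico x (x+δ))).card : ℝ)) ≤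
      (((Finset.Icc 1 N).filter (fun n => Int.fract (y n) ∈ Set.Ico a1 c1)).card : ℝ) +
      (((Finset.Icc 1 N).filter (fun n => Int.fract (y n) ∈ Set.Ico 0 η)).card : ℝ) +
      (((Finset.Icc 1 N).filter (fun n => Int.fract (y n) ∈ Set.Ico (1-η) 1)).card : ℝ) +
      (M:ℝ) := by
    exact_mod_cast claim2 N
  rw [abs_lt] at h1 h2 h3 h4
  -- divide by N
  have d1 : ((((Finset.Icc 1 N).filter
      (fun n => Int.fract (y n) ∈ Set.Ico (x+η) (x+δ-η))).card : ℝ))/(N:ℝ) ≤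
      (((Finset.range N).filter (fun n => w n ∈ Set.Ico x (x+δ))).card : ℝ)/(N:ℝ) + (M:ℝ)/(N:ℝ) := by
    rw [← add_div]
    exact div_le_div_of_nonneg_right hcl1 hNpos.le
  have d2 : (((Finset.range N).filter (fun n => w n ∈ Set.Ico x (x+δ))).card : ℝ)/(N:ℝ) ≤
      (((Finset.Icc 1 N).filter (fun n => Int.fract (y n) ∈ Set.Ico a1 c1)).card : ℝ)/(N:ℝ) +
      (((Finset.Icc 1 N).filter (fun n => Int.fract (y n) ∈ Set.Ico 0 η)).card : ℝ)/(N:ℝ) +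
      (((Finset.Icc 1 N).filter (fun n => Int.fract (y n) ∈ Set.Ico (1-η) 1)).card : ℝ)/(N:ℝ) +
      (M:ℝ)/(N:ℝ) := by
    rw [← add_div, ← add_div, ← add_div]
    exact div_le_div_of_nonneg_right hcl2 hNpos.le
  rw [abs_lt]
  constructor
  · linarith [h1.1, d1, h5', hηε, hε]
  · linarith [h2.2, h3.2, h4.2, d2, h5', hL1, hηε, hε]

lemma E_bound (b : ℕ) (hb : 2 ≤ b) : ∀ (m : ℕ) (e : Fin m → ℕ), (∀ i, e i < b) →
    0 ≤ ∑ i : Fin m, (e i : ℤ) * (b:ℤ)^(m - 1 - (i:ℕ)) ∧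
    ∑ i : Fin m, (e i : ℤ) * (b:ℤ)^(m - 1 - (i:ℕ)) + 1 ≤ (b:ℤ)^m := by
  intro m
  induction m with
  | zero => intro e he; simp
  | succ m ih =>
    intro e he
    have hE : ∑ i : Fin (m+1), (e i : ℤ) * (b:ℤ)^(m + 1 - 1 - (i:ℕ))
        = b * (∑ i : Fin m, ((e i.castSucc : ℤ)) * (b:ℤ)^(m - 1 - (i:ℕ))) + (e (Fin.last m) : ℤ) := by
      rw [Fin.sum_univ_castSucc]
      simp only [Fin.coe_castSucc, Fin.val_last]
      rw [Finset.mul_sum]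
      congr 1
      · apply Finset.sum_congr rfl
        intro i _
        have hi : (i:ℕ) < m := i.isLt
        have : m + 1 - 1 - (i:ℕ) = (m - 1 - (i:ℕ)) + 1 := by omega
        rw [this, pow_succ]
        ring
      · simp
    obtain ⟨ih1, ih2⟩ := ih (fun i => e i.castSucc) (fun i => he _)
    have hb' : (2:ℤ) ≤ (b:ℤ) := by exact_mod_cast hb
    have helast : (e (Fin.last m) : ℤ) < (b:ℤ) := by exact_mod_cast he (Fin.last m)
    have helast0 : (0:ℤ) ≤ (e (Fin.last m) : ℤ) := by positivity
    rw [hE]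
    constructor
    · nlinarith
    · have : (b:ℤ)^(m+1) = b * (b:ℤ)^m := by rw [pow_succ]; ring
      nlinarith

open scoped Classical in
/-- Let `b ≥ 2` be an integer, `p(x), q(x) ∈ ℤ[x]` with `deg p < deg q` and
`q(n) ≠ 0` for all integers `n ≥ 1`, set `ε_n = p(n)/q(n)` and `θ = Σ_{n=1}^∞ ε_n b^{-n}`,
and define `y_0 = 0`, `y_{n+1} = fract (b·y_n + ε_{n+1})`. If the sequence `(y_n)_{n≥1}`
either has a finite set of cluster points or is uniformly distributed mod 1, then `θ` is
rational or `fract θ` is normal to base `b`. -/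
theorem stmt_10 (b : ℕ) (hb : 2 ≤ b) (p q : Polynomial ℤ)
    (hdeg : p.degree < q.degree)
    (hq : ∀ n : ℕ, 1 ≤ n → q.eval (n : ℤ) ≠ 0)
    (ε : ℕ → ℝ) (hε : ∀ n : ℕ, ε n = (↑(p.eval (n : ℤ)) / ↑(q.eval (n : ℤ)) : ℝ))
    (θ : ℝ) (hθ : θ = ∑' n : ℕ, ε (n + 1) / (b : ℝ) ^ (n + 1))
    (y : ℕ → ℝ) (hy0 : y 0 = 0)
    (hy : ∀ n : ℕ, y (n + 1) = Int.fract ((b : ℝ) * y n + ε (n + 1)))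
    (hdich : {x : ℝ | MapClusterPt x Filter.atTop (fun n : ℕ => y (n + 1))}.Finite ∨
      (∀ a c : ℝ, 0 ≤ a → a < c → c ≤ 1 →
        Filter.Tendsto (fun N : ℕ =>
          (((Finset.Icc 1 N).filter (fun n => Int.fract (y n) ∈ Set.Ico a c)).card : ℝ) / N)
          Filter.atTop (nhds (c - a)))) :
    (∃ r : ℚ, θ = (r : ℝ)) ∨
      (∀ m : ℕ, 1 ≤ m → ∀ e : Fin m → ℕ, (∀ i, e i < b) →
        Filter.Tendsto (fun N : ℕ =>
          (((Finset.range N).filter (fun n => ∀ i : Fin m,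
            ⌊(b : ℝ) * Int.fract ((b : ℝ) ^ (n + (i : ℕ)) * Int.fract θ)⌋
              = (e i : ℤ))).card : ℝ) / N)
          Filter.atTop (nhds (((b : ℝ) ^ m)⁻¹))) := by
  have hb1 : (1:ℝ) < (b:ℝ) := by exact_mod_cast hb.trans_lt' one_lt_two
  have hb0 : (0:ℝ) < (b:ℝ) := lt_trans zero_lt_one hb1
  have hεlim := eps_tendsto p q hdeg ε hε
  obtain ⟨k, t, htend, hkey⟩ := setup b hb ε hεlim θ hθ y hy0 hy
  have hy01 : ∀ n : ℕ, 0 ≤ y (n+1) ∧ y (n+1) < 1 := by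
    intro n
    rw [hy n]
    exact ⟨Int.fract_nonneg _, Int.fract_lt_one _⟩
  have hy01' : ∀ n : ℕ, 1 ≤ n → 0 ≤ y n ∧ y n < 1 := by
    intro n hn
    obtain ⟨m, rfl⟩ : ∃ m, n = m + 1 := ⟨n - 1, by omega⟩
    exact hy01 m
  rcases hdich with hfin | hUD
  · exact Or.inl (branch1 b hb θ y k t htend hkey hy01 hfin)
  · right
    intro m hm e he
    obtain ⟨hE0, hE1⟩ := E_bound b hb m e he
    set E : ℤ := ∑ i : Fin m, (e i : ℤ) * (b:ℤ)^(m - 1 - (i:ℕ)) with hE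
    set w : ℕ → ℝ := fun n => Int.fract ((b:ℝ)^n * Int.fract θ) with hwdef
    have hw01 : ∀ n, 0 ≤ w n ∧ w n < 1 := fun n => ⟨Int.fract_nonneg _, Int.fract_lt_one _⟩
    -- condition equivalence
    have hcond : ∀ n : ℕ,
        (∀ i : Fin m, ⌊(b : ℝ) * Int.fract ((b : ℝ) ^ (n + (i : ℕ)) * Int.fract θ)⌋ = (e i : ℤ))
        ↔ w n ∈ Set.Ico ((E:ℝ)/(b:ℝ)^m) ((E:ℝ)/(b:ℝ)^m + ((b:ℝ)^m)⁻¹) := by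
      intro n
      have hshift : ∀ i : ℕ, Int.fract ((b : ℝ) ^ (n + i) * Int.fract θ)
          = Int.fract ((b:ℝ)^i * w n) := by
        intro i
        have hid : (b : ℝ) ^ (n + i) * Int.fract θ
            = (((b:ℤ)^i * ⌊(b:ℝ)^n * Int.fract θ⌋ : ℤ) : ℝ) + (b:ℝ)^i * w n := by
          simp only [hwdef, Int.fract]
          push_cast [pow_add]
          ring
        rw [hid, Int.fract_intCast_add]
      have h1 : (∀ i : Fin m, ⌊(b : ℝ) * Int.fract ((b : ℝ) ^ (n + (i:ℕ)) * Int.fract θ)⌋ = (e i : ℤ))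
          ↔ (∀ i : Fin m, ⌊(b : ℝ) * Int.fract ((b : ℝ) ^ ((i:ℕ)) * w n)⌋ = (e i : ℤ)) := by
        constructor <;> intro h i <;> have := h i
        · rwa [hshift (i:ℕ)] at this
        · rwa [hshift (i:ℕ)]
      rw [h1, digit_iff b hb (w n) (hw01 n).1 (hw01 n).2 m e he]
      rw [← hE]
      rw [Int.floor_eq_iff]
      constructor
      · rintro ⟨ha, hbb⟩
        constructor
        · rw [div_le_iff₀ (by positivity)]
          linarith [ha]
        · have : (E:ℝ)/(b:ℝ)^m + ((b:ℝ)^m)⁻¹ = ((E:ℝ)+1)/(b:ℝ)^m := by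
            field_simp
          rw [this, lt_div_iff₀ (by positivity)]
          linarith [hbb]
      · rintro ⟨ha, hbb⟩
        have h2 : (E:ℝ)/(b:ℝ)^m + ((b:ℝ)^m)⁻¹ = ((E:ℝ)+1)/(b:ℝ)^m := by
          field_simp
        rw [h2, lt_div_iff₀ (by positivity)] at hbb
        rw [div_le_iff₀ (by positivity)] at ha
        constructor
        · calc (E:ℝ) = (E:ℝ)/(b:ℝ)^m * (b:ℝ)^m := by field_simp
            _ ≤ w n * (b:ℝ)^m := by
                apply mul_le_mul_of_nonneg_right _ (by positivity)
                rw [div_le_iff₀ (by positivity)]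
                linarith
            _ = (b:ℝ)^m * w n := by ring
        · linarith
    -- rewrite the counting function
    have hfeq : (fun N : ℕ =>
          (((Finset.range N).filter (fun n => ∀ i : Fin m,
            ⌊(b : ℝ) * Int.fract ((b : ℝ) ^ (n + (i : ℕ)) * Int.fract θ)⌋
              = (e i : ℤ))).card : ℝ) / N) =
        (fun N : ℕ =>
          (((Finset.range N).filter
            (fun n => w n ∈ Set.Ico ((E:ℝ)/(b:ℝ)^m) ((E:ℝ)/(b:ℝ)^m + ((b:ℝ)^m)⁻¹))).card : ℝ) / N) := by
      funext N
      have hfe : Finset.filter (fun n => ∀ i : Fin m,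
            ⌊(b:ℝ) * Int.fract ((b:ℝ)^(n + (i:ℕ)) * Int.fract θ)⌋ = (e i : ℤ))
            (Finset.range N) =
          Finset.filter (fun n => w n ∈ Set.Ico ((E:ℝ)/(b:ℝ)^m)
            ((E:ℝ)/(b:ℝ)^m + ((b:ℝ)^m)⁻¹)) (Finset.range N) :=
        Finset.filter_congr (fun n _ => hcond n)
      rw [hfe]
    rw [hfeq]
    -- verify w n = fract (y n + t n)
    have hw' : ∀ n : ℕ, w n = Int.fract (y n + t n) := by
      intro n
      rw [hwdef]
      simp only []
      have hid : (b:ℝ)^n * Int.fract θ = ((k n - (b:ℤ)^n * ⌊θ⌋ : ℤ) : ℝ) + (y n + t n) := by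
        rw [Int.fract]
        push_cast
        have := hkey n
        linarith [this]
      rw [hid, Int.fract_intCast_add]
    have hb2 : (2:ℝ) ≤ (b:ℝ) := by exact_mod_cast hb
    have hEr : (0:ℝ) ≤ (E:ℝ) := by exact_mod_cast hE0
    have hEr1 : (E:ℝ) + 1 ≤ (b:ℝ)^m := by
      have : ((E + 1 : ℤ) : ℝ) ≤ (((b:ℤ)^m : ℤ) : ℝ) := by exact_mod_cast hE1
      push_cast at this
      linarith
    have hfin := branch2_count b hb y t w htend hw' hy01' hUD
      ((E:ℝ)/(b:ℝ)^m) (((b:ℝ)^m)⁻¹)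
      (by positivity) (by positivity)
      (by
        have hpm : (0:ℝ) < (b:ℝ)^m := by positivity
        rw [div_add' _ _ _ (ne_of_gt hpm)]
        · rw [div_le_one hpm]
          have : (b:ℝ)^m * ((b:ℝ)^m)⁻¹ = 1 := by field_simp
          nlinarith [hEr1, hpm]
        )
    exact hfin
end
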